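/- arXiv:2510.05469 — 7 statements merged into one kernel-verified Lean document; each statement's English description precedes it below -/
import Mathlib

section
/- Let σ, τ : [0,∞) → [0,∞) be non-decreasing. Then: (i) if σ or τ satisfies (ω₆), then σ ⪯ τ implies σ ⪯_c τ; (ii) if σ or τ satisfies (ω₁), then σ ⪯_c τ implies σ ⪯ τ; (iii) if σ or τ satisfies (ω₁), then σ ◁ τ implies σ ◁_c τ; (iv) if σ or τ satisfies (ω₆), then σ ◁_c τ implies σ ◁ τ. -/
/-- Condition (ω₁): `ω(2t) = O(ω(t))` as `t → ∞`. -/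
def OmOne (ω : ℝ → ℝ) : Prop :=
  ∃ C ≥ (1:ℝ), ∃ T ≥ (0:ℝ), ∀ t ≥ T, ω (2 * t) ≤ C * ω t

/-- Condition (ω₆): `∃ H ≥ 1, ∀ t ≥ 0, 2·ω(t) ≤ ω(H·t) + H`. -/
def OmSix (ω : ℝ → ℝ) : Prop :=
  ∃ H ≥ (1:ℝ), ∀ t ≥ (0:ℝ), 2 * ω t ≤ ω (H * t) + H

/-- Relation `σ ⪯ τ`. -/
def Preceq (σ τ : ℝ → ℝ) : Prop :=
  ∃ C ≥ (1:ℝ), ∀ t ≥ (0:ℝ), τ t ≤ C * σ t + C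

/-- Relation `σ ⪯_c τ`. -/
def PreceqC (σ τ : ℝ → ℝ) : Prop :=
  ∃ C₁ ≥ (1:ℝ), ∃ C₂ ≥ (1:ℝ), ∀ t ≥ (0:ℝ), τ t ≤ σ (C₁ * t) + C₂

/-- Relation `σ ◁ τ`. -/
def Tri (σ τ : ℝ → ℝ) : Prop :=
  ∀ ε > (0:ℝ), ∃ C ≥ (1:ℝ), ∀ t ≥ (0:ℝ), τ t ≤ ε * σ t + C

/-- Relation `σ ◁_c τ`. -/
def TriC (σ τ : ℝ → ℝ) : Prop :=
  ∀ ε > (0:ℝ), ∃ C ≥ (1:ℝ), ∀ t ≥ (0:ℝ), τ t ≤ σ (ε * t) + C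

lemma exists_pow_ge' (a : ℝ) : ∃ k : ℕ, a ≤ 2^k := by
  obtain ⟨k, hk⟩ := pow_unbounded_of_one_lt a (by norm_num : (1:ℝ) < 2)
  exact ⟨k, hk.le⟩

lemma iter6 (ω : ℝ → ℝ) (H : ℝ) (hH : 1 ≤ H)
    (h : ∀ t ≥ (0:ℝ), 2 * ω t ≤ ω (H * t) + H) :
    ∀ (k : ℕ) (t : ℝ), 0 ≤ t → 2^k * ω t ≤ ω (H^k * t) + (2^k - 1) * H := by
  intro k
  induction k with
  | zero => intro t ht; simp
  | succ k ih =>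
    intro t ht
    have hH0 : (0:ℝ) < H := lt_of_lt_of_le one_pos hH
    have h1 := ih t ht
    have h2 := h (H^k * t) (by positivity)
    have he : H * (H^k * t) = H^(k+1) * t := by ring
    rw [he] at h2
    have hp : (2:ℝ)^(k+1) = 2 * 2^k := by ring
    rw [hp]
    nlinarith [mul_le_mul_of_nonneg_left h1 (by norm_num : (0:ℝ) ≤ 2), h2]

lemma iter1 (ω : ℝ → ℝ) (C T : ℝ) (hC : 1 ≤ C) (hT : 0 ≤ T)
    (h : ∀ t ≥ T, ω (2 * t) ≤ C * ω t) :
    ∀ (k : ℕ) (t : ℝ), T ≤ t → ω (2^k * t) ≤ C^k * ω t := by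
  intro k
  induction k with
  | zero => intro t ht; simp
  | succ k ih =>
    intro t ht
    have ht0 : 0 ≤ t := le_trans hT ht
    have hge : T ≤ 2^k * t :=
      le_trans ht (by nlinarith [one_le_pow₀ (by norm_num : (1:ℝ) ≤ 2) (n := k)])
    have h2 := h (2^k * t) hge
    have he : 2 * (2^k * t) = 2^(k+1) * t := by ring
    rw [he] at h2
    have := mul_le_mul_of_nonneg_left (ih t ht) (le_trans zero_le_one hC)
    calc ω (2^(k+1) * t) ≤ C * ω (2^k * t) := h2
      _ ≤ C * (C^k * ω t) := this
      _ = C^(k+1) * ω t := by ring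

set_option maxHeartbeats 2000000 in
/-- comparison of the relations `⪯`, `⪯_c`, `◁`, `◁_c`
for non-decreasing `σ, τ : [0,∞) → [0,∞)`. -/
theorem stmt_1 (σ τ : ℝ → ℝ)
    (hσ0 : ∀ t, 0 ≤ t → 0 ≤ σ t) (hτ0 : ∀ t, 0 ≤ t → 0 ≤ τ t)
    (hσ : ∀ s t, 0 ≤ s → s ≤ t → σ s ≤ σ t)
    (hτ : ∀ s t, 0 ≤ s → s ≤ t → τ s ≤ τ t) :
    ((OmSix σ ∨ OmSix τ) → Preceq σ τ → PreceqC σ τ) ∧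
    ((OmOne σ ∨ OmOne τ) → PreceqC σ τ → Preceq σ τ) ∧
    ((OmOne σ ∨ OmOne τ) → Tri σ τ → TriC σ τ) ∧
    ((OmSix σ ∨ OmSix τ) → TriC σ τ → Tri σ τ) := by
  refine ⟨?_, ?_, ?_, ?_⟩
  · -- (i) OmSix → (⪯ → ⪯_c)
    rintro hsix ⟨C, hC, hP⟩
    obtain ⟨k, hk⟩ := exists_pow_ge' C
    have h2k1 : (1:ℝ) ≤ 2^k := one_le_pow₀ (by norm_num)
    rcases hsix with ⟨H, hH, h6⟩ | ⟨H, hH, h6⟩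
    · -- OmSix σ
      have hH0 : (0:ℝ) < H := lt_of_lt_of_le one_pos hH
      refine ⟨H^k, one_le_pow₀ hH, 2^k * H + C, by nlinarith, ?_⟩
      intro t ht
      have hσt := hσ0 t ht
      have h1 := hP t ht
      have h2 := iter6 σ H hH h6 k t ht
      nlinarith [mul_nonneg (sub_nonneg.mpr hk) hσt]
    · -- OmSix τ
      have hH0 : (0:ℝ) < H := lt_of_lt_of_le one_pos hH
      refine ⟨H^k, one_le_pow₀ hH, C + H, by linarith, ?_⟩
      intro t ht
      have hpk : (0:ℝ) < 2^k := by positivity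
      have hσ' := hσ0 (H^k * t) (by positivity)
      have h2 := iter6 τ H hH h6 k t ht
      have h1 := hP (H^k * t) (by positivity)
      have key : 2^k * τ t ≤ 2^k * (σ (H^k * t) + (C + H)) := by
        nlinarith [mul_nonneg (sub_nonneg.mpr hk) hσ',
          mul_nonneg (sub_nonneg.mpr h2k1) (sub_nonneg.mpr hC)]
      exact (mul_le_mul_iff_right₀ hpk).mp key
  · -- (ii) OmOne → (⪯_c → ⪯)
    rintro hone ⟨C₁, hC1, C₂, hC2, hP⟩
    obtain ⟨k, hk⟩ := exists_pow_ge' C₁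
    have h2k1 : (1:ℝ) ≤ 2^k := one_le_pow₀ (by norm_num)
    have hpk : (0:ℝ) < 2^k := by positivity
    rcases hone with ⟨C, hC, T, hT, h1⟩ | ⟨C, hC, T, hT, h1⟩
    · -- OmOne σ
      have hCk : (1:ℝ) ≤ C^k := one_le_pow₀ hC
      have hτT := hτ0 T hT
      refine ⟨C^k + C₂ + τ T + 1, by linarith, ?_⟩
      intro t ht
      have hσt := hσ0 t ht
      by_cases hc : T ≤ t
      · have hmono : σ (C₁ * t) ≤ σ (2^k * t) :=
          hσ _ _ (by positivity) (by nlinarith [mul_nonneg (sub_nonneg.mpr hk) ht])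
        have hit := iter1 σ C T hC hT h1 k t hc
        have hPt := hP t ht
        nlinarith [mul_nonneg (by linarith : (0:ℝ) ≤ C₂ + τ T + 1) hσt]
      · have := hτ t T ht (le_of_lt (not_le.mp hc))
        nlinarith [mul_nonneg (by linarith : (0:ℝ) ≤ C^k + C₂ + τ T + 1) hσt]
    · -- OmOne τ
      have hCk : (1:ℝ) ≤ C^k := one_le_pow₀ hC
      have hM0 : (0:ℝ) ≤ τ (2^k * T) := hτ0 _ (by positivity)
      refine ⟨C^k + C^k * C₂ + τ (2^k * T) + 1, by nlinarith, ?_⟩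
      intro t ht
      have hσt := hσ0 t ht
      by_cases hc : 2^k * T ≤ t
      · set s := t / 2^k with hs
        have hs0 : (0:ℝ) ≤ s := by positivity
        have hsT : T ≤ s := (le_div_iff₀ hpk).mpr (by nlinarith)
        have hst : 2^k * s = t := by
          rw [hs]; field_simp
        have hit := iter1 τ C T hC hT h1 k s hsT
        rw [hst] at hit
        have hPs := hP s hs0
        have h5 : C₁ * s ≤ t := by
          rw [hs, mul_div_assoc']
          exact (div_le_iff₀ hpk).mpr (by nlinarith)
        have hmono : σ (C₁ * s) ≤ σ t := hσ _ _ (by positivity) h5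
        have : τ t ≤ C^k * (σ t + C₂) := by nlinarith
        nlinarith [mul_nonneg (by nlinarith : (0:ℝ) ≤ C^k * C₂ + τ (2^k * T) + 1) hσt]
      · have := hτ t (2^k * T) ht (le_of_lt (not_le.mp hc))
        nlinarith [mul_nonneg (by nlinarith : (0:ℝ) ≤ C^k + C^k * C₂ + τ (2^k * T) + 1) hσt]
  · -- (iii) OmOne → (◁ → ◁_c)
    rintro hone htri ε hε
    obtain ⟨k, hk⟩ := exists_pow_ge' (1/ε)
    have hek : (1:ℝ) ≤ ε * 2^k := by
      have := (div_le_iff₀ hε).mp hk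
      nlinarith
    have hpk : (0:ℝ) < 2^k := by positivity
    rcases hone with ⟨C, hC, T, hT, h1⟩ | ⟨C, hC, T, hT, h1⟩
    · -- OmOne σ
      have hCk : (0:ℝ) < C^k := by positivity
      obtain ⟨C₀, hC₀, hT₀⟩ := htri (C^k)⁻¹ (by positivity)
      have hB0 : (0:ℝ) ≤ τ (T/ε) := hτ0 _ (by positivity)
      refine ⟨C₀ + τ (T/ε) + 1, by linarith, ?_⟩
      intro t ht
      have hσεt := hσ0 (ε*t) (by positivity)
      by_cases hc : T/ε ≤ t
      · have hεtT : T ≤ ε * t := by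
          have := (div_le_iff₀ hε).mp hc
          nlinarith
        have hεt0 : (0:ℝ) ≤ ε * t := by positivity
        have hm1 : σ t ≤ σ (2^k * (ε*t)) :=
          hσ _ _ ht (by nlinarith [mul_nonneg (sub_nonneg.mpr hek) ht])
        have hm2 := iter1 σ C T hC hT h1 k (ε*t) hεtT
        have hTri := hT₀ t ht
        have hcomb := mul_le_mul_of_nonneg_left (hm1.trans hm2) (by positivity : (0:ℝ) ≤ (C^k)⁻¹)
        rw [← mul_assoc, inv_mul_cancel₀ (ne_of_gt hCk), one_mul] at hcomb
        linarith
      · have := hτ t (T/ε) ht (le_of_lt (not_le.mp hc))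
        linarith
    · -- OmOne τ
      have hCk : (0:ℝ) < C^k := by positivity
      obtain ⟨C₀, hC₀, hT₀⟩ := htri (C^k)⁻¹ (by positivity)
      have hM0 : (0:ℝ) ≤ τ (2^k * T) := hτ0 _ (by positivity)
      refine ⟨C^k * C₀ + τ (2^k * T) + 1, by nlinarith, ?_⟩
      intro t ht
      have hσεt := hσ0 (ε*t) (by positivity)
      by_cases hc : 2^k * T ≤ t
      · set s := t / 2^k with hs
        have hs0 : (0:ℝ) ≤ s := by positivity
        have hsT : T ≤ s := (le_div_iff₀ hpk).mpr (by nlinarith)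
        have hst : 2^k * s = t := by rw [hs]; field_simp
        have hit := iter1 τ C T hC hT h1 k s hsT
        rw [hst] at hit
        have hTris := hT₀ s hs0
        have h5 : s ≤ ε * t := by
          rw [hs]
          exact (div_le_iff₀ hpk).mpr (by nlinarith [mul_nonneg (sub_nonneg.mpr hek) ht])
        have hmono : σ s ≤ σ (ε * t) := hσ _ _ hs0 h5
        have hcomb := mul_le_mul_of_nonneg_left hTris (le_of_lt hCk)
        have hfs : C^k * ((C^k)⁻¹ * σ s + C₀) = σ s + C^k * C₀ := by
          rw [mul_add, ← mul_assoc, mul_inv_cancel₀ (ne_of_gt hCk), one_mul]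
        rw [hfs] at hcomb
        linarith
      · have := hτ t (2^k * T) ht (le_of_lt (not_le.mp hc))
        nlinarith
  · -- (iv) OmSix → (◁_c → ◁)
    rintro hsix htc ε hε
    obtain ⟨k, hk⟩ := exists_pow_ge' (1/ε)
    have hek : (1:ℝ) ≤ ε * 2^k := by
      have := (div_le_iff₀ hε).mp hk
      nlinarith
    have hpk : (0:ℝ) < 2^k := by positivity
    rcases hsix with ⟨H, hH, h6⟩ | ⟨H, hH, h6⟩
    · -- OmSix σ
      have hH0 : (0:ℝ) < H := lt_of_lt_of_le one_pos hH
      have hHk : (0:ℝ) < H^k := by positivity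
      obtain ⟨C₀, hC₀, hTC⟩ := htc (H^k)⁻¹ (by positivity)
      refine ⟨H + C₀, by linarith, ?_⟩
      intro t ht
      have hσt := hσ0 t ht
      have hTCt := hTC t ht
      have hA := iter6 σ H hH h6 k ((H^k)⁻¹ * t) (by positivity)
      rw [← mul_assoc, mul_inv_cancel₀ (ne_of_gt hHk), one_mul] at hA
      have hss : 2^k * σ ((H^k)⁻¹ * t) ≤ 2^k * (ε * σ t + H) := by
        nlinarith [mul_nonneg (sub_nonneg.mpr hek) hσt]
      have := (mul_le_mul_iff_right₀ hpk).mp hss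
      linarith
    · -- OmSix τ
      have hH0 : (0:ℝ) < H := lt_of_lt_of_le one_pos hH
      have hHk : (0:ℝ) < H^k := by positivity
      obtain ⟨C₀, hC₀, hTC⟩ := htc (H^k)⁻¹ (by positivity)
      refine ⟨C₀ + H, by linarith, ?_⟩
      intro t ht
      have hσt := hσ0 t ht
      have hA := iter6 τ H hH h6 k t ht
      have hTCt := hTC (H^k * t) (by positivity)
      rw [← mul_assoc, inv_mul_cancel₀ (ne_of_gt hHk), one_mul] at hTCt
      have h2k1 : (1:ℝ) ≤ 2^k := one_le_pow₀ (by norm_num)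
      have hss : 2^k * τ t ≤ 2^k * (ε * σ t + (C₀ + H)) := by
        nlinarith [mul_nonneg (sub_nonneg.mpr hek) hσt,
          mul_nonneg (sub_nonneg.mpr h2k1) (by linarith : (0:ℝ) ≤ C₀),
          mul_nonneg (sub_nonneg.mpr h2k1) (by linarith : (0:ℝ) ≤ H)]
      exact (mul_le_mul_iff_right₀ hpk).mp hss
end

section
/- Let ω : [0,∞) → [0,∞) be non-decreasing and assume there exist C, D ≥ 1 such that ω(λ·t) ≤ C·λ·ω(t) + D·λ for all λ ≥ 1 and all t ≥ 0. Then there exist A ≥ 1 and a convex function h : (0,∞) → [0,∞) such that h(t) ≤ ω(1/t) ≤ A·h(t) + A for all t ∈ (0,∞); i.e. the function ω^ι(t) := ω(1/t) is equivalent to its largest convex minorant. -/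
/-- if a non-decreasing `ω : [0,∞) → [0,∞)` satisfies
`ω(λt) ≤ Cλω(t) + Dλ` for all `λ ≥ 1, t ≥ 0`, then `ω^ι(t) = ω(1/t)` is
equivalent to its largest convex minorant on `(0,∞)`; i.e. there are `A ≥ 1`
and a nonnegative convex function `h` on `(0,∞)` with
`h(t) ≤ ω(1/t) ≤ A·h(t) + A` for all `t > 0`. -/
theorem stmt_2 (ω : ℝ → ℝ) (hnn : ∀ t, 0 ≤ t → 0 ≤ ω t)
    (hmono : ∀ s t, 0 ≤ s → s ≤ t → ω s ≤ ω t)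
    (hα : ∃ C ≥ (1:ℝ), ∃ D ≥ (1:ℝ), ∀ l ≥ (1:ℝ), ∀ t ≥ (0:ℝ),
      ω (l * t) ≤ C * l * ω t + D * l) :
    ∃ A ≥ (1:ℝ), ∃ h : ℝ → ℝ, ConvexOn ℝ (Set.Ioi (0:ℝ)) h ∧
      (∀ t > (0:ℝ), 0 ≤ h t) ∧
      (∀ t > (0:ℝ), h t ≤ ω (1 / t) ∧ ω (1 / t) ≤ A * h t + A) := by
  obtain ⟨C, hC, D, hD, hscale⟩ := hα
  have inst : Nonempty (Set.Ioi (0:ℝ)) := ⟨⟨1, by norm_num⟩⟩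
  set f : ℝ → ℝ → ℝ := fun s t => (ω (1/(2*s)) / (2*s)) * (2*s - t) with hf
  -- each f s is an affine minorant of t ↦ ω (1/t) on (0,∞)
  have key : ∀ s > (0:ℝ), ∀ t > (0:ℝ), f s t ≤ ω (1/t) := by
    intro s hs t ht
    have hω2s : 0 ≤ ω (1/(2*s)) := hnn _ (by positivity)
    by_cases hts : t ≤ 2*s
    · have h1 : ω (1/(2*s)) ≤ ω (1/t) := by
        apply hmono _ _ (by positivity)
        apply one_div_le_one_div_of_le ht hts
      have h2 : f s t ≤ ω (1/(2*s)) := by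
        simp only [hf]
        rw [div_mul_eq_mul_div, div_le_iff₀ (by positivity)]
        nlinarith
      linarith
    · have : f s t ≤ 0 := by
        apply mul_nonpos_of_nonneg_of_nonpos
        · positivity
        · linarith
      have := hnn (1/t) (by positivity)
      linarith
  set h : ℝ → ℝ := fun t => ⨆ s : Set.Ioi (0:ℝ), f s t with hh
  have hbdd : ∀ t > (0:ℝ), BddAbove (Set.range fun s : Set.Ioi (0:ℝ) => f s t) := by
    intro t ht
    exact ⟨ω (1/t), by rintro x ⟨⟨s, hs⟩, rfl⟩; exact key s hs t ht⟩
  have hle : ∀ t > (0:ℝ), h t ≤ ω (1/t) := by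
    intro t ht
    exact ciSup_le fun ⟨s, hs⟩ => key s hs t ht
  have hself : ∀ t > (0:ℝ), ω (1/(2*t)) / 2 ≤ h t := by
    intro t ht
    have : f t t = ω (1/(2*t)) / 2 := by
      simp only [hf]; field_simp; ring
    calc ω (1/(2*t)) / 2 = f t t := this.symm
      _ ≤ h t := le_ciSup (hbdd t ht) ⟨t, ht⟩
  have hnnh : ∀ t > (0:ℝ), 0 ≤ h t := by
    intro t ht
    have := hself t ht
    have := hnn (1/(2*t)) (by positivity)
    linarith
  refine ⟨4*C + 2*D, by linarith, h, ?_, hnnh, ?_⟩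
  · refine ⟨convex_Ioi 0, ?_⟩
    intro x hx y hy a b ha hb hab
    simp only [smul_eq_mul]
    have hmem : (0:ℝ) < a * x + b * y := by
      rcases eq_or_lt_of_le ha with ha' | ha'
      · have : b = 1 := by linarith
        simp only [← ha', this] at *
        simpa using (by simpa using hy : (0:ℝ) < y)
      · nlinarith [Set.mem_Ioi.mp hx, Set.mem_Ioi.mp hy]
    apply ciSup_le
    rintro ⟨s, hs⟩
    have heq : f s (a*x + b*y) = a * f s x + b * f s y := by
      have hb' : b = 1 - a := by linarith
      subst hb'; simp only [hf]; ring
    rw [heq]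
    have h1 : f s x ≤ h x := le_ciSup (hbdd x hx) ⟨s, hs⟩
    have h2 : f s y ≤ h y := le_ciSup (hbdd y hy) ⟨s, hs⟩
    have := mul_le_mul_of_nonneg_left h1 ha
    have := mul_le_mul_of_nonneg_left h2 hb
    linarith
  · intro t ht
    refine ⟨hle t ht, ?_⟩
    have hsc := hscale 2 (by norm_num) (1/(2*t)) (by positivity)
    have harg : 2 * (1/(2*t)) = 1/t := by field_simp
    rw [harg] at hsc
    have hs := hself t ht
    have hh0 := hnnh t ht
    nlinarith [hnn (1/(2*t)) (by positivity : (0:ℝ) ≤ 1/(2*t))]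
end

section
/- Let ω : [0,∞) → [0,∞) be non-decreasing with lim_{t→∞} ω(t) = +∞. Then: (a) γ(ω) > 1 if and only if ω satisfies (ω_snq); (b) (ω_snq) implies (ω_nq); (c) (ω_nq) implies (ω₅); (d) (ω₅) implies (ω₂); (e) γ(ω) > 1 implies (α₀). -/
open Filter MeasureTheory Asymptotics

/-- Condition `(P_{ω,γ})`: there is `K > 1` with `limsup_{t→∞} ω(K^γ t)/ω(t) < K`,
encoded as: there are `K > 1` and `K' < K` with `ω(K^γ t)/ω(t) ≤ K'` eventually. -/
def Pcond (ω : ℝ → ℝ) (γ : ℝ) : Prop :=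
  ∃ K > (1:ℝ), ∃ K' < K, ∀ᶠ t in atTop, ω (K ^ γ * t) / ω t ≤ K'

/-- The growth index `γ(ω)`, as the supremum (in `ℝ≥0∞`) of all `γ > 0`
satisfying `(P_{ω,γ})`; it is `0` if no such `γ` exists. -/
noncomputable def growthIndex (ω : ℝ → ℝ) : ENNReal :=
  ⨆ γ ∈ {γ : ℝ | 0 < γ ∧ Pcond ω γ}, ENNReal.ofReal γ

/-- Condition (ω_snq). -/
def OmSnq (ω : ℝ → ℝ) : Prop :=
  ∃ C > (0:ℝ), ∀ y > (0:ℝ),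
    (∫⁻ t in Set.Ioi (1:ℝ), ENNReal.ofReal (ω (y * t) / t ^ 2)) ≤
      ENNReal.ofReal (C * ω y + C)

/-- Condition (ω_nq). -/
def OmNq (ω : ℝ → ℝ) : Prop :=
  (∫⁻ t in Set.Ioi (1:ℝ), ENNReal.ofReal (ω t / t ^ 2)) < ⊤

/-- Condition (ω₅): `ω(t) = o(t)` as `t → ∞`. -/
def OmFive (ω : ℝ → ℝ) : Prop := ω =o[atTop] (fun t : ℝ => t)

/-- Condition (ω₂): `ω(t) = O(t)` as `t → ∞`. -/
def OmTwo (ω : ℝ → ℝ) : Prop := ω =O[atTop] (fun t : ℝ => t)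

/-- Condition (α₀). -/
def AlphaZero (ω : ℝ → ℝ) : Prop :=
  ∃ C ≥ (1:ℝ), ∃ t₀ ≥ (0:ℝ), ∀ l ≥ (1:ℝ), ∀ t ≥ t₀, ω (l * t) ≤ C * l * ω t


open scoped ENNReal NNReal
open Set Topology

namespace Stmt3Aux

variable {ω : ℝ → ℝ}


noncomputable def w (ω : ℝ → ℝ) (t : ℝ) : ℝ := ω (max t 0)

variable {ω : ℝ → ℝ}

lemma w_mono (hmono : ∀ s t, 0 ≤ s → s ≤ t → ω s ≤ ω t) : Monotone (w ω) :=
  fun s t h => hmono _ _ (le_max_right _ _) (max_le_max h le_rfl)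

lemma w_eq {t : ℝ} (ht : 0 ≤ t) : w ω t = ω t := by rw [w, max_eq_left ht]

lemma w_nonneg (hnn : ∀ t, 0 ≤ t → 0 ≤ ω t) (t : ℝ) : 0 ≤ w ω t := hnn _ (le_max_right _ _)

lemma meas_integrand (hmono : ∀ s t, 0 ≤ s → s ≤ t → ω s ≤ ω t) (y : ℝ) :
    Measurable fun t : ℝ => ENNReal.ofReal (w ω (y * t) / t ^ 2) := by
  apply ENNReal.measurable_ofReal.comp
  exact ((w_mono hmono).measurable.comp (measurable_const_mul y)).div (measurable_id.pow_const 2)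

/-- The function `σ`. -/
noncomputable def sig (ω : ℝ → ℝ) (y : ℝ) : ℝ≥0∞ :=
  ∫⁻ t in Ioi (1:ℝ), ENNReal.ofReal (w ω (y * t) / t ^ 2)

lemma sig_eq {y : ℝ} (hy : 0 < y) :
    sig ω y = ∫⁻ t in Ioi (1:ℝ), ENNReal.ofReal (ω (y * t) / t ^ 2) := by
  refine setLIntegral_congr_fun measurableSet_Ioi (fun t ht => ?_)
  have ht1 : (1:ℝ) < t := ht
  rw [w_eq (mul_nonneg hy.le (by linarith))]

lemma lintegral_Ioi_comp_mul_left {g : ℝ → ℝ≥0∞} (hg : Measurable g) {a c : ℝ} (ha : 0 < a) :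
    ∫⁻ t in Ioi c, g (a * t) = ENNReal.ofReal a⁻¹ * ∫⁻ s in Ioi (a * c), g s := by
  have hpre : (fun t : ℝ => a * t) ⁻¹' Ioi (a * c) = Ioi c := by
    ext x; simp [mul_lt_mul_iff_right₀ ha]
  have hmap : Measure.map (fun t : ℝ => a * t) (volume.restrict (Ioi c))
      = ENNReal.ofReal a⁻¹ • volume.restrict (Ioi (a * c)) := by
    rw [← hpre, ← Measure.restrict_map (measurable_const_mul a) measurableSet_Ioi,
      Real.map_volume_mul_left (ne_of_gt ha), Measure.restrict_smul,
      abs_of_pos (inv_pos.2 ha)]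
  calc ∫⁻ t in Ioi c, g (a * t)
      = ∫⁻ s, g s ∂(Measure.map (fun t : ℝ => a * t) (volume.restrict (Ioi c))) := by
        rw [lintegral_map hg (measurable_const_mul a)]
    _ = ENNReal.ofReal a⁻¹ * ∫⁻ s in Ioi (a * c), g s := by
        rw [hmap, lintegral_smul_measure, smul_eq_mul]

lemma sig_scale (hmono : ∀ s t, 0 ≤ s → s ≤ t → ω s ≤ ω t) {a : ℝ} (ha : 0 < a) (y : ℝ) :
    sig ω (a * y) = ENNReal.ofReal a * ∫⁻ s in Ioi a, ENNReal.ofReal (w ω (y * s) / s ^ 2) := by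
  have key : ∀ t : ℝ, ENNReal.ofReal (w ω ((a * y) * t) / t ^ 2)
      = (fun s => ENNReal.ofReal (a ^ 2 * (w ω (y * s) / s ^ 2))) (a * t) := by
    intro t
    rcases eq_or_ne t 0 with rfl | ht
    · simp
    · congr 1
      have hat : (a * t) ^ 2 ≠ 0 := pow_ne_zero 2 (mul_ne_zero ha.ne' ht)
      field_simp
  have hg : Measurable fun s : ℝ => ENNReal.ofReal (a ^ 2 * (w ω (y * s) / s ^ 2)) := by
    have := meas_integrand hmono (ω := ω) y
    simpa [ENNReal.ofReal_mul (sq_nonneg a), Function.comp_def] using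
      (ENNReal.continuous_const_mul (by simp [ENNReal.ofReal_ne_top]) |>.measurable.comp this)
  calc sig ω (a * y) = ∫⁻ t in Ioi (1:ℝ),
        (fun s => ENNReal.ofReal (a ^ 2 * (w ω (y * s) / s ^ 2))) (a * t) := by
        unfold sig; exact lintegral_congr fun t => key t
    _ = ENNReal.ofReal a⁻¹ * ∫⁻ s in Ioi (a * 1), ENNReal.ofReal (a ^ 2 * (w ω (y * s) / s ^ 2)) :=
        lintegral_Ioi_comp_mul_left hg ha
    _ = ENNReal.ofReal a * ∫⁻ s in Ioi a, ENNReal.ofReal (w ω (y * s) / s ^ 2) := by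
        rw [mul_one]
        rw [show (fun s : ℝ => ENNReal.ofReal (a ^ 2 * (w ω (y * s) / s ^ 2)))
            = fun s => ENNReal.ofReal (a ^ 2) * ENNReal.ofReal (w ω (y * s) / s ^ 2) from
          funext fun s => ENNReal.ofReal_mul (sq_nonneg a)]
        rw [lintegral_const_mul _ (meas_integrand hmono y)]
        rw [← mul_assoc, ← ENNReal.ofReal_mul (inv_nonneg.2 ha.le)]
        congr 2
        field_simp

/-- Lower bound for the piece over `Ioc 1 2`. -/
lemma piece_lb (hnn : ∀ t, 0 ≤ t → 0 ≤ ω t) (hmono : ∀ s t, 0 ≤ s → s ≤ t → ω s ≤ ω t)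
    {y : ℝ} (hy : 0 ≤ y) :
    ENNReal.ofReal (ω y / 4) ≤ ∫⁻ t in Ioc (1:ℝ) 2, ENNReal.ofReal (w ω (y * t) / t ^ 2) := by
  have h1 : ENNReal.ofReal (ω y / 4) = ∫⁻ _ in Ioc (1:ℝ) 2, ENNReal.ofReal (ω y / 4) := by
    rw [setLIntegral_const, Real.volume_Ioc]
    norm_num
  rw [h1]
  refine setLIntegral_mono (meas_integrand hmono y) fun t ht => ?_
  apply ENNReal.ofReal_le_ofReal
  have ht1 : (1:ℝ) < t := ht.1
  have ht2 : t ≤ 2 := ht.2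
  have hw : ω y ≤ w ω (y * t) := by
    rw [← w_eq (ω := ω) hy]
    exact w_mono hmono (le_mul_of_one_le_right hy (by linarith))
  have htsq : t ^ 2 ≤ 4 := by nlinarith
  have htpos : (0:ℝ) < t ^ 2 := by positivity
  have hwnn : 0 ≤ ω y := hnn y hy
  rw [div_le_div_iff₀ (by norm_num) htpos]
  nlinarith

lemma sig_lb (hnn : ∀ t, 0 ≤ t → 0 ≤ ω t) (hmono : ∀ s t, 0 ≤ s → s ≤ t → ω s ≤ ω t)
    {y : ℝ} (hy : 0 ≤ y) : ENNReal.ofReal (ω y / 4) ≤ sig ω y :=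
  le_trans (piece_lb hnn hmono hy) (lintegral_mono_set Ioc_subset_Ioi_self)

lemma sig_split (y : ℝ) {L : ℝ} (hL : 1 ≤ L) :
    sig ω y = (∫⁻ t in Ioc (1:ℝ) L, ENNReal.ofReal (w ω (y * t) / t ^ 2))
      + ∫⁻ t in Ioi L, ENNReal.ofReal (w ω (y * t) / t ^ 2) := by
  rw [sig, ← Ioc_union_Ioi_eq_Ioi hL, lintegral_union measurableSet_Ioi Ioc_disjoint_Ioi_same]

/-- The key concavity-type estimate: `σ(2y) + ω(y)/2 ≤ 2 σ(y)`. -/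
lemma sig_two (hnn : ∀ t, 0 ≤ t → 0 ≤ ω t) (hmono : ∀ s t, 0 ≤ s → s ≤ t → ω s ≤ ω t)
    {y : ℝ} (hy : 0 ≤ y) :
    sig ω (2 * y) + ENNReal.ofReal (ω y / 2) ≤ 2 * sig ω y := by
  have hsplit := sig_split (ω := ω) y (by norm_num : (1:ℝ) ≤ 2)
  have hscale := sig_scale hmono (by norm_num : (0:ℝ) < 2) y
  have h2 : ENNReal.ofReal (2:ℝ) = 2 := by norm_num
  have hIoi : sig ω (2 * y) = 2 * ∫⁻ s in Ioi (2:ℝ), ENNReal.ofReal (w ω (y * s) / s ^ 2) := by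
    rw [hscale, h2]
  have hlb := piece_lb hnn hmono hy
  have : ENNReal.ofReal (ω y / 2) = 2 * ENNReal.ofReal (ω y / 4) := by
    rw [← h2, ← ENNReal.ofReal_mul (by norm_num)]
    congr 1
    ring
  rw [hsplit, hIoi, this, mul_add]
  rw [add_comm (2 * ∫⁻ t in Ioc (1:ℝ) 2, ENNReal.ofReal (w ω (y * t) / t ^ 2))]
  exact add_le_add le_rfl (mul_le_mul_right hlb 2)

lemma iUnion_Ioc_pow {L : ℝ} (hL : 1 < L) :
    ⋃ n : ℕ, Ioc (L ^ n) (L ^ (n + 1)) = Ioi (1:ℝ) := by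
  ext x
  simp only [mem_iUnion, mem_Ioc, mem_Ioi]
  constructor
  · rintro ⟨n, h1, _⟩
    exact lt_of_le_of_lt (one_le_pow₀ hL.le) h1
  · intro hx
    have hex : ∃ m : ℕ, x ≤ L ^ (m + 1) := by
      obtain ⟨m, hm⟩ := pow_unbounded_of_one_lt x hL
      exact ⟨m, hm.le.trans (pow_le_pow_right₀ hL.le (Nat.le_succ m))⟩
    classical
    let n := Nat.find hex
    refine ⟨n, ?_, Nat.find_spec hex⟩
    rcases Nat.eq_zero_or_pos n with hn | hn
    · rw [hn, pow_zero]; exact hx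
    · have := Nat.find_min hex (m := n - 1) (by omega)
      push_neg at this
      calc L ^ n = L ^ (n - 1 + 1) := by congr 1; omega
        _ < x := this

/-- Generic upper bound for a piece. -/
lemma piece_ub (hnn : ∀ t, 0 ≤ t → 0 ≤ ω t) (hmono : ∀ s t, 0 ≤ s → s ≤ t → ω s ≤ ω t)
    {y : ℝ} (hy : 0 ≤ y) {a b : ℝ} (ha : 1 ≤ a) (hab : a ≤ b) :
    ∫⁻ t in Ioc a b, ENNReal.ofReal (w ω (y * t) / t ^ 2)
      ≤ ENNReal.ofReal (ω (b * y) * ((b - a) / a ^ 2)) := by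
  have hbnd : ∀ t ∈ Ioc a b, ENNReal.ofReal (w ω (y * t) / t ^ 2)
      ≤ ENNReal.ofReal (ω (b * y) / a ^ 2) := by
    intro t ht
    apply ENNReal.ofReal_le_ofReal
    have hta : a ≤ t := ht.1.le
    have htpos : (0:ℝ) < t := by linarith [ht.1]
    have h1 : w ω (y * t) ≤ ω (b * y) := by
      rw [← w_eq (ω := ω) (mul_nonneg (by linarith : (0:ℝ) ≤ b) hy)]
      exact w_mono hmono (by nlinarith [ht.2])
    have h2 : a ^ 2 ≤ t ^ 2 := by nlinarith
    have h3 : (0:ℝ) < a ^ 2 := by positivity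
    exact div_le_div₀ (hnn _ (mul_nonneg (by linarith) hy)) h1 h3 h2
  calc ∫⁻ t in Ioc a b, ENNReal.ofReal (w ω (y * t) / t ^ 2)
      ≤ ∫⁻ _ in Ioc a b, ENNReal.ofReal (ω (b * y) / a ^ 2) :=
        setLIntegral_mono' measurableSet_Ioc hbnd
    _ = ENNReal.ofReal (ω (b * y) / a ^ 2) * ENNReal.ofReal (b - a) := by
        rw [setLIntegral_const, Real.volume_Ioc]
    _ ≤ ENNReal.ofReal (ω (b * y) * ((b - a) / a ^ 2)) := by
        rw [← ENNReal.ofReal_mul (div_nonneg (hnn _ (mul_nonneg (by linarith) hy)) (by positivity))]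
        apply le_of_eq
        congr 1
        ring

/-- Iteration of a one-step growth bound. -/
lemma iter {L Q t₀ : ℝ} (hL : 1 ≤ L) (hQ : 0 ≤ Q) (ht₀ : 0 ≤ t₀)
    (h : ∀ t ≥ t₀, ω (L * t) ≤ Q * ω t) :
    ∀ n : ℕ, ∀ t ≥ t₀, ω (L ^ n * t) ≤ Q ^ n * ω t := by
  intro n
  induction n with
  | zero => intro t ht; simp
  | succ n ih =>
    intro t ht
    have h1 : L ^ n * t ≥ t₀ := le_trans ht (le_mul_of_one_le_left (le_trans ht₀ ht) (one_le_pow₀ hL))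
    calc ω (L ^ (n + 1) * t) = ω (L * (L ^ n * t)) := by ring_nf
      _ ≤ Q * ω (L ^ n * t) := h _ h1
      _ ≤ Q * (Q ^ n * ω t) := mul_le_mul_of_nonneg_left (ih t ht) hQ
      _ = Q ^ (n + 1) * ω t := by ring

lemma sig_mono_y (hmono : ∀ s t, 0 ≤ s → s ≤ t → ω s ≤ ω t)
    {y z : ℝ} (hy : 0 ≤ y) (hyz : y ≤ z) : sig ω y ≤ sig ω z := by
  refine setLIntegral_mono (meas_integrand hmono z) fun t ht => ?_
  have ht1 : (1:ℝ) < t := ht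
  apply ENNReal.ofReal_le_ofReal
  have hnum : w ω (y * t) ≤ w ω (z * t) :=
    w_mono hmono (mul_le_mul_of_nonneg_right hyz (by linarith))
  gcongr

/-- From the iterated growth bound, derive `(ω_snq)`. -/
lemma snq_of_extract (hnn : ∀ t, 0 ≤ t → 0 ≤ ω t) (hmono : ∀ s t, 0 ≤ s → s ≤ t → ω s ≤ ω t)
    {L Q t₀ : ℝ} (hL : 1 < L) (hQ1 : 1 ≤ Q) (hQL : Q < L) (ht₀ : 1 ≤ t₀)
    (hev : ∀ t ≥ t₀, ω (L * t) ≤ Q * ω t ∧ 1 ≤ ω t) : OmSnq ω := by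
  have hiter := iter (ω := ω) hL.le (by linarith) (by linarith) (fun t ht => (hev t ht).1)
  set r : ℝ := Q / L with hr
  have hr0 : 0 ≤ r := by positivity
  have hr1 : r < 1 := (div_lt_one (by linarith)).2 hQL
  set D : ℝ := Q * (L - 1) * (1 - r)⁻¹ with hD
  have hD0 : 0 < D := by
    apply mul_pos (mul_pos (by linarith) (by linarith))
    rw [inv_pos]; linarith
  -- main estimate for y ≥ t₀
  have hmain : ∀ y ≥ t₀, sig ω y ≤ ENNReal.ofReal (D * ω y) := by
    intro y hy
    have hy0 : (0:ℝ) ≤ y := by linarith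
    have hsum : sig ω y = ∑' n : ℕ,
        ∫⁻ t in Ioc (L ^ n) (L ^ (n + 1)), ENNReal.ofReal (w ω (y * t) / t ^ 2) := by
      rw [sig, ← iUnion_Ioc_pow hL, lintegral_iUnion (fun n => measurableSet_Ioc)]
      intro m n hmn
      rcases Ne.lt_or_gt hmn with h | h
      · apply Ioc_disjoint_Ioc.2
        have h1 : L ^ (m + 1) ≤ L ^ n := pow_le_pow_right₀ hL.le (by omega)
        calc min (L ^ (m+1)) (L ^ (n+1)) ≤ L ^ (m+1) := min_le_left _ _
          _ ≤ max (L ^ m) (L ^ n) := le_trans h1 (le_max_right _ _)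
      · apply Ioc_disjoint_Ioc.2
        have h1 : L ^ (n + 1) ≤ L ^ m := pow_le_pow_right₀ hL.le (by omega)
        calc min (L ^ (m+1)) (L ^ (n+1)) ≤ L ^ (n+1) := min_le_right _ _
          _ ≤ max (L ^ m) (L ^ n) := le_trans h1 (le_max_left _ _)
    have hpiece : ∀ n : ℕ,
        (∫⁻ t in Ioc (L ^ n) (L ^ (n + 1)), ENNReal.ofReal (w ω (y * t) / t ^ 2))
          ≤ ENNReal.ofReal ((Q * (L - 1) * ω y) * r ^ n) := by
      intro n
      have hLn : (0:ℝ) < L ^ n := by positivity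
      refine le_trans (piece_ub hnn hmono hy0 (one_le_pow₀ hL.le)
        (pow_le_pow_right₀ hL.le (Nat.le_succ n))) (ENNReal.ofReal_le_ofReal ?_)
      have h1 : ω (L ^ (n + 1) * y) ≤ Q ^ (n + 1) * ω y := hiter (n + 1) y hy
      have h2 : (L ^ (n + 1) - L ^ n) / (L ^ n) ^ 2 = (L - 1) / L ^ n := by
        rw [pow_succ]
        field_simp
      rw [h2]
      have h3 : 0 ≤ (L - 1) / L ^ n := div_nonneg (by linarith) (by positivity)
      calc ω (L ^ (n + 1) * y) * ((L - 1) / L ^ n)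
          ≤ (Q ^ (n + 1) * ω y) * ((L - 1) / L ^ n) := by
            apply mul_le_mul_of_nonneg_right h1 h3
        _ = (Q * (L - 1) * ω y) * r ^ n := by
            rw [hr, div_pow, pow_succ]
            field_simp
    have hsum2 : sig ω y ≤ ∑' n : ℕ, ENNReal.ofReal ((Q * (L - 1) * ω y) * r ^ n) := by
      rw [hsum]; exact ENNReal.tsum_le_tsum hpiece
    have hwy : 0 ≤ ω y := hnn y hy0
    have hc : 0 ≤ Q * (L - 1) * ω y := by
      apply mul_nonneg (mul_nonneg (by linarith) (by linarith)) hwy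
    have hgeo : ∑' n : ℕ, ENNReal.ofReal ((Q * (L - 1) * ω y) * r ^ n)
        = ENNReal.ofReal (Q * (L - 1) * ω y) * ∑' n : ℕ, (ENNReal.ofReal r) ^ n := by
      rw [← ENNReal.tsum_mul_left]
      congr 1
      funext n
      rw [← ENNReal.ofReal_pow hr0, ← ENNReal.ofReal_mul hc]
    have hgeo2 : ∑' n : ℕ, (ENNReal.ofReal r) ^ n = ENNReal.ofReal ((1 - r)⁻¹) := by
      rw [ENNReal.tsum_geometric, ENNReal.ofReal_inv_of_pos (by linarith)]
      congr 1
      rw [← ENNReal.ofReal_one, ← ENNReal.ofReal_sub _ hr0]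
    refine le_trans hsum2 ?_
    rw [hgeo, hgeo2, ← ENNReal.ofReal_mul hc]
    apply ENNReal.ofReal_le_ofReal
    apply le_of_eq
    rw [hD]; ring
  -- conclude
  have hω₀ : 1 ≤ ω t₀ := (hev t₀ le_rfl).2
  set C : ℝ := max D 1 * (1 + ω t₀) with hC
  have hC0 : 0 < C := by
    apply mul_pos (lt_of_lt_of_le one_pos (le_max_right _ _))
    linarith
  refine ⟨C, hC0, fun y hy => ?_⟩
  rw [← sig_eq hy]
  by_cases hcase : t₀ ≤ y
  · refine le_trans (hmain y hcase) (ENNReal.ofReal_le_ofReal ?_)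
    have hwy : 0 ≤ ω y := hnn y hy.le
    have h1 : D ≤ C := by
      calc D ≤ max D 1 := le_max_left _ _
        _ = max D 1 * 1 := (mul_one _).symm
        _ ≤ C := by rw [hC]; apply mul_le_mul_of_nonneg_left (by linarith)
                      (le_trans zero_le_one (le_max_right _ _))
    nlinarith [mul_le_mul_of_nonneg_right h1 hwy]
  · push_neg at hcase
    have h1 : sig ω y ≤ sig ω t₀ := sig_mono_y hmono hy.le hcase.le
    refine le_trans (le_trans h1 (hmain t₀ le_rfl)) (ENNReal.ofReal_le_ofReal ?_)
    have hwy : 0 ≤ ω y := hnn y hy.le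
    have h2 : D * ω t₀ ≤ C := by
      rw [hC]
      apply mul_le_mul (le_max_left _ _) (by linarith) (by linarith)
        (le_trans zero_le_one (le_max_right _ _))
    nlinarith [mul_nonneg hC0.le hwy]

lemma extract (hnn : ∀ t, 0 ≤ t → 0 ≤ ω t) (hlim : Filter.Tendsto ω atTop atTop)
    (h : 1 < growthIndex ω) :
    ∃ L Q t₀ : ℝ, 1 < L ∧ 1 ≤ Q ∧ Q < L ∧ 1 ≤ t₀ ∧
      ∀ t ≥ t₀, ω (L * t) ≤ Q * ω t ∧ 1 ≤ ω t := by
  rw [growthIndex, lt_iSup_iff] at h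
  obtain ⟨γ, hγ⟩ := h
  rw [lt_iSup_iff] at hγ
  obtain ⟨hγS, hγ1⟩ := hγ
  have hγgt : 1 < γ := ENNReal.one_lt_ofReal.1 hγ1
  obtain ⟨-, K, hK, K', hK', hev⟩ := hγS
  set L : ℝ := K ^ γ with hLdef
  have hKL : K ≤ L := by
    calc K = K ^ (1:ℝ) := (Real.rpow_one K).symm
      _ ≤ K ^ γ := Real.rpow_le_rpow_of_exponent_le hK.le hγgt.le
  have hL1 : 1 < L := lt_of_lt_of_le hK hKL
  set Q : ℝ := max K' 1 with hQdef
  have hQ1 : 1 ≤ Q := le_max_right _ _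
  have hQK : Q < K := max_lt hK' hK
  obtain ⟨t₁, ht₁⟩ := hev.exists_forall_of_atTop
  obtain ⟨t₂, ht₂⟩ := (hlim.eventually_ge_atTop 1).exists_forall_of_atTop
  refine ⟨L, Q, max (max t₁ t₂) 1, hL1, hQ1, lt_of_lt_of_le hQK hKL, le_max_right _ _,
    fun t ht => ?_⟩
  have h1 : 1 ≤ ω t := ht₂ t (le_trans (le_trans (le_max_right t₁ t₂) (le_max_left _ 1)) ht)
  have h2 : ω (L * t) / ω t ≤ K' := ht₁ t (le_trans (le_trans (le_max_left t₁ t₂) (le_max_left _ 1)) ht)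
  have hpos : (0:ℝ) < ω t := by linarith
  refine ⟨?_, h1⟩
  have := (div_le_iff₀ hpos).1 h2
  calc ω (L * t) ≤ K' * ω t := this
    _ ≤ Q * ω t := mul_le_mul_of_nonneg_right (le_max_left _ _) (by linarith)

lemma alphaZero_of_extract (hnn : ∀ t, 0 ≤ t → 0 ≤ ω t)
    (hmono : ∀ s t, 0 ≤ s → s ≤ t → ω s ≤ ω t)
    (hiter : ∀ n : ℕ, ∀ t ≥ t₀, ω (L ^ n * t) ≤ Q ^ n * ω t)
    (hL : 1 < L) (hQ1 : 1 ≤ Q) (hQL : Q < L) (ht₀ : 1 ≤ t₀) : AlphaZero ω := by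
  refine ⟨L, hL.le, t₀, by linarith, fun l hl t ht => ?_⟩
  classical
  have hex : ∃ n : ℕ, l ≤ L ^ n := by
    obtain ⟨n, hn⟩ := pow_unbounded_of_one_lt l hL
    exact ⟨n, hn.le⟩
  set n := Nat.find hex with hn
  have hspec : l ≤ L ^ n := Nat.find_spec hex
  have ht0 : (0:ℝ) < t := by linarith
  have hωt : 0 ≤ ω t := hnn t ht0.le
  have hωlt : ω (l * t) ≤ Q ^ n * ω t := by
    calc ω (l * t) ≤ ω (L ^ n * t) :=
          hmono _ _ (by positivity) (mul_le_mul_of_nonneg_right hspec ht0.le)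
      _ ≤ Q ^ n * ω t := hiter n t ht
  have hQn : Q ^ n ≤ L * l := by
    rcases Nat.eq_zero_or_pos n with h0 | h0
    · rw [h0, pow_zero]; nlinarith
    · have hmin : ¬ (l ≤ L ^ (n - 1)) := Nat.find_min hex (by omega)
      push_neg at hmin
      calc Q ^ n ≤ L ^ n := pow_le_pow_left₀ (by linarith) hQL.le n
        _ = L * L ^ (n - 1) := by rw [← pow_succ']; congr 1; omega
        _ ≤ L * l := mul_le_mul_of_nonneg_left hmin.le (by linarith)
  calc ω (l * t) ≤ Q ^ n * ω t := hωlt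
    _ ≤ (L * l) * ω t := mul_le_mul_of_nonneg_right hQn hωt
    _ = L * l * ω t := rfl

theorem gi_of_snq (hnn : ∀ t, 0 ≤ t → 0 ≤ ω t) (hmono : ∀ s t, 0 ≤ s → s ≤ t → ω s ≤ ω t)
    (hlim : Filter.Tendsto ω atTop atTop) (hsnq : OmSnq ω) : 1 < growthIndex ω := by
  obtain ⟨C₀, hC₀, hs⟩ := hsnq
  set C : ℝ := C₀ + 1 with hCdef
  have hC1 : 1 ≤ C := by linarith
  have hub : ∀ y > (0:ℝ), sig ω y ≤ ENNReal.ofReal (C * ω y + C) := by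
    intro y hy
    rw [sig_eq hy]
    refine le_trans (hs y hy) (ENNReal.ofReal_le_ofReal ?_)
    have := hnn y hy.le
    nlinarith
  have hfin : ∀ y > (0:ℝ), sig ω y ≠ ⊤ :=
    fun y hy => ne_top_of_le_ne_top ENNReal.ofReal_ne_top (hub y hy)
  -- real-valued version
  set sv : ℝ → ℝ := fun y => (sig ω y).toReal with hsv
  obtain ⟨y₀', hy₀'⟩ := (hlim.eventually_ge_atTop 1).exists_forall_of_atTop
  set y₁ : ℝ := max y₀' 1 with hy₁def
  have hy₁pos : (0:ℝ) < y₁ := lt_of_lt_of_le one_pos (le_max_right _ _)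
  have hy11 : (1:ℝ) ≤ y₁ := le_max_right _ _
  have hω1 : ∀ y ≥ y₁, 1 ≤ ω y := fun y hy => hy₀' y (le_trans (le_max_left _ _) hy)
  -- basic real inequalities
  have hub' : ∀ y ≥ y₁, sv y ≤ 2 * C * ω y := by
    intro y hy
    have hy0 : 0 < y := lt_of_lt_of_le hy₁pos hy
    have h1 : sv y ≤ C * ω y + C := by
      rw [hsv]
      calc (sig ω y).toReal ≤ (ENNReal.ofReal (C * ω y + C)).toReal :=
            ENNReal.toReal_mono ENNReal.ofReal_ne_top (hub y hy0)
        _ ≤ C * ω y + C := le_of_eq (ENNReal.toReal_ofReal (by nlinarith [hnn y hy0.le]))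
    have h2 : 1 ≤ ω y := hω1 y hy
    nlinarith
  have hlb' : ∀ y ≥ y₁, ω y / 4 ≤ sv y := by
    intro y hy
    have hy0 : 0 < y := lt_of_lt_of_le hy₁pos hy
    have := sig_lb hnn hmono (le_of_lt hy0)
    rw [hsv]
    calc ω y / 4 = (ENNReal.ofReal (ω y / 4)).toReal := by
          rw [ENNReal.toReal_ofReal (div_nonneg (hnn y hy0.le) (by norm_num))]
      _ ≤ (sig ω y).toReal := ENNReal.toReal_mono (hfin y hy0) this
  -- the one-step contraction
  set a : ℝ := 2 - 1 / (4 * C) with hadef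
  have hCpos : (0:ℝ) < C := by linarith
  have hu : 0 < 1 / (4 * C) := by positivity
  have hu4 : 1 / (4 * C) ≤ 1 / 4 := by
    apply div_le_div_of_nonneg_left one_pos.le (by norm_num)
    linarith
  have ha1 : 1 < a := by rw [hadef]; linarith
  have ha2 : a < 2 := by rw [hadef]; linarith
  have hstep : ∀ y ≥ y₁, sv (2 * y) ≤ a * sv y := by
    intro y hy
    have hy0 : (0:ℝ) < y := lt_of_lt_of_le hy₁pos hy
    have h2y : sig ω (2 * y) ≠ ⊤ := hfin _ (by linarith)
    have hfy : sig ω y ≠ ⊤ := hfin y hy0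
    have key := sig_two hnn hmono hy0.le
    have hfin2 : (2:ℝ≥0∞) * sig ω y ≠ ⊤ := ENNReal.mul_ne_top (by norm_num) hfy
    have h1 : (sig ω (2 * y) + ENNReal.ofReal (ω y / 2)).toReal ≤ ((2:ℝ≥0∞) * sig ω y).toReal :=
      ENNReal.toReal_mono hfin2 key
    rw [ENNReal.toReal_add h2y ENNReal.ofReal_ne_top,
      ENNReal.toReal_ofReal (div_nonneg (hnn y hy0.le) (by norm_num)),
      ENNReal.toReal_mul] at h1
    have h2 : ((2:ℝ≥0∞)).toReal = (2:ℝ) := by norm_num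
    rw [h2] at h1
    have h3 : sv y ≤ 2 * C * ω y := hub' y hy
    have h4 : (1 / (4 * C)) * sv y ≤ (1 / (4 * C)) * (2 * C * ω y) :=
      mul_le_mul_of_nonneg_left h3 hu.le
    have h5 : (1 / (4 * C)) * (2 * C * ω y) = ω y / 2 := by field_simp; ring
    rw [h5] at h4
    have h1' : sv (2 * y) + ω y / 2 ≤ 2 * sv y := h1
    rw [hadef]
    linarith [h1', h4]
  -- iterate
  have hiter : ∀ n : ℕ, ∀ y ≥ y₁, sv (2 ^ n * y) ≤ a ^ n * sv y := by
    intro n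
    induction n with
    | zero => intro y hy; simp
    | succ n ih =>
      intro y hy
      have hy0 : (0:ℝ) < y := lt_of_lt_of_le hy₁pos hy
      have h2n : y₁ ≤ 2 ^ n * y := le_trans hy (le_mul_of_one_le_left hy0.le (one_le_pow₀ one_le_two))
      calc sv (2 ^ (n + 1) * y) = sv (2 * (2 ^ n * y)) := by ring_nf
        _ ≤ a * sv (2 ^ n * y) := hstep _ h2n
        _ ≤ a * (a ^ n * sv y) := mul_le_mul_of_nonneg_left (ih y hy) (by linarith)
        _ = a ^ (n + 1) * sv y := by ring
  -- growth chain for ω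
  have hchain : ∀ n : ℕ, ∀ y ≥ y₁, ω (2 ^ n * y) ≤ 8 * C * a ^ n * ω y := by
    intro n y hy
    have hy0 : (0:ℝ) < y := lt_of_lt_of_le hy₁pos hy
    have h2n : y₁ ≤ 2 ^ n * y := le_trans hy (le_mul_of_one_le_left hy0.le (one_le_pow₀ one_le_two))
    have h1 : ω (2 ^ n * y) / 4 ≤ sv (2 ^ n * y) := hlb' _ h2n
    have h2 : sv (2 ^ n * y) ≤ a ^ n * sv y := hiter n y hy
    have h3 : sv y ≤ 2 * C * ω y := hub' y hy
    have han : (0:ℝ) < a ^ n := by positivity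
    nlinarith
  -- choose the exponent γ
  set b : ℝ := Real.sqrt (2 / a) with hbdef
  have h2a : (1:ℝ) < 2 / a := (one_lt_div (by linarith)).2 ha2
  have hb2 : b ^ 2 = 2 / a := Real.sq_sqrt (by linarith)
  have hbnn : 0 ≤ b := Real.sqrt_nonneg _
  have hb1 : 1 < b := by nlinarith
  have hab1 : 1 < a * b := by nlinarith
  have hab2 : a * b < 2 := by
    have h1 : a * b ^ 2 = 2 := by rw [hb2]; field_simp
    have h2 : 0 < a * b * (b - 1) := by
      apply mul_pos (mul_pos (by linarith) (by linarith))
      linarith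
    nlinarith [h1, h2]
  set γ : ℝ := Real.log 2 / Real.log (a * b) with hγdef
  have hlogab : 0 < Real.log (a * b) := Real.log_pos hab1
  have hlog2 : 0 < Real.log 2 := Real.log_pos one_lt_two
  have hγ1 : 1 < γ := by
    rw [hγdef, lt_div_iff₀ hlogab, one_mul]
    exact Real.log_lt_log (by linarith) hab2
  have hγ0 : 0 < γ := by linarith
  have hpow : (2:ℝ) ^ (1 / γ) = a * b := by
    rw [hγdef, one_div_div, Real.rpow_def_of_pos two_pos,
      mul_div_cancel₀ _ (ne_of_gt hlog2), Real.exp_log (by linarith)]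
  -- choose n with b ^ n > 8 C
  obtain ⟨m, hm⟩ := pow_unbounded_of_one_lt (8 * C) hb1
  set N : ℕ := m + 1 with hNdef
  have hbN : 8 * C < b ^ N := by
    calc 8 * C < b ^ m := hm
      _ ≤ b ^ N := pow_le_pow_right₀ hb1.le (Nat.le_succ m)
  set K : ℝ := (2:ℝ) ^ ((N:ℝ) / γ) with hKdef
  have hNγ : (0:ℝ) < (N:ℝ) / γ := by positivity
  have hK1 : 1 < K := Real.one_lt_rpow_iff_of_pos two_pos |>.2 (Or.inl ⟨one_lt_two, hNγ⟩)
  have hKγ : K ^ γ = (2:ℝ) ^ (N:ℕ) := by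
    rw [hKdef, ← Real.rpow_natCast 2 N, ← Real.rpow_mul (by norm_num : (0:ℝ) ≤ 2),
      div_mul_cancel₀ _ (ne_of_gt hγ0)]
  have hKab : K = (a * b) ^ (N:ℕ) := by
    rw [hKdef, ← hpow, ← Real.rpow_natCast (2 ^ (1/γ)) N, ← Real.rpow_mul (by norm_num : (0:ℝ) ≤ 2)]
    congr 1
    field_simp
  set K' : ℝ := 8 * C * a ^ N with hK'def
  have hK'K : K' < K := by
    rw [hK'def, hKab, mul_pow]
    have han : (0:ℝ) < a ^ N := by positivity
    calc 8 * C * a ^ N < b ^ N * a ^ N := by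
          apply mul_lt_mul_of_pos_right hbN han
      _ = a ^ N * b ^ N := by ring
  have hev : ∀ᶠ t in atTop, ω (K ^ γ * t) / ω t ≤ K' := by
    filter_upwards [eventually_ge_atTop y₁] with t ht
    have h1 : 1 ≤ ω t := hω1 t ht
    have h2 : ω (K ^ γ * t) ≤ K' * ω t := by
      rw [hKγ]
      have := hchain N t ht
      calc ω ((2:ℝ) ^ (N:ℕ) * t) ≤ 8 * C * a ^ N * ω t := this
        _ = K' * ω t := by rw [hK'def]
    rw [div_le_iff₀ (by linarith)]
    exact h2
  have hmem : γ ∈ {γ : ℝ | 0 < γ ∧ Pcond ω γ} := ⟨hγ0, K, hK1, K', hK'K, hev⟩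
  calc (1:ℝ≥0∞) < ENNReal.ofReal γ := ENNReal.one_lt_ofReal.2 hγ1
    _ ≤ growthIndex ω := le_iSup₂ (f := fun γ _ => ENNReal.ofReal γ) γ hmem

theorem omFive_of_omNq (hnn : ∀ t, 0 ≤ t → 0 ≤ ω t)
    (hmono : ∀ s t, 0 ≤ s → s ≤ t → ω s ≤ ω t) (h : OmNq ω) : OmFive ω := by
  set f : ℝ → ℝ≥0∞ := fun t => ENNReal.ofReal (w ω t / t ^ 2) with hf
  have hfmeas : Measurable f := by
    apply ENNReal.measurable_ofReal.comp
    exact (w_mono hmono).measurable.div (measurable_id.pow_const 2)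
  set μ : Measure ℝ := (volume.restrict (Ioi (1:ℝ))).withDensity f with hμ
  have hμfin : μ univ < ⊤ := by
    rw [hμ, withDensity_apply _ MeasurableSet.univ, Measure.restrict_univ]
    have : ∫⁻ t in Ioi (1:ℝ), f t = ∫⁻ t in Ioi (1:ℝ), ENNReal.ofReal (ω t / t ^ 2) := by
      refine setLIntegral_congr_fun measurableSet_Ioi (fun t ht => ?_)
      have ht1 : (1:ℝ) < t := ht
      rw [hf]; simp only []
      rw [w_eq (ω := ω) (by linarith)]
    rw [this]
    exact h
  -- tail of a finite measure tends to zero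
  have htail : Tendsto (fun t : ℝ => μ (Ioi t)) atTop (𝓝 0) := by
    have hnat : Tendsto (fun n : ℕ => μ (Ioi (n:ℝ))) atTop (𝓝 0) := by
      have hempty : ⋂ n : ℕ, Ioi ((n:ℝ)) = ∅ := by
        ext x
        simp only [mem_iInter, mem_Ioi, mem_empty_iff_false, iff_false, not_forall, not_lt]
        obtain ⟨n, hn⟩ := exists_nat_ge x
        exact ⟨n, hn⟩
      have := tendsto_measure_iInter_atTop (μ := μ)
        (fun n : ℕ => measurableSet_Ioi.nullMeasurableSet)
        (fun m n hmn => Ioi_subset_Ioi (Nat.cast_le.2 hmn))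
        ⟨0, (lt_of_le_of_lt (measure_mono (subset_univ _)) hμfin).ne⟩
      rwa [hempty, measure_empty] at this
    have hcomp : Tendsto (fun t : ℝ => μ (Ioi ((⌊t⌋₊ : ℝ)))) atTop (𝓝 0) :=
      hnat.comp tendsto_nat_floor_atTop
    refine tendsto_of_tendsto_of_tendsto_of_le_of_le' tendsto_const_nhds hcomp ?_ ?_
    · exact Eventually.of_forall fun t => zero_le
    · filter_upwards [eventually_ge_atTop (0:ℝ)] with t ht
      exact measure_mono (Ioi_subset_Ioi (Nat.floor_le ht))
  -- lower bound for the tail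
  have hlb : ∀ t : ℝ, 1 ≤ t → ENNReal.ofReal (ω t / (4 * t)) ≤ μ (Ioi t) := by
    intro t ht
    have ht0 : (0:ℝ) < t := by linarith
    have hsub : Ioi t ⊆ Ioi (1:ℝ) := Ioi_subset_Ioi ht
    have happ : μ (Ioi t) = ∫⁻ s in Ioi t, f s := by
      rw [hμ, withDensity_apply _ measurableSet_Ioi, Measure.restrict_restrict measurableSet_Ioi,
        inter_eq_self_of_subset_left hsub]
    rw [happ]
    have hpiece : ∫⁻ s in Ioc t (2 * t), f s ≤ ∫⁻ s in Ioi t, f s :=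
      lintegral_mono_set Ioc_subset_Ioi_self
    refine le_trans ?_ hpiece
    have hconst : ∀ s ∈ Ioc t (2 * t), ENNReal.ofReal (ω t / (4 * t ^ 2)) ≤ f s := by
      intro s hs
      have hs1 : t < s := hs.1
      have hs2 : s ≤ 2 * t := hs.2
      rw [hf]
      apply ENNReal.ofReal_le_ofReal
      have h1 : ω t ≤ w ω s := by
        rw [← w_eq (ω := ω) ht0.le]
        exact w_mono hmono hs1.le
      have h2 : s ^ 2 ≤ 4 * t ^ 2 := by nlinarith
      have h3 : (0:ℝ) < s ^ 2 := pow_pos (by linarith) 2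
      exact div_le_div₀ (w_nonneg hnn s) h1 h3 h2
    calc ENNReal.ofReal (ω t / (4 * t))
        = ENNReal.ofReal (ω t / (4 * t ^ 2)) * volume (Ioc t (2 * t)) := by
          rw [Real.volume_Ioc, ← ENNReal.ofReal_mul (div_nonneg (hnn t ht0.le) (by positivity))]
          congr 1
          have : 2 * t - t = t := by ring
          rw [this]
          field_simp
      _ = ∫⁻ _ in Ioc t (2 * t), ENNReal.ofReal (ω t / (4 * t ^ 2)) := by
          rw [setLIntegral_const]
      _ ≤ ∫⁻ s in Ioc t (2 * t), f s := setLIntegral_mono' measurableSet_Ioc hconst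
  -- conclude the limit
  have hof : Tendsto (fun t : ℝ => ENNReal.ofReal (ω t / (4 * t))) atTop (𝓝 0) := by
    refine tendsto_of_tendsto_of_tendsto_of_le_of_le' tendsto_const_nhds htail ?_ ?_
    · exact Eventually.of_forall fun t => zero_le
    · filter_upwards [eventually_ge_atTop (1:ℝ)] with t ht
      exact hlb t ht
  have hreal : Tendsto (fun t : ℝ => ω t / (4 * t)) atTop (𝓝 0) := by
    have h1 : Tendsto (fun t : ℝ => (ENNReal.ofReal (ω t / (4 * t))).toReal) atTop (𝓝 0) := by
      have := (ENNReal.tendsto_toReal (by norm_num : (0:ℝ≥0∞) ≠ ⊤)).comp hof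
      simpa [Function.comp_def] using this
    refine h1.congr' ?_
    filter_upwards [eventually_ge_atTop (1:ℝ)] with t ht
    rw [ENNReal.toReal_ofReal (div_nonneg (hnn t (by linarith)) (by positivity))]
  have hratio : Tendsto (fun t : ℝ => ω t / t) atTop (𝓝 0) := by
    have := hreal.const_mul (4:ℝ)
    rw [mul_zero] at this
    refine this.congr' ?_
    filter_upwards [eventually_gt_atTop (0:ℝ)] with t ht
    field_simp
  rw [OmFive, isLittleO_iff_tendsto']
  · exact hratio
  · filter_upwards [eventually_gt_atTop (0:ℝ)] with t ht h0
    exact absurd h0 (ne_of_gt ht)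

end Stmt3Aux

/-- chain of implications between the growth index and the
conditions (ω_snq), (ω_nq), (ω₅), (ω₂), (α₀). -/

theorem stmt_3 (ω : ℝ → ℝ) (hnn : ∀ t, 0 ≤ t → 0 ≤ ω t)
    (hmono : ∀ s t, 0 ≤ s → s ≤ t → ω s ≤ ω t)
    (hlim : Tendsto ω atTop atTop) :
    (1 < growthIndex ω ↔ OmSnq ω) ∧
    (OmSnq ω → OmNq ω) ∧
    (OmNq ω → OmFive ω) ∧
    (OmFive ω → OmTwo ω) ∧
    (1 < growthIndex ω → AlphaZero ω) := by
  refine ⟨⟨fun h => ?_, fun h => Stmt3Aux.gi_of_snq hnn hmono hlim h⟩,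
    fun h => ?_, fun h => Stmt3Aux.omFive_of_omNq hnn hmono h, fun h => h.isBigO, fun h => ?_⟩
  · obtain ⟨L, Q, t₀, hL, hQ1, hQL, ht₀, hev⟩ := Stmt3Aux.extract hnn hlim h
    exact Stmt3Aux.snq_of_extract hnn hmono hL hQ1 hQL ht₀ hev
  · obtain ⟨C, hC, hs⟩ := h
    have h1 := hs 1 one_pos
    simp only [one_mul] at h1
    exact lt_of_le_of_lt h1 ENNReal.ofReal_lt_top
  · obtain ⟨L, Q, t₀, hL, hQ1, hQL, ht₀, hev⟩ := Stmt3Aux.extract hnn hlim h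
    have hiter := Stmt3Aux.iter (ω := ω) hL.le (by linarith) (by linarith) (fun t ht => (hev t ht).1)
    exact Stmt3Aux.alphaZero_of_extract hnn hmono hiter hL hQ1 hQL ht₀
end

section
/- Let W = (ω^ℓ)_{ℓ>0} be a continuous weight function matrix on ℝ^d and let 1 ≤ p < ∞. Then: (a) there exists ℓ₀ > 0 with sup_{x∈ℝ^d} ω^{ℓ₀}(x) < ∞ if and only if L^p(ℝ^d) ⊆ L^p_{{W}} (equivalently L^p(ℝ^d) = L^p_{{W}} as sets); (b) sup_{x∈ℝ^d} ω^ℓ(x) < ∞ for every ℓ > 0 if and only if L^p(ℝ^d) ⊆ L^p_{(W)} (equivalently L^p(ℝ^d) = L^p_{(W)} as sets). -/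
open MeasureTheory

/-- The `p`-th power of the weighted `L^p`-norm:
`∫_{ℝ^d} |f(x)|^p · e^{ω(x)} dx` (with values in `ℝ≥0∞`). -/
noncomputable def wintP {d : ℕ} (p : ℝ) (ω : EuclideanSpace ℝ (Fin d) → ℝ)
    (f : EuclideanSpace ℝ (Fin d) → ℂ) : ENNReal :=
  ∫⁻ x, ENNReal.ofReal (‖f x‖ ^ p * Real.exp (ω x))

lemma wintP_mono {d : ℕ} (p : ℝ) (hp : 1 ≤ p) {ω₁ ω₂ : EuclideanSpace ℝ (Fin d) → ℝ}
    (h : ∀ x, ω₁ x ≤ ω₂ x) (f : EuclideanSpace ℝ (Fin d) → ℂ) :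
    wintP p ω₁ f ≤ wintP p ω₂ f := by
  refine lintegral_mono fun x => ENNReal.ofReal_le_ofReal ?_
  have h0 : (0:ℝ) ≤ ‖f x‖ ^ p := Real.rpow_nonneg (norm_nonneg _) p
  exact mul_le_mul_of_nonneg_left (Real.exp_le_exp.mpr (h x)) h0

lemma memLp_lintegral_lt_top {d : ℕ} (p : ℝ) (hp : 1 ≤ p)
    {f : EuclideanSpace ℝ (Fin d) → ℂ} (hf : MemLp f (ENNReal.ofReal p) volume) :
    ∫⁻ x, ENNReal.ofReal (‖f x‖ ^ p) < ⊤ := by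
  have hp0 : (0:ℝ) < p := lt_of_lt_of_le one_pos hp
  have h1 : eLpNorm f (ENNReal.ofReal p) volume < ⊤ := hf.2
  rw [eLpNorm_eq_lintegral_rpow_enorm_toReal (ENNReal.ofReal_pos.mpr hp0).ne'
    ENNReal.ofReal_ne_top] at h1
  rw [ENNReal.toReal_ofReal hp0.le] at h1
  simp only [enorm_eq_nnnorm] at h1
  have h2 : ∫⁻ x, (‖f x‖₊ : ENNReal) ^ p < ⊤ := by
    by_contra h
    rw [not_lt, top_le_iff] at h
    rw [h, ENNReal.top_rpow_of_pos (by positivity)] at h1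
    exact absurd h1 (lt_irrefl _)
  have heq : ∀ x, ENNReal.ofReal (‖f x‖ ^ p) = (‖f x‖₊ : ENNReal) ^ p := fun x => by
    rw [← enorm_eq_nnnorm, ← ofReal_norm, ENNReal.ofReal_rpow_of_nonneg (norm_nonneg _) hp0.le]
  simpa only [heq] using h2

lemma wintP_lt_top_of_bounded {d : ℕ} (p : ℝ) (hp : 1 ≤ p)
    {ω : EuclideanSpace ℝ (Fin d) → ℝ} {M : ℝ} (hM : ∀ x, ω x ≤ M)
    {f : EuclideanSpace ℝ (Fin d) → ℂ} (hf : MemLp f (ENNReal.ofReal p) volume) :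
    wintP p ω f < ⊤ := by
  have hle : wintP p ω f ≤ (∫⁻ x, ENNReal.ofReal (‖f x‖ ^ p)) * ENNReal.ofReal (Real.exp M) := by
    rw [← lintegral_mul_const' _ _ ENNReal.ofReal_ne_top]
    refine lintegral_mono fun x => ?_
    rw [← ENNReal.ofReal_mul (Real.rpow_nonneg (norm_nonneg _) p)]
    exact ENNReal.ofReal_le_ofReal
      (mul_le_mul_of_nonneg_left (Real.exp_le_exp.mpr (hM x))
        (Real.rpow_nonneg (norm_nonneg _) p))
  exact lt_of_le_of_lt hle
    (ENNReal.mul_lt_top (memLp_lintegral_lt_top p hp hf) ENNReal.ofReal_lt_top)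

lemma escape_lemma {d : ℕ} (ω : EuclideanSpace ℝ (Fin d) → ℝ) (hc : Continuous ω)
    (hu : ∀ M : ℝ, ∃ x, M < ω x) (R t : ℝ) :
    ∃ x : EuclideanSpace ℝ (Fin d), R < ‖x‖ ∧ t < ω x := by
  obtain ⟨M₀, hM₀⟩ := (isCompact_closedBall (0 : EuclideanSpace ℝ (Fin d)) R).bddAbove_image
    hc.continuousOn
  obtain ⟨x, hx⟩ := hu (max M₀ t)
  refine ⟨x, ?_, lt_of_le_of_lt (le_max_right _ _) hx⟩
  by_contra hxR
  push_neg at hxR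
  have hmem : x ∈ Metric.closedBall (0 : EuclideanSpace ℝ (Fin d)) R := by
    simpa [Metric.mem_closedBall, dist_zero_right] using hxR
  have : ω x ≤ M₀ := hM₀ ⟨x, hmem, rfl⟩
  exact absurd hx (not_lt.mpr (le_trans this (le_max_left _ _)))

/-- Key construction: if all the weights in a decreasing sequence are unbounded,
there is an `L^p` function whose weighted integral is infinite for every weight. -/
lemma key_lemma {d : ℕ} (p : ℝ) (hp : 1 ≤ p) (ω : ℕ → EuclideanSpace ℝ (Fin d) → ℝ)
    (hcont : ∀ k, Continuous (ω k))
    (hmono : ∀ m k : ℕ, m ≤ k → ∀ x, ω k x ≤ ω m x)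
    (hunb : ∀ k, ∀ M : ℝ, ∃ x, M < ω k x) :
    ∃ f : EuclideanSpace ℝ (Fin d) → ℂ,
      MemLp f (ENNReal.ofReal p) volume ∧ ∀ m : ℕ, wintP p (ω m) f = ⊤ := by
  have hp0 : (0:ℝ) < p := lt_of_lt_of_le one_pos hp
  set s : ℕ → ℝ := fun k => (k : ℝ) + (k : ℝ) * Real.log 2 with hs
  have hesc : ∀ k (R : ℝ), ∃ x : EuclideanSpace ℝ (Fin d), R < ‖x‖ ∧ s k < ω k x :=
    fun k R => escape_lemma (ω k) (hcont k) (hunb k) R (s k)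
  -- the centers
  set X : ℕ → EuclideanSpace ℝ (Fin d) := fun k =>
    Nat.rec (hesc 0 0).choose (fun n ih => (hesc (n + 1) (‖ih‖ + 2)).choose) k with hX
  have hX1 : ∀ k, s k < ω k (X k) := by
    intro k
    cases k with
    | zero => exact (hesc 0 0).choose_spec.2
    | succ n => exact (hesc (n + 1) (‖X n‖ + 2)).choose_spec.2
  have hX2 : ∀ k, ‖X k‖ + 2 < ‖X (k + 1)‖ :=
    fun k => (hesc (k + 1) (‖X k‖ + 2)).choose_spec.1
  have hX3 : ∀ j k : ℕ, j < k → ‖X j‖ + 2 < ‖X k‖ := by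
    intro j k hjk
    induction k with
    | zero => omega
    | succ n ih =>
      rcases Nat.lt_succ_iff_lt_or_eq.mp hjk with h | h
      · have h1 := ih h
        have h2 := hX2 n
        linarith
      · subst h; exact hX2 j
  -- the radii
  have hr : ∀ k, ∃ r : ℝ, 0 < r ∧ r ≤ 1 ∧
      ∀ y ∈ Metric.closedBall (X k) r, s k < ω k y := by
    intro k
    have hopen : IsOpen {y | s k < ω k y} := isOpen_lt continuous_const (hcont k)
    obtain ⟨ε, hε, hball⟩ := Metric.isOpen_iff.mp hopen (X k) (hX1 k)
    refine ⟨min (ε / 2) 1, by positivity, min_le_right _ _, fun y hy => hball ?_⟩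
    have h1 : dist y (X k) ≤ min (ε / 2) 1 := Metric.mem_closedBall.mp hy
    exact Metric.mem_ball.mpr (lt_of_le_of_lt (le_trans h1 (min_le_left _ _)) (half_lt_self hε))
  choose r hr0 hr1 hrball using hr
  set B : ℕ → Set (EuclideanSpace ℝ (Fin d)) := fun k => Metric.closedBall (X k) (r k) with hB
  have hBmeas : ∀ k, MeasurableSet (B k) := fun k => measurableSet_closedBall
  -- disjointness
  have hsep : ∀ j k : ℕ, j < k → ∀ x, x ∈ B j → x ∉ B k := by
    intro j k hjk x hxj hxk
    have h1 : dist x (X j) ≤ 1 := le_trans (Metric.mem_closedBall.mp hxj) (hr1 j)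
    have h2 : dist x (X k) ≤ 1 := le_trans (Metric.mem_closedBall.mp hxk) (hr1 k)
    have h3 : dist (X j) (X k) ≤ 2 := by
      have := dist_triangle (X j) x (X k)
      rw [dist_comm (X j) x] at this
      linarith
    have h4 : ‖X k‖ - ‖X j‖ ≤ dist (X j) (X k) := by
      rw [dist_comm, dist_eq_norm]
      exact le_trans (le_abs_self _) (abs_norm_sub_norm_le (X k) (X j))
    have := hX3 j k hjk
    linarith
  have hBdisj : ∀ j k : ℕ, j ≠ k → ∀ x, x ∈ B j → x ∉ B k := by
    intro j k hjk x hxj hxk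
    rcases lt_or_gt_of_ne hjk with h | h
    · exact hsep j k h x hxj hxk
    · exact hsep k j h x hxk hxj
  -- volumes
  have hvolpos : ∀ k, 0 < volume (B k) := fun k => Metric.measure_closedBall_pos volume (X k) (hr0 k)
  have hvollt : ∀ k, volume (B k) < ⊤ := fun k => measure_closedBall_lt_top
  set V : ℕ → ℝ := fun k => (volume (B k)).toReal with hV
  have hV0 : ∀ k, 0 < V k := fun k => ENNReal.toReal_pos (hvolpos k).ne' (hvollt k).ne
  have hvol : ∀ k, volume (B k) = ENNReal.ofReal (V k) :=
    fun k => (ENNReal.ofReal_toReal (hvollt k).ne).symm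
  -- the coefficients
  set c : ℕ → ℝ := fun k => ((1 / 2 : ℝ) ^ k / V k) ^ (1 / p) with hc
  have hc0 : ∀ k, 0 ≤ c k := fun k => Real.rpow_nonneg (by positivity) _
  have hcp : ∀ k, c k ^ p = (1 / 2 : ℝ) ^ k / V k := by
    intro k
    show (((1 / 2 : ℝ) ^ k / V k) ^ (1 / p)) ^ p = (1 / 2 : ℝ) ^ k / V k
    rw [← Real.rpow_mul (by positivity), one_div_mul_cancel hp0.ne', Real.rpow_one]
  -- the function
  set F : EuclideanSpace ℝ (Fin d) → ENNReal := fun x =>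
    ∑' k, (B k).indicator (fun _ => ENNReal.ofReal (c k)) x with hF
  have hFmeas : Measurable F :=
    Measurable.ennreal_tsum fun k => measurable_const.indicator (hBmeas k)
  set f : EuclideanSpace ℝ (Fin d) → ℂ := fun x => ((F x).toReal : ℂ) with hf
  have hfmeas : Measurable f := Complex.measurable_ofReal.comp hFmeas.ennreal_toReal
  have hFmem : ∀ k x, x ∈ B k → F x = ENNReal.ofReal (c k) := by
    intro k x hx
    show (∑' j, (B j).indicator (fun _ => ENNReal.ofReal (c j)) x) = _
    rw [tsum_eq_single k (fun j hj =>
      Set.indicator_of_notMem (fun hxj => hBdisj j k hj x hxj hx) _)]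
    exact Set.indicator_of_mem hx _
  have hFnot : ∀ x, (∀ k, x ∉ B k) → F x = 0 := by
    intro x hx
    show (∑' j, (B j).indicator (fun _ => ENNReal.ofReal (c j)) x) = 0
    simp only [Set.indicator_of_notMem (hx _)]
    exact tsum_zero
  have hfval : ∀ k x, x ∈ B k → ‖f x‖ = c k := by
    intro k x hx
    rw [hf]
    simp only [Complex.norm_real, hFmem k x hx, ENNReal.toReal_ofReal (hc0 k)]
    exact abs_of_nonneg (hc0 k)
  have hfzero : ∀ x, (∀ k, x ∉ B k) → f x = 0 := by
    intro x hx
    rw [hf]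
    simp [hFnot x hx]
  -- the L^p estimate
  have hint : ∫⁻ x, (‖f x‖₊ : ENNReal) ^ p < ⊤ := by
    have hpt : ∀ x, (‖f x‖₊ : ENNReal) ^ p =
        ∑' k, (B k).indicator (fun _ => ENNReal.ofReal (c k ^ p)) x := by
      intro x
      by_cases hx : ∃ k, x ∈ B k
      · obtain ⟨k, hk⟩ := hx
        rw [tsum_eq_single k (fun j hj =>
          Set.indicator_of_notMem (fun hxj => hBdisj j k hj x hxj hk) _),
          Set.indicator_of_mem hk]
        rw [← enorm_eq_nnnorm, ← ofReal_norm, hfval k x hk,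
          ENNReal.ofReal_rpow_of_nonneg (hc0 k) hp0.le]
      · push_neg at hx
        simp only [Set.indicator_of_notMem (hx _), tsum_zero]
        rw [hfzero x hx]
        simp [ENNReal.zero_rpow_of_pos hp0]
    calc ∫⁻ x, (‖f x‖₊ : ENNReal) ^ p
        = ∫⁻ x, ∑' k, (B k).indicator (fun _ => ENNReal.ofReal (c k ^ p)) x := by
          simp only [hpt]
      _ = ∑' k, ∫⁻ x, (B k).indicator (fun _ => ENNReal.ofReal (c k ^ p)) x :=
          lintegral_tsum fun k => (measurable_const.indicator (hBmeas k)).aemeasurable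
      _ = ∑' k, ENNReal.ofReal (c k ^ p) * volume (B k) := by
          refine tsum_congr fun k => ?_
          rw [lintegral_indicator (hBmeas k), setLIntegral_const]
      _ = ∑' k, ENNReal.ofReal ((1 / 2 : ℝ) ^ k) := by
          refine tsum_congr fun k => ?_
          rw [hcp k, hvol k, ← ENNReal.ofReal_mul (by positivity),
            div_mul_cancel₀ _ (hV0 k).ne']
      _ = ENNReal.ofReal (∑' k, (1 / 2 : ℝ) ^ k) :=
          (ENNReal.ofReal_tsum_of_nonneg (fun k => by positivity) summable_geometric_two).symm
      _ < ⊤ := ENNReal.ofReal_lt_top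
  have hmem : MemLp f (ENNReal.ofReal p) volume := by
    refine ⟨hfmeas.aestronglyMeasurable, ?_⟩
    rw [eLpNorm_eq_lintegral_rpow_enorm_toReal (ENNReal.ofReal_pos.mpr hp0).ne'
      ENNReal.ofReal_ne_top, ENNReal.toReal_ofReal hp0.le]
    exact ENNReal.rpow_lt_top_of_nonneg (by positivity) hint.ne
  refine ⟨f, hmem, fun m => ?_⟩
  -- the weighted integral is infinite
  have hk : ∀ k : ℕ, m ≤ k → ENNReal.ofReal (Real.exp k) ≤ wintP p (ω m) f := by
    intro k hmk
    have hstep1 : ∫⁻ x in B k, ENNReal.ofReal (c k ^ p * Real.exp (s k)) ≤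
        ∫⁻ x in B k, ENNReal.ofReal (‖f x‖ ^ p * Real.exp (ω m x)) := by
      refine setLIntegral_mono' (hBmeas k) fun x hx => ?_
      refine ENNReal.ofReal_le_ofReal ?_
      rw [hfval k x hx]
      have h2 : Real.exp (s k) ≤ Real.exp (ω m x) :=
        Real.exp_le_exp.mpr (le_trans (hrball k x hx).le (hmono m k hmk x))
      exact mul_le_mul_of_nonneg_left h2 (Real.rpow_nonneg (hc0 k) p)
    have hstep2 : (∫⁻ _x in B k, ENNReal.ofReal (c k ^ p * Real.exp (s k))) =
        ENNReal.ofReal (c k ^ p * Real.exp (s k)) * volume (B k) := setLIntegral_const _ _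
    have hval : ENNReal.ofReal (c k ^ p * Real.exp (s k)) * volume (B k) =
        ENNReal.ofReal (Real.exp k) := by
      rw [hcp k, hvol k, ← ENNReal.ofReal_mul (by positivity)]
      congr 1
      have hes : Real.exp (s k) = Real.exp k * 2 ^ k := by
        show Real.exp ((k : ℝ) + (k : ℝ) * Real.log 2) = _
        rw [Real.exp_add, Real.exp_nat_mul, Real.exp_log two_pos]
      rw [hes]
      have h2k : (1 / 2 : ℝ) ^ k * 2 ^ k = 1 := by
        rw [← mul_pow]; norm_num
      rw [div_mul_eq_mul_div, div_mul_eq_mul_div, div_eq_iff (hV0 k).ne']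
      linear_combination (Real.exp (k : ℝ) * V k) * h2k
    calc ENNReal.ofReal (Real.exp k)
        = ENNReal.ofReal (c k ^ p * Real.exp (s k)) * volume (B k) := hval.symm
      _ = ∫⁻ _x in B k, ENNReal.ofReal (c k ^ p * Real.exp (s k)) := hstep2.symm
      _ ≤ ∫⁻ x in B k, ENNReal.ofReal (‖f x‖ ^ p * Real.exp (ω m x)) := hstep1
      _ ≤ wintP p (ω m) f := setLIntegral_le_lintegral _ _
  by_contra htop
  obtain ⟨n, hn⟩ := ENNReal.exists_nat_gt htop
  have h1 := hk (m + n) (Nat.le_add_right m n)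
  have h2 : (n : ENNReal) ≤ ENNReal.ofReal (Real.exp ((m + n : ℕ) : ℝ)) := by
    rw [← ENNReal.ofReal_natCast n]
    refine ENNReal.ofReal_le_ofReal ?_
    have := Real.add_one_le_exp ((m + n : ℕ) : ℝ)
    push_cast at this ⊢
    linarith
  exact absurd (le_trans h2 h1) (not_le.mpr hn)

/-- for a continuous weight function matrix `W` on `ℝ^d` and
`1 ≤ p < ∞`: (a) some `ω^{ℓ₀}` is bounded iff `L^p ⊆ L^p_{{W}}`;
(b) every `ω^ℓ` is bounded iff `L^p ⊆ L^p_{(W)}`. -/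
theorem stmt_5 (d : ℕ) (hd : 0 < d) (p : ℝ) (hp : 1 ≤ p)
    (W : ℝ → EuclideanSpace ℝ (Fin d) → ℝ)
    (hW0 : ∀ ℓ > (0:ℝ), ∀ x, 0 ≤ W ℓ x)
    (hWmono : ∀ ℓ₁ ℓ₂ : ℝ, 0 < ℓ₁ → ℓ₁ ≤ ℓ₂ → ∀ x, W ℓ₁ x ≤ W ℓ₂ x)
    (hWcont : ∀ ℓ > (0:ℝ), Continuous (W ℓ)) :
    ((∃ ℓ₀ > (0:ℝ), ∃ M : ℝ, ∀ x, W ℓ₀ x ≤ M) ↔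
      (∀ f : EuclideanSpace ℝ (Fin d) → ℂ, MemLp f (ENNReal.ofReal p) volume →
        ∃ ℓ > (0:ℝ), wintP p (W ℓ) f < ⊤)) ∧
    ((∀ ℓ > (0:ℝ), ∃ M : ℝ, ∀ x, W ℓ x ≤ M) ↔
      (∀ f : EuclideanSpace ℝ (Fin d) → ℂ, MemLp f (ENNReal.ofReal p) volume →
        ∀ ℓ > (0:ℝ), wintP p (W ℓ) f < ⊤)) := by
  constructor
  · constructor
    · rintro ⟨ℓ₀, hℓ₀, M, hM⟩ f hf
      exact ⟨ℓ₀, hℓ₀, wintP_lt_top_of_bounded p hp hM hf⟩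
    · intro hR
      by_contra hno
      push_neg at hno
      -- every W ℓ is unbounded; build the sequence ω k = W (1/(k+1))
      set ω : ℕ → EuclideanSpace ℝ (Fin d) → ℝ := fun k => W (1 / ((k : ℝ) + 1)) with hω
      have hpos : ∀ k : ℕ, (0:ℝ) < 1 / ((k : ℝ) + 1) := fun k => by positivity
      have hcont : ∀ k, Continuous (ω k) := fun k => hWcont _ (hpos k)
      have hmono : ∀ m k : ℕ, m ≤ k → ∀ x, ω k x ≤ ω m x := by
        intro m k hmk x
        refine hWmono _ _ (hpos k) ?_ x
        have h1 : ((m : ℝ) + 1) ≤ (k : ℝ) + 1 := by exact_mod_cast by omega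
        exact one_div_le_one_div_of_le (by positivity) h1
      have hunb : ∀ k, ∀ M : ℝ, ∃ x, M < ω k x := by
        intro k M
        obtain ⟨x, hx⟩ := hno _ (hpos k) M
        exact ⟨x, hx⟩
      obtain ⟨f, hfmem, hftop⟩ := key_lemma p hp ω hcont hmono hunb
      obtain ⟨ℓ, hℓ, hfin⟩ := hR f hfmem
      obtain ⟨n, hn⟩ := exists_nat_gt (1 / ℓ)
      have hle : 1 / ((n : ℝ) + 1) ≤ ℓ := by
        have hn1 : 1 / ℓ < (n : ℝ) + 1 := lt_of_lt_of_le hn (by linarith)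
        rw [div_le_iff₀ (by positivity)]
        rw [div_lt_iff₀ hℓ] at hn1
        linarith
      have h1 : wintP p (ω n) f ≤ wintP p (W ℓ) f :=
        wintP_mono p hp (fun x => hWmono _ _ (hpos n) hle x) f
      rw [hftop n] at h1
      exact absurd (lt_of_le_of_lt (top_le_iff.mp h1 ▸ le_refl _) hfin) (lt_irrefl _)
  · constructor
    · rintro hB f hf ℓ hℓ
      obtain ⟨M, hM⟩ := hB ℓ hℓ
      exact wintP_lt_top_of_bounded p hp hM hf
    · intro hR ℓ hℓ
      by_contra hno
      push_neg at hno
      have hunb : ∀ k : ℕ, ∀ M : ℝ, ∃ x, M < W ℓ x := fun _ M => hno M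
      obtain ⟨f, hfmem, hftop⟩ := key_lemma p hp (fun _ => W ℓ)
        (fun _ => hWcont ℓ hℓ) (fun _ _ _ x => le_refl _) hunb
      have := hR f hfmem ℓ hℓ
      rw [hftop 0] at this
      exact absurd this (lt_irrefl _)
end

section
/- Let S = (σ^ℓ)_{ℓ>0} and T = (τ^ℓ)_{ℓ>0} be continuous, non-decreasing (hence radial) weight function matrices on ℝ^d. Assume S satisfies the logarithmic growth-difference condition, and assume that S or T satisfies the step condition. Let 1 ≤ p < ∞. If L^p_{{S}} ⊆ L^p_{{T}} as sets, then S{⪯}T. -/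
open MeasureTheory

/-- Membership in the Roumieu space `L^p_{{W}}`. -/
def MemPR {d : ℕ} (p : ℝ) (W : ℝ → EuclideanSpace ℝ (Fin d) → ℝ)
    (f : EuclideanSpace ℝ (Fin d) → ℂ) : Prop :=
  MemLp f (ENNReal.ofReal p) volume ∧ ∃ ℓ > (0:ℝ), wintP p (W ℓ) f < ⊤

/-- The logarithmic growth-difference condition for a matrix `W`. -/
def LogDiff {d : ℕ} (W : ℝ → EuclideanSpace ℝ (Fin d) → ℝ) : Prop :=
  ∃ a > (1:ℝ), ∀ ℓ > (0:ℝ), ∃ ℓ' > (0:ℝ), ∃ b : ℝ,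
    ∀ x, a * Real.log (1 + ‖x‖) + b ≤ W ℓ x - W ℓ' x

/-- The step condition `ω^{ℓ₁}(n+1) ≤ ω^ℓ(n) + C` (on radial values). -/
def StepCond {d : ℕ} (W : ℝ → EuclideanSpace ℝ (Fin d) → ℝ) : Prop :=
  ∀ ℓ > (0:ℝ), ∃ ℓ₁ > (0:ℝ), ∃ C ≥ (1:ℝ), ∀ n : ℕ,
    ∀ x y : EuclideanSpace ℝ (Fin d), ‖x‖ = (n:ℝ) → ‖y‖ = (n:ℝ) + 1 →
      W ℓ₁ y ≤ W ℓ x + C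

open ENNReal in
lemma master {d : ℕ} (hd : 0 < d) (p : ℝ) (hp : 1 ≤ p)
    (τ : ℝ → EuclideanSpace ℝ (Fin d) → ℝ)
    (hτmeas : ∀ ℓ > (0:ℝ), Measurable (τ ℓ))
    (ω : EuclideanSpace ℝ (Fin d) → ℝ) (hω0 : ∀ y, 0 ≤ ω y)
    (r s : ℕ → ℝ) (B : ℕ → ℝ)
    (hr0 : ∀ k, 0 ≤ r k) (hrs : ∀ k, r k < s k)
    (hsep : ∀ k j, k < j → s k < r j)
    (hB : ∀ k, ∀ y : EuclideanSpace ℝ (Fin d), r k ≤ ‖y‖ → ‖y‖ ≤ s k → ω y ≤ B k)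
    (hτlow : ∀ ℓ₀ > (0:ℝ), ∃ C' : ℝ, ∃ K : ℕ, ∀ k, K ≤ k → ∀ y : EuclideanSpace ℝ (Fin d),
        r k ≤ ‖y‖ → ‖y‖ ≤ s k → B k + (k:ℝ) ≤ τ ℓ₀ y + C')
    (hincl : ∀ f, MemLp f (ENNReal.ofReal p) volume → wintP p ω f < ⊤ →
        ∃ ℓ₀ > (0:ℝ), wintP p (τ ℓ₀) f < ⊤) : False := by
  have hp0 : (0:ℝ) < p := lt_of_lt_of_le one_pos hp
  -- a unit vector
  set e : EuclideanSpace ℝ (Fin d) := EuclideanSpace.single (⟨0, hd⟩ : Fin d) (1:ℝ) with he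
  have hnorme : ‖e‖ = 1 := by rw [he, EuclideanSpace.norm_single]; norm_num
  have hpt : ∀ t : ℝ, 0 ≤ t → ‖t • e‖ = t := by
    intro t ht; rw [norm_smul, hnorme, mul_one, Real.norm_eq_abs, abs_of_nonneg ht]
  -- the annuli
  set E : ℕ → Set (EuclideanSpace ℝ (Fin d)) :=
    fun k => {y | r k ≤ ‖y‖ ∧ ‖y‖ ≤ s k} with hEdef
  have hEmeas : ∀ k, MeasurableSet (E k) := by
    intro k
    have : E k = (fun y : EuclideanSpace ℝ (Fin d) => ‖y‖) ⁻¹' (Set.Icc (r k) (s k)) := by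
      ext y; simp [hEdef, Set.mem_Icc]
    rw [this]
    exact (continuous_norm.measurable) measurableSet_Icc
  have hdisj : ∀ k j, k ≠ j → ∀ y, y ∈ E k → y ∉ E j := by
    intro k j hkj y hyk hyj
    rcases lt_or_gt_of_ne hkj with h | h
    · linarith [hyk.2, hyj.1, hsep k j h]
    · linarith [hyj.2, hyk.1, hsep j k h]
  have hvolpos : ∀ k, 0 < volume (E k) := by
    intro k
    have hρ : 0 < (s k - r k)/2 := by linarith [hrs k]
    have hz : 0 ≤ (r k + s k)/2 := by linarith [hr0 k, (hrs k).le]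
    have hsub : Metric.ball (((r k + s k)/2) • e) ((s k - r k)/2) ⊆ E k := by
      intro y hy
      rw [Metric.mem_ball, dist_eq_norm] at hy
      have hznorm : ‖((r k + s k)/2) • e‖ = (r k + s k)/2 := hpt _ hz
      constructor
      · have h1 : ‖((r k + s k)/2) • e‖ - ‖y‖ ≤ ‖y - ((r k + s k)/2) • e‖ := by
          have := norm_sub_norm_le (((r k + s k)/2) • e) y
          rw [← norm_neg (((r k + s k)/2) • e - y)] at this
          simpa [neg_sub] using this
        rw [hznorm] at h1; linarith
      · have h2 : ‖y‖ - ‖((r k + s k)/2) • e‖ ≤ ‖y - ((r k + s k)/2) • e‖ :=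
          norm_sub_norm_le _ _
        rw [hznorm] at h2; linarith
    calc (0:ENNReal) < volume (Metric.ball (((r k + s k)/2) • e) ((s k - r k)/2)) :=
          Metric.measure_ball_pos volume _ hρ
      _ ≤ volume (E k) := measure_mono hsub
  have hvolfin : ∀ k, volume (E k) < ⊤ := by
    intro k
    have hsub : E k ⊆ Metric.closedBall 0 (s k) := by
      intro y hy; rw [Metric.mem_closedBall, dist_zero_right]; exact hy.2
    exact lt_of_le_of_lt (measure_mono hsub) (measure_closedBall_lt_top)
  set V : ℕ → ℝ := fun k => (volume (E k)).toReal with hVdef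
  have hV : ∀ k, 0 < V k := fun k => ENNReal.toReal_pos (hvolpos k).ne' (hvolfin k).ne
  set c : ℕ → ℝ := fun k => (Real.exp (-(B k)) * (2:ℝ)⁻¹ ^ k / V k) ^ (1/p) with hcdef
  have hc : ∀ k, 0 < c k := by
    intro k
    apply Real.rpow_pos_of_pos
    have := hV k; positivity
  have hckp : ∀ k, c k ^ p = Real.exp (-(B k)) * (2:ℝ)⁻¹ ^ k / V k := by
    intro k
    rw [hcdef]
    have hbase : (0:ℝ) ≤ Real.exp (-(B k)) * (2:ℝ)⁻¹ ^ k / V k := by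
      have := hV k; positivity
    rw [← Real.rpow_mul hbase, one_div, inv_mul_cancel₀ hp0.ne', Real.rpow_one]
  -- the function G, g, f
  set G : EuclideanSpace ℝ (Fin d) → ENNReal :=
    fun y => ∑' k, (E k).indicator (fun _ => ENNReal.ofReal (c k)) y with hGdef
  have hGmeas : Measurable G :=
    Measurable.ennreal_tsum fun k => (measurable_const.indicator (hEmeas k))
  set f : EuclideanSpace ℝ (Fin d) → ℂ := fun y => ((G y).toReal : ℂ) with hfdef
  have hfmeas : Measurable f := Complex.measurable_ofReal.comp hGmeas.ennreal_toReal
  have hGE : ∀ k y, y ∈ E k → G y = ENNReal.ofReal (c k) := by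
    intro k y hy
    simp only [hGdef]
    rw [tsum_eq_single k]
    · rw [Set.indicator_of_mem hy]
    · intro j hj
      rw [Set.indicator_of_notMem (hdisj k j (Ne.symm hj) y hy)]
  have hG0 : ∀ y, (∀ k, y ∉ E k) → G y = 0 := by
    intro y hy
    simp only [hGdef]
    have : ∀ k, (E k).indicator (fun _ => ENNReal.ofReal (c k)) y = 0 := by
      intro k; rw [Set.indicator_of_notMem (hy k)]
    simp [this]
  have hfE : ∀ k y, y ∈ E k → ‖f y‖ = c k := by
    intro k y hy
    have hfy : f y = ((c k : ℝ) : ℂ) := by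
      simp only [hfdef]; rw [hGE k y hy, ENNReal.toReal_ofReal (hc k).le]
    rw [hfy, Complex.norm_real, Real.norm_of_nonneg (hc k).le]
  have hf0 : ∀ y, (∀ k, y ∉ E k) → f y = 0 := by
    intro y hy; simp only [hfdef]; rw [hG0 y hy]; simp
  -- the sigma-side integral is finite
  have hσint : wintP p ω f < ⊤ := by
    have hptw : ∀ y, ENNReal.ofReal (‖f y‖ ^ p * Real.exp (ω y)) ≤
        ∑' k, (E k).indicator (fun _ => ENNReal.ofReal (c k ^ p * Real.exp (B k))) y := by
      intro y
      by_cases hy : ∃ k, y ∈ E k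
      · obtain ⟨k, hk⟩ := hy
        have h1 : ENNReal.ofReal (‖f y‖ ^ p * Real.exp (ω y)) ≤
            (E k).indicator (fun _ => ENNReal.ofReal (c k ^ p * Real.exp (B k))) y := by
          rw [Set.indicator_of_mem hk]
          apply ENNReal.ofReal_le_ofReal
          rw [hfE k y hk]
          exact mul_le_mul_of_nonneg_left (Real.exp_le_exp.2 (hB k y hk.1 hk.2))
            (Real.rpow_nonneg (hc k).le p)
        exact le_trans h1 (ENNReal.le_tsum k)
      · push_neg at hy
        rw [hf0 y hy]
        simp [Real.zero_rpow hp0.ne']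
    have hstep1 : wintP p ω f ≤
        ∑' k, ∫⁻ y, (E k).indicator (fun _ => ENNReal.ofReal (c k ^ p * Real.exp (B k))) y := by
      refine le_trans (lintegral_mono hptw) ?_
      exact le_of_eq (lintegral_tsum fun k => (measurable_const.indicator (hEmeas k)).aemeasurable)
    have hstep2 : ∀ k, (∫⁻ y, (E k).indicator
        (fun _ => ENNReal.ofReal (c k ^ p * Real.exp (B k))) y) = ENNReal.ofReal ((2:ℝ)⁻¹ ^ k) := by
      intro k
      rw [lintegral_indicator_const (hEmeas k)]
      have hval : c k ^ p * Real.exp (B k) = (2:ℝ)⁻¹ ^ k / V k := by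
        rw [hckp k]
        rw [div_mul_eq_mul_div, mul_assoc, mul_comm (((2:ℝ)⁻¹) ^ k), ← mul_assoc,
          ← Real.exp_add, neg_add_cancel, Real.exp_zero, one_mul]
      have hVk : (volume (E k)).toReal = V k := rfl
      rw [hval, ← ENNReal.ofReal_toReal (hvolfin k).ne, hVk, ← ENNReal.ofReal_mul (by positivity),
        div_mul_cancel₀ _ (hV k).ne']
    have hgeom : (∑' k : ℕ, ENNReal.ofReal ((2:ℝ)⁻¹ ^ k)) < ⊤ := by
      have : ∀ k : ℕ, ENNReal.ofReal ((2:ℝ)⁻¹ ^ k) = (2:ENNReal)⁻¹ ^ k := by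
        intro k
        rw [ENNReal.ofReal_pow (by norm_num),
          ENNReal.ofReal_inv_of_pos (by norm_num : (0:ℝ) < 2), ENNReal.ofReal_ofNat]
      simp_rw [this]
      rw [ENNReal.tsum_geometric, ENNReal.one_sub_inv_two]
      simp
    calc wintP p ω f ≤ _ := hstep1
      _ = ∑' k : ℕ, ENNReal.ofReal ((2:ℝ)⁻¹ ^ k) := by simp_rw [hstep2]
      _ < ⊤ := hgeom
  -- f is in L^p
  have hmem : MemLp f (ENNReal.ofReal p) volume := by
    refine ⟨hfmeas.aestronglyMeasurable, ?_⟩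
    have hpne0 : ENNReal.ofReal p ≠ 0 := by
      simp only [ne_eq, ENNReal.ofReal_eq_zero, not_le]; exact hp0
    rw [eLpNorm_eq_lintegral_rpow_enorm_toReal hpne0 ENNReal.ofReal_ne_top,
      ENNReal.toReal_ofReal hp0.le]
    refine ENNReal.rpow_lt_top_of_nonneg (by positivity) ?_
    refine ne_of_lt (lt_of_le_of_lt ?_ hσint)
    refine lintegral_mono fun y => ?_
    have h1 : ‖f y‖ₑ ^ p = ENNReal.ofReal (‖f y‖ ^ p) := by
      rw [← ofReal_norm, ← ENNReal.ofReal_rpow_of_nonneg (norm_nonneg _) hp0.le]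
    rw [h1]
    apply ENNReal.ofReal_le_ofReal
    exact le_mul_of_one_le_right (Real.rpow_nonneg (norm_nonneg _) p) (Real.one_le_exp (hω0 y))
  -- apply the inclusion
  obtain ⟨ℓ₀, hℓ₀, hfin⟩ := hincl f hmem hσint
  obtain ⟨C', K, hlow⟩ := hτlow ℓ₀ hℓ₀
  -- lower bound for the tau-integral on each annulus
  have hbound : ∀ k, K ≤ k →
      ENNReal.ofReal (Real.exp (-C') * (Real.exp 1 / 2) ^ k) ≤ wintP p (τ ℓ₀) f := by
    intro k hk
    have hmeasg : Measurable fun y => ENNReal.ofReal (‖f y‖ ^ p * Real.exp (τ ℓ₀ y)) := by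
      apply ENNReal.measurable_ofReal.comp
      exact ((Real.continuous_rpow_const hp0.le).measurable.comp hfmeas.norm).mul
        (Real.measurable_exp.comp (hτmeas ℓ₀ hℓ₀))
    have hconst : ENNReal.ofReal (c k ^ p * Real.exp (B k + k - C')) * volume (E k) ≤
        ∫⁻ y in E k, ENNReal.ofReal (‖f y‖ ^ p * Real.exp (τ ℓ₀ y)) := by
      rw [← setLIntegral_const (E k)]
      refine setLIntegral_mono hmeasg fun y hy => ?_
      apply ENNReal.ofReal_le_ofReal
      rw [hfE k y hy]
      refine mul_le_mul_of_nonneg_left (Real.exp_le_exp.2 ?_) (Real.rpow_nonneg (hc k).le p)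
      have := hlow k hk y hy.1 hy.2
      linarith
    have h2 : (∫⁻ y in E k, ENNReal.ofReal (‖f y‖ ^ p * Real.exp (τ ℓ₀ y))) ≤
        wintP p (τ ℓ₀) f := setLIntegral_le_lintegral _ _
    refine le_trans (le_of_eq ?_) (le_trans hconst h2)
    have hVk : (volume (E k)).toReal = V k := rfl
    rw [← ENNReal.ofReal_toReal (hvolfin k).ne, hVk,
      ← ENNReal.ofReal_mul (by positivity)]
    congr 1
    rw [hckp k]
    have hexp : Real.exp (B k + (k:ℝ) - C') = Real.exp (B k) * Real.exp (k:ℝ) * Real.exp (-C') := by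
      rw [← Real.exp_add, ← Real.exp_add]; ring_nf
    have hek : Real.exp (k:ℝ) = Real.exp 1 ^ k := by
      rw [← Real.exp_nat_mul]; norm_num
    rw [hexp, hek]
    have hVne : V k ≠ 0 := (hV k).ne'
    have hEB : Real.exp (-B k) * Real.exp (B k) = 1 := by
      rw [← Real.exp_add]; simp
    rw [div_mul_eq_mul_div, div_mul_cancel₀ _ hVne, div_pow]
    rw [show Real.exp (-B k) * 2⁻¹ ^ k * (Real.exp (B k) * Real.exp 1 ^ k * Real.exp (-C'))
        = (Real.exp (-B k) * Real.exp (B k)) * (2⁻¹ ^ k * Real.exp 1 ^ k * Real.exp (-C')) by ring,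
      hEB, one_mul, inv_pow]
    rw [div_eq_mul_inv, mul_comm ((2:ℝ)^k)⁻¹ (Real.exp 1 ^ k)]
    ring
  -- contradiction via growth of (e/2)^k
  have hq : (1:ℝ) < Real.exp 1 / 2 := by
    have := Real.exp_one_gt_d9; norm_num at this ⊢; linarith
  set M := (wintP p (τ ℓ₀) f).toReal with hMdef
  have hM : ∀ k, K ≤ k → Real.exp (-C') * (Real.exp 1 / 2) ^ k ≤ M := by
    intro k hk
    exact (ENNReal.ofReal_le_iff_le_toReal hfin.ne).1 (hbound k hk)
  obtain ⟨k₀, hk₀⟩ := pow_unbounded_of_one_lt (M * Real.exp C') hq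
  have h1 : (Real.exp 1 / 2) ^ k₀ ≤ (Real.exp 1 / 2) ^ (max k₀ K) :=
    pow_le_pow_right₀ hq.le (le_max_left _ _)
  have h2 := hM (max k₀ K) (le_max_right _ _)
  have h3 : Real.exp (-C') * Real.exp C' = 1 := by rw [← Real.exp_add]; simp
  have h4 := mul_le_mul_of_nonneg_right h2 (Real.exp_pos C').le
  rw [mul_comm (Real.exp (-C')) ((Real.exp 1 / 2) ^ (max k₀ K)), mul_assoc, h3, mul_one] at h4
  linarith

theorem stmt_15 (d : ℕ) (hd : 0 < d)
    (σ τ : ℝ → EuclideanSpace ℝ (Fin d) → ℝ)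
    (hσ0 : ∀ ℓ > (0:ℝ), ∀ x, 0 ≤ σ ℓ x) (hτ0 : ∀ ℓ > (0:ℝ), ∀ x, 0 ≤ τ ℓ x)
    (hσm : ∀ ℓ₁ ℓ₂ : ℝ, 0 < ℓ₁ → ℓ₁ ≤ ℓ₂ → ∀ x, σ ℓ₁ x ≤ σ ℓ₂ x)
    (hτm : ∀ ℓ₁ ℓ₂ : ℝ, 0 < ℓ₁ → ℓ₁ ≤ ℓ₂ → ∀ x, τ ℓ₁ x ≤ τ ℓ₂ x)
    (hσcont : ∀ ℓ > (0:ℝ), Continuous (σ ℓ))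
    (hτcont : ∀ ℓ > (0:ℝ), Continuous (τ ℓ))
    (hσrad : ∀ ℓ > (0:ℝ), ∀ x y : EuclideanSpace ℝ (Fin d),
      ‖x‖ ≤ ‖y‖ → σ ℓ x ≤ σ ℓ y)
    (hτrad : ∀ ℓ > (0:ℝ), ∀ x y : EuclideanSpace ℝ (Fin d),
      ‖x‖ ≤ ‖y‖ → τ ℓ x ≤ τ ℓ y)
    (hσlog : LogDiff σ)
    (hstep : StepCond σ ∨ StepCond τ)
    (p : ℝ) (hp : 1 ≤ p)
    (hincl : ∀ f, MemPR p σ f → MemPR p τ f) :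
    ∀ n > (0:ℝ), ∃ ℓ > (0:ℝ), ∃ C ≥ (1:ℝ), ∀ x, τ ℓ x ≤ σ n x + C := by
  intro n hn
  by_contra hcon
  push_neg at hcon
  -- a unit vector
  set e : EuclideanSpace ℝ (Fin d) := EuclideanSpace.single (⟨0, hd⟩ : Fin d) (1:ℝ) with he
  have hnorme : ‖e‖ = 1 := by rw [he, EuclideanSpace.norm_single]; norm_num
  have hpt : ∀ t : ℝ, 0 ≤ t → ‖t • e‖ = t := by
    intro t ht; rw [norm_smul, hnorme, mul_one, Real.norm_eq_abs, abs_of_nonneg ht]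
  -- choose witnesses far out
  have key : ∀ (k : ℕ) (R : ℝ), 0 ≤ R →
      ∃ x, R < ‖x‖ ∧ σ n x + ((k:ℝ)+1) < τ (1/((k:ℝ)+1)) x := by
    intro k R hR
    have hℓ : (0:ℝ) < 1/((k:ℝ)+1) := by positivity
    obtain ⟨x, hx⟩ := hcon (1/((k:ℝ)+1)) hℓ
      (max 1 (max ((k:ℝ)+1) (τ (1/((k:ℝ)+1)) (R • e)))) (le_max_left _ _)
    refine ⟨x, ?_, ?_⟩
    · by_contra hle
      push_neg at hle
      have h1 : τ (1/((k:ℝ)+1)) x ≤ τ (1/((k:ℝ)+1)) (R • e) :=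
        hτrad _ hℓ x (R • e) (by rw [hpt R hR]; exact hle)
      have h2 : τ (1/((k:ℝ)+1)) (R • e) ≤
          max 1 (max ((k:ℝ)+1) (τ (1/((k:ℝ)+1)) (R • e))) :=
        le_trans (le_max_right _ _) (le_max_right _ _)
      have h3 := hσ0 n hn x
      linarith
    · have h4 : (k:ℝ)+1 ≤ max 1 (max ((k:ℝ)+1) (τ (1/((k:ℝ)+1)) (R • e))) :=
        le_trans (le_max_left _ _) (le_max_right _ _)
      linarith
  choose F hF1 hF2 using key
  -- the sequence of far-out points
  let x : ℕ → EuclideanSpace ℝ (Fin d) := fun k =>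
    Nat.rec (F 0 2 (by norm_num)) (fun k xk => F (k+1) (‖xk‖ + 4) (by positivity)) k
  have hx0 : (2:ℝ) < ‖x 0‖ := hF1 0 2 (by norm_num)
  have hxs : ∀ k, ‖x k‖ + 4 < ‖x (k+1)‖ := fun k => hF1 (k+1) (‖x k‖ + 4) (by positivity)
  have hxg : ∀ k, σ n (x k) + ((k:ℝ)+1) < τ (1/((k:ℝ)+1)) (x k) := by
    intro k
    cases k with
    | zero => exact hF2 0 2 (by norm_num)
    | succ k => exact hF2 (k+1) (‖x k‖+4) (by positivity)
  have hx2 : ∀ k, 2 < ‖x k‖ := by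
    intro k
    cases k with
    | zero => exact hx0
    | succ k =>
      have h1 := hxs k
      have h2 := norm_nonneg (x k)
      linarith
  have hmono : ∀ k j, k < j → ‖x k‖ + 4 ≤ ‖x j‖ := by
    intro k j hkj
    induction j with
    | zero => omega
    | succ j ih =>
      rcases Nat.lt_succ_iff_lt_or_eq.1 hkj with h | h
      · have h1 := hxs j
        have h2 := ih h
        linarith
      · subst h; exact (hxs k).le
  -- small parameters eventually dominate
  have hfrac : ∀ (ℓ:ℝ), 0 < ℓ → ∀ k : ℕ, ⌈1/ℓ⌉₊ ≤ k → 1/((k:ℝ)+1) ≤ ℓ := by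
    intro ℓ hℓ k hk
    have h1 : 1/ℓ ≤ (k:ℝ) := le_trans (Nat.le_ceil _) (Nat.cast_le.2 hk)
    rw [div_le_iff₀ hℓ] at h1
    rw [div_le_iff₀ (by positivity : (0:ℝ) < (k:ℝ)+1)]
    nlinarith
  rcases hstep with hstepσ | hstepτ
  · -- Case A : σ satisfies the step condition
    obtain ⟨n₁, hn₁, C₀, hC₀, hstepA⟩ := hstepσ n hn
    refine master hd p hp τ (fun ℓ hℓ => (hτcont ℓ hℓ).measurable) (σ n₁) (hσ0 n₁ hn₁)
      (fun k => ‖x k‖) (fun k => (⌊‖x k‖⌋₊ : ℝ) + 1) (fun k => σ n (x k) + C₀)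
      (fun k => norm_nonneg _) (fun k => Nat.lt_floor_add_one _) ?_ ?_ ?_ ?_
    · intro k j hkj
      have h1 : (⌊‖x k‖⌋₊ : ℝ) ≤ ‖x k‖ := Nat.floor_le (norm_nonneg _)
      have h2 := hmono k j hkj
      linarith
    · intro k y h1 h2
      have hfl : (⌊‖x k‖⌋₊ : ℝ) ≤ ‖x k‖ := Nat.floor_le (norm_nonneg _)
      have hflnn : (0:ℝ) ≤ (⌊‖x k‖⌋₊ : ℝ) := Nat.cast_nonneg _
      have hs1 : σ n₁ y ≤ σ n₁ (((⌊‖x k‖⌋₊:ℝ)+1) • e) :=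
        hσrad n₁ hn₁ y _ (by rw [hpt _ (by positivity)]; exact h2)
      have hs2 : σ n₁ (((⌊‖x k‖⌋₊:ℝ)+1) • e) ≤ σ n ((⌊‖x k‖⌋₊:ℝ) • e) + C₀ :=
        hstepA ⌊‖x k‖⌋₊ _ _ (hpt _ hflnn) (hpt _ (by positivity))
      have hs3 : σ n ((⌊‖x k‖⌋₊:ℝ) • e) ≤ σ n (x k) :=
        hσrad n hn _ _ (by rw [hpt _ hflnn]; exact hfl)
      linarith
    · intro ℓ₀ hℓ₀
      refine ⟨C₀, ⌈1/ℓ₀⌉₊, fun k hk y hy1 _ => ?_⟩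
      have hkℓ : 1/((k:ℝ)+1) ≤ ℓ₀ := hfrac ℓ₀ hℓ₀ k hk
      have hkpos : (0:ℝ) < 1/((k:ℝ)+1) := by positivity
      have h1 : τ (1/((k:ℝ)+1)) y ≤ τ ℓ₀ y := hτm _ _ hkpos hkℓ y
      have h2 : τ (1/((k:ℝ)+1)) (x k) ≤ τ (1/((k:ℝ)+1)) y := hτrad _ hkpos _ _ hy1
      have h3 := hxg k
      linarith
    · intro f hmem hfin
      obtain ⟨hm2, ℓ₀, hℓ₀, hfin'⟩ := hincl f ⟨hmem, n₁, hn₁, hfin⟩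
      exact ⟨ℓ₀, hℓ₀, hfin'⟩
  · -- Case B : τ satisfies the step condition
    refine master hd p hp τ (fun ℓ hℓ => (hτcont ℓ hℓ).measurable) (σ n) (hσ0 n hn)
      (fun k => (⌈‖x k‖⌉₊ : ℝ) - 1) (fun k => ‖x k‖) (fun k => σ n (x k))
      ?_ ?_ ?_ ?_ ?_ ?_
    · intro k
      have h1 : ‖x k‖ ≤ (⌈‖x k‖⌉₊:ℝ) := Nat.le_ceil _
      have h2 := hx2 k
      linarith
    · intro k
      have h1 : (⌈‖x k‖⌉₊:ℝ) < ‖x k‖ + 1 := Nat.ceil_lt_add_one (norm_nonneg _)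
      linarith
    · intro k j hkj
      have h1 : ‖x j‖ ≤ (⌈‖x j‖⌉₊:ℝ) := Nat.le_ceil _
      have h2 := hmono k j hkj
      linarith
    · intro k y _ h2
      exact hσrad n hn y (x k) h2
    · intro ℓ₀ hℓ₀
      obtain ⟨ℓ₁, hℓ₁, C₁, hC₁, hstepB⟩ := hstepτ ℓ₀ hℓ₀
      refine ⟨C₁, ⌈1/ℓ₁⌉₊, fun k hk y hy1 _ => ?_⟩
      have hkℓ : 1/((k:ℝ)+1) ≤ ℓ₁ := hfrac ℓ₁ hℓ₁ k hk
      have hkpos : (0:ℝ) < 1/((k:ℝ)+1) := by positivity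
      have hceil : ‖x k‖ ≤ (⌈‖x k‖⌉₊:ℝ) := Nat.le_ceil _
      have hge1 : 1 ≤ ⌈‖x k‖⌉₊ := by
        by_contra hcon1
        push_neg at hcon1
        have h0 : ⌈‖x k‖⌉₊ = 0 := by omega
        rw [h0] at hceil
        have h2k := hx2 k
        simp at hceil
        rw [hceil, norm_zero] at h2k
        linarith
      have hrnn : (0:ℝ) ≤ (⌈‖x k‖⌉₊:ℝ) - 1 := by
        have : (1:ℝ) ≤ (⌈‖x k‖⌉₊:ℝ) := by exact_mod_cast hge1
        linarith
      have hcast : ((⌈‖x k‖⌉₊ - 1 : ℕ):ℝ) = (⌈‖x k‖⌉₊:ℝ) - 1 := by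
        rw [Nat.cast_sub hge1]; norm_num
      have hstep1 : τ ℓ₁ ((((⌈‖x k‖⌉₊:ℝ) - 1) + 1) • e) ≤
          τ ℓ₀ (((⌈‖x k‖⌉₊:ℝ) - 1) • e) + C₁ := by
        refine hstepB (⌈‖x k‖⌉₊ - 1) _ _ ?_ ?_
        · rw [hpt _ hrnn, hcast]
        · rw [hpt _ (by linarith), hcast]
      have h1 : τ ℓ₀ (((⌈‖x k‖⌉₊:ℝ) - 1) • e) ≤ τ ℓ₀ y :=
        hτrad ℓ₀ hℓ₀ _ y (by rw [hpt _ hrnn]; exact hy1)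
      have h2 : τ ℓ₁ (x k) ≤ τ ℓ₁ ((((⌈‖x k‖⌉₊:ℝ) - 1) + 1) • e) :=
        hτrad ℓ₁ hℓ₁ _ _ (by rw [hpt _ (by linarith)]; linarith)
      have h3 : τ (1/((k:ℝ)+1)) (x k) ≤ τ ℓ₁ (x k) := hτm _ _ hkpos hkℓ _
      have h4 := hxg k
      linarith
    · intro f hmem hfin
      obtain ⟨hm2, ℓ₀, hℓ₀, hfin'⟩ := hincl f ⟨hmem, n, hn, hfin⟩
      exact ⟨ℓ₀, hℓ₀, hfin'⟩
end

section
/- Let S = (σ^ℓ)_{ℓ>0} and T = (τ^ℓ)_{ℓ>0} be continuous, non-decreasing (hence radial) weight function matrices on ℝ^d, and assume S satisfies both the logarithmic growth-difference condition and the step condition. Then for any 1 ≤ p < ∞ the following are equivalent: (i) L^p_{{S}} ⊆ L^p_{(T)} as sets; (ii) S ◁ T, i.e. for every ℓ > 0 and every n > 0 there exists D ≥ 1 with τ^ℓ(x) ≤ σ^n(x) + D for all x ∈ ℝ^d. The same equivalence holds if, instead of S satisfying the step condition, T satisfies the reverse step condition: for every ℓ₁ > 0 there exist ℓ > 0 and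 C ≥ 1 with τ^{ℓ₁}(n+1) ≤ τ^ℓ(n) + C for all n ∈ ℕ. -/
open MeasureTheory

/-- Membership in the Beurling space `L^p_{(W)}`. -/
def MemPB {d : ℕ} (p : ℝ) (W : ℝ → EuclideanSpace ℝ (Fin d) → ℝ)
    (f : EuclideanSpace ℝ (Fin d) → ℂ) : Prop :=
  MemLp f (ENNReal.ofReal p) volume ∧ ∀ ℓ > (0:ℝ), wintP p (W ℓ) f < ⊤

/-- The reverse step condition: for every `ℓ₁` there is `ℓ` with
`ω^{ℓ₁}(n+1) ≤ ω^ℓ(n) + C` (on radial values). -/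
def RevStepCond {d : ℕ} (W : ℝ → EuclideanSpace ℝ (Fin d) → ℝ) : Prop :=
  ∀ ℓ₁ > (0:ℝ), ∃ ℓ > (0:ℝ), ∃ C ≥ (1:ℝ), ∀ n : ℕ,
    ∀ x y : EuclideanSpace ℝ (Fin d), ‖x‖ = (n:ℝ) → ‖y‖ = (n:ℝ) + 1 →
      W ℓ₁ y ≤ W ℓ x + C

/-- The key counterexample construction: if `S ◁ T` fails at parameters
`ℓ, n`, then there is `f ∈ L^p_{{S}}` (with weight index `n`) whose
`τ^ℓ`-weighted integral is infinite. -/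
theorem key_construction (d : ℕ) (hd : 0 < d)
    (σ τ : ℝ → EuclideanSpace ℝ (Fin d) → ℝ)
    (hσ0 : ∀ ℓ > (0:ℝ), ∀ x, 0 ≤ σ ℓ x)
    (hσcont : ∀ ℓ > (0:ℝ), Continuous (σ ℓ))
    (hτcont : ∀ ℓ > (0:ℝ), Continuous (τ ℓ))
    (hσrad : ∀ ℓ > (0:ℝ), ∀ x y : EuclideanSpace ℝ (Fin d),
      ‖x‖ ≤ ‖y‖ → σ ℓ x ≤ σ ℓ y)
    (hτrad : ∀ ℓ > (0:ℝ), ∀ x y : EuclideanSpace ℝ (Fin d),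
      ‖x‖ ≤ ‖y‖ → τ ℓ x ≤ τ ℓ y)
    (p : ℝ) (hp : 1 ≤ p)
    (ℓ n : ℝ) (hℓ : 0 < ℓ) (hn : 0 < n)
    (hbad : ∀ D : ℝ, 1 ≤ D → ∃ x, σ n x + D < τ ℓ x) :
    ∃ f : EuclideanSpace ℝ (Fin d) → ℂ,
      MemPR p σ f ∧ wintP p (τ ℓ) f = ⊤ := by
  have hp0 : (0:ℝ) < p := lt_of_lt_of_le one_pos hp
  -- a unit vector
  set e : EuclideanSpace ℝ (Fin d) := EuclideanSpace.single ⟨0, hd⟩ (1:ℝ) with he_def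
  have he : ‖e‖ = 1 := by rw [he_def, EuclideanSpace.norm_single]; simp
  set pt : ℝ → EuclideanSpace ℝ (Fin d) := fun s => s • e with hpt_def
  have hptn : ∀ s : ℝ, 0 ≤ s → ‖pt s‖ = s := by
    intro s hs
    rw [hpt_def]
    simp [norm_smul, he, abs_of_nonneg hs]
  have hptc : Continuous pt := continuous_id.smul continuous_const
  -- radial representations
  have hσr : ∀ x, σ n x = σ n (pt ‖x‖) := fun x => le_antisymm
    (hσrad n hn x _ (by rw [hptn _ (norm_nonneg x)]))
    (hσrad n hn _ x (by rw [hptn _ (norm_nonneg x)]))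
  have hτr : ∀ x, τ ℓ x = τ ℓ (pt ‖x‖) := fun x => le_antisymm
    (hτrad ℓ hℓ x _ (by rw [hptn _ (norm_nonneg x)]))
    (hτrad ℓ hℓ _ x (by rw [hptn _ (norm_nonneg x)]))
  set gσ : ℝ → ℝ := fun s => σ n (pt s) with hgσ_def
  set gτ : ℝ → ℝ := fun s => τ ℓ (pt s) with hgτ_def
  -- the basic claim producing large radii with big weight gap
  have claim : ∀ R M : ℝ, ∃ s : ℝ, R ≤ s ∧ 1 ≤ s ∧ gσ s + M ≤ gτ s := by
    intro R M
    obtain ⟨B, hB⟩ := (isCompact_closedBall (0 : EuclideanSpace ℝ (Fin d))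
      (max R 1)).exists_bound_of_continuousOn
      (((hτcont ℓ hℓ).sub (hσcont n hn)).continuousOn)
    obtain ⟨x, hx⟩ := hbad (max (max B M) 1) (le_max_right _ _)
    have hxn : max R 1 < ‖x‖ := by
      by_contra hle
      push_neg at hle
      have hmem : x ∈ Metric.closedBall (0 : EuclideanSpace ℝ (Fin d)) (max R 1) := by
        simpa [Metric.mem_closedBall, dist_zero_right] using hle
      have h1 := hB x hmem
      have h2 : τ ℓ x - σ n x ≤ B :=
        (le_abs_self _).trans (by simpa [Real.norm_eq_abs] using h1)
      have h3 : B ≤ max (max B M) 1 := le_trans (le_max_left _ _) (le_max_left _ _)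
      linarith
    refine ⟨‖x‖, le_trans (le_max_left R 1) hxn.le, le_trans (le_max_right R 1) hxn.le, ?_⟩
    have h4 : gσ ‖x‖ = σ n x := (hσr x).symm
    have h5 : gτ ‖x‖ = τ ℓ x := (hτr x).symm
    have h6 : M ≤ max (max B M) 1 := le_trans (le_max_right _ _) (le_max_left _ _)
    rw [h4, h5]; linarith
  choose F hF1 hF2 hF3 using claim
  -- the sequence of radii
  set t : ℕ → ℝ := fun k => Nat.rec (F 1 0) (fun k tk => F (tk + 1) ((k:ℝ) + 1)) k with ht_def
  have ht0 : t 0 = F 1 0 := rfl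
  have htS : ∀ k, t (k + 1) = F (t k + 1) ((k:ℝ) + 1) := fun k => rfl
  have hone : ∀ k, 1 ≤ t k := by
    intro k
    cases k with
    | zero => rw [ht0]; exact hF2 1 0
    | succ k => rw [htS k]; exact hF2 _ _
  have hgap : ∀ k, gσ (t k) + (k:ℝ) ≤ gτ (t k) := by
    intro k
    cases k with
    | zero => rw [ht0]; simpa using hF3 1 0
    | succ k => rw [htS k]; push_cast; exact hF3 _ _
  have htsucc : ∀ k, t k + 1 ≤ t (k + 1) := by
    intro k
    rw [htS k]; exact hF1 _ _
  have htmono : ∀ j k, j < k → t j + 1 ≤ t k := by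
    intro j k hjk
    induction k with
    | zero => exact absurd hjk (Nat.not_lt_zero j)
    | succ k ih =>
      rcases Nat.lt_succ_iff_lt_or_eq.mp hjk with h | h
      · have h1 := ih h
        have h2 := htsucc k
        linarith
      · subst h; exact htsucc j
  have hgrow : ∀ k : ℕ, (k:ℝ) + 1 ≤ t k := by
    intro k
    induction k with
    | zero => simpa using hone 0
    | succ k ih =>
      have := htsucc k
      push_cast
      linarith
  -- widths of the annuli
  have hεex : ∀ k, ∃ ε : ℝ, 0 < ε ∧ ε ≤ 1/2 ∧
      ∀ s, t k ≤ s → s ≤ t k + ε → gσ s ≤ gσ (t k) + 1 := by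
    intro k
    have hc : Continuous gσ := (hσcont n hn).comp hptc
    obtain ⟨δ, hδ, hδ'⟩ := Metric.continuous_iff.mp hc (t k) 1 one_pos
    refine ⟨min (δ/2) (1/2), by positivity, min_le_right _ _, ?_⟩
    intro s h1 h2
    have hd1 : dist s (t k) < δ := by
      rw [Real.dist_eq, abs_of_nonneg (by linarith)]
      have hm : min (δ/2) (1/2) ≤ δ/2 := min_le_left _ _
      linarith
    have hd2 := hδ' s hd1
    rw [Real.dist_eq] at hd2
    have hd3 := abs_lt.mp hd2
    linarith [hd3.1, hd3.2]
  choose ε hε0 hεhalf hεbd using hεex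
  -- the annuli
  set A : ℕ → Set (EuclideanSpace ℝ (Fin d)) :=
    fun k => {x | t k ≤ ‖x‖ ∧ ‖x‖ ≤ t k + ε k} with hA_def
  have hAmem : ∀ k x, x ∈ A k ↔ t k ≤ ‖x‖ ∧ ‖x‖ ≤ t k + ε k := by
    intro k x; rw [hA_def]; rfl
  have hAmeas : ∀ k, MeasurableSet (A k) := by
    intro k
    have : A k = (fun x : EuclideanSpace ℝ (Fin d) => ‖x‖) ⁻¹' Set.Icc (t k) (t k + ε k) := by
      ext x; rw [hAmem]; simp [Set.mem_Icc]
    rw [this]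
    exact (isClosed_Icc.preimage continuous_norm).measurableSet
  have hAdisj : ∀ j k x, x ∈ A j → x ∈ A k → j = k := by
    intro j k x hj hk
    rw [hAmem] at hj hk
    by_contra hne
    rcases Nat.lt_or_ge j k with h | h
    · have h1 := htmono j k h
      have h2 := hεhalf j
      linarith [hj.2, hk.1]
    · have hkj : k < j := lt_of_le_of_ne h (Ne.symm hne)
      have h1 := htmono k j hkj
      have h2 := hεhalf k
      linarith [hk.2, hj.1]
  -- volumes
  have hVpos : ∀ k, 0 < volume (A k) := by
    intro k
    have hcn : ‖pt (t k + ε k / 2)‖ = t k + ε k / 2 :=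
      hptn _ (by linarith [hone k, hε0 k])
    have hball : Metric.ball (pt (t k + ε k / 2)) (ε k / 2) ⊆ A k := by
      intro y hy
      rw [Metric.mem_ball, dist_eq_norm] at hy
      have h2 : |‖y‖ - ‖pt (t k + ε k / 2)‖| ≤ ‖y - pt (t k + ε k / 2)‖ :=
        abs_norm_sub_norm_le _ _
      rw [hcn] at h2
      have h3 := abs_le.mp h2
      rw [hAmem]
      constructor <;> [linarith [h3.1, hy]; linarith [h3.2, hy]]
    calc (0:ENNReal) < volume (Metric.ball (pt (t k + ε k / 2)) (ε k / 2)) :=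
          Metric.measure_ball_pos _ _ (by linarith [hε0 k])
      _ ≤ volume (A k) := measure_mono hball
  have hVfin : ∀ k, volume (A k) < ⊤ := by
    intro k
    refine lt_of_le_of_lt (measure_mono ?_)
      (measure_closedBall_lt_top (x := (0 : EuclideanSpace ℝ (Fin d))) (r := t k + ε k))
    intro x hx
    rw [hAmem] at hx
    rw [Metric.mem_closedBall, dist_zero_right]
    exact hx.2
  set Vr : ℕ → ℝ := fun k => (volume (A k)).toReal with hVr_def
  have hVrpos : ∀ k, 0 < Vr k := fun k => ENNReal.toReal_pos (hVpos k).ne' (hVfin k).ne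
  have hVofReal : ∀ k, volume (A k) = ENNReal.ofReal (Vr k) := fun k =>
    (ENNReal.ofReal_toReal (hVfin k).ne).symm
  -- amplitudes
  set q : ℕ → ℝ := fun k => (1/2:ℝ)^k * Real.exp (-(gσ (t k) + 1)) / Vr k with hq_def
  have hqpos : ∀ k, 0 < q k := fun k =>
    div_pos (mul_pos (pow_pos (by norm_num) k) (Real.exp_pos _)) (hVrpos k)
  set c : ℕ → ℝ := fun k => (q k) ^ (1/p) with hc_def
  have hcpos : ∀ k, 0 < c k := fun k => Real.rpow_pos_of_pos (hqpos k) _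
  have hcp : ∀ k, c k ^ p = q k := by
    intro k
    show (q k ^ (1/p)) ^ p = q k
    rw [← Real.rpow_mul (hqpos k).le, one_div_mul_cancel (ne_of_gt hp0), Real.rpow_one]
  -- the function
  set f : EuclideanSpace ℝ (Fin d) → ℂ :=
    fun x => ∑' k, (A k).indicator (fun _ => (c k : ℂ)) x with hf_def
  have hsupp : ∀ (x : EuclideanSpace ℝ (Fin d)) (k : ℕ), ⌊‖x‖⌋₊ + 1 ≤ k → x ∉ A k := by
    intro x k hk hx
    rw [hAmem] at hx
    have h1 : t k ≤ ‖x‖ := hx.1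
    have h2 : ‖x‖ < (⌊‖x‖⌋₊:ℝ) + 1 := Nat.lt_floor_add_one _
    have h3 : ((⌊‖x‖⌋₊:ℝ) + 1) ≤ (k:ℝ) := by exact_mod_cast hk
    have h4 := hgrow k
    linarith
  have hsummable : ∀ x, Summable (fun k => (A k).indicator (fun _ => (c k : ℂ)) x) := by
    intro x
    apply summable_of_ne_finset_zero (s := Finset.range (⌊‖x‖⌋₊ + 1))
    intro k hk
    rw [Finset.mem_range, not_lt] at hk
    exact Set.indicator_of_notMem (hsupp x k hk) _
  have hfmeas : Measurable f := by
    apply measurable_of_tendsto_metrizable' (u := (Filter.atTop : Filter (Finset ℕ)))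
      (f := fun s x => ∑ k ∈ s, (A k).indicator (fun _ => (c k : ℂ)) x)
    · intro s
      exact Finset.measurable_sum _ (fun k _ => measurable_const.indicator (hAmeas k))
    · rw [tendsto_pi_nhds]
      intro x
      exact (hsummable x).hasSum
  have hfA : ∀ j x, x ∈ A j → f x = (c j : ℂ) := by
    intro j x hx
    show (∑' k, (A k).indicator (fun _ => (c k : ℂ)) x) = (c j : ℂ)
    rw [tsum_eq_single j]
    · exact Set.indicator_of_mem hx _
    · intro k hk
      exact Set.indicator_of_notMem (fun hxk => hk (hAdisj k j x hxk hx)) _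
  have hf0 : ∀ x, (∀ k, x ∉ A k) → f x = 0 := by
    intro x hx
    show (∑' k, (A k).indicator (fun _ => (c k : ℂ)) x) = 0
    have : ∀ k, (A k).indicator (fun _ => (c k : ℂ)) x = 0 := fun k =>
      Set.indicator_of_notMem (hx k) _
    rw [tsum_congr (fun k => this k)]
    exact tsum_zero
  -- decomposition of weighted integrals
  have hdecomp : ∀ ω : EuclideanSpace ℝ (Fin d) → ℝ, Continuous ω →
      wintP p ω f = ∑' k, ∫⁻ x in A k, ENNReal.ofReal (c k ^ p * Real.exp (ω x)) := by
    intro ω hω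
    have hptw : ∀ x, ENNReal.ofReal (‖f x‖ ^ p * Real.exp (ω x)) =
        ∑' k, (A k).indicator (fun y => ENNReal.ofReal (c k ^ p * Real.exp (ω y))) x := by
      intro x
      by_cases hx : ∃ j, x ∈ A j
      · obtain ⟨j, hj⟩ := hx
        rw [tsum_eq_single j
          (fun k hk => Set.indicator_of_notMem (fun hxk => hk (hAdisj k j x hxk hj)) _),
          Set.indicator_of_mem hj]
        have hnf : ‖f x‖ = c j := by
          rw [hfA j x hj, Complex.norm_real, Real.norm_eq_abs, abs_of_pos (hcpos j)]
        rw [hnf]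
      · push_neg at hx
        rw [hf0 x hx]
        have hz : ∀ k, (A k).indicator
            (fun y => ENNReal.ofReal (c k ^ p * Real.exp (ω y))) x = 0 := fun k =>
          Set.indicator_of_notMem (hx k) _
        rw [tsum_congr hz, tsum_zero]
        simp [Real.zero_rpow (ne_of_gt hp0)]
    rw [wintP, lintegral_congr hptw, lintegral_tsum]
    · exact tsum_congr fun k => lintegral_indicator (hAmeas k) _
    · intro k
      exact ((ENNReal.measurable_ofReal.comp
        (measurable_const.mul (Real.measurable_exp.comp hω.measurable))).indicator
        (hAmeas k)).aemeasurable
  -- upper bound for the σ-integral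
  have hσint : wintP p (σ n) f ≤ (1 - ENNReal.ofReal (1/2))⁻¹ := by
    rw [hdecomp (σ n) (hσcont n hn)]
    have hterm : ∀ k, ∫⁻ x in A k, ENNReal.ofReal (c k ^ p * Real.exp (σ n x))
        ≤ ENNReal.ofReal ((1/2:ℝ)^k) := by
      intro k
      have hcpk : (0:ℝ) < c k ^ p := by rw [hcp k]; exact hqpos k
      have hb : ∀ x ∈ A k, ENNReal.ofReal (c k ^ p * Real.exp (σ n x)) ≤
          ENNReal.ofReal (c k ^ p * Real.exp (gσ (t k) + 1)) := by
        intro x hx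
        rw [hAmem] at hx
        apply ENNReal.ofReal_le_ofReal
        apply mul_le_mul_of_nonneg_left _ hcpk.le
        apply Real.exp_le_exp.mpr
        calc σ n x = gσ ‖x‖ := hσr x
          _ ≤ gσ (t k) + 1 := hεbd k ‖x‖ hx.1 hx.2
      calc ∫⁻ x in A k, ENNReal.ofReal (c k ^ p * Real.exp (σ n x))
          ≤ ∫⁻ _ in A k, ENNReal.ofReal (c k ^ p * Real.exp (gσ (t k) + 1)) :=
            setLIntegral_mono measurable_const hb
        _ = ENNReal.ofReal (c k ^ p * Real.exp (gσ (t k) + 1)) * volume (A k) :=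
            setLIntegral_const _ _
        _ = ENNReal.ofReal ((1/2:ℝ)^k) := by
            rw [hVofReal k, ← ENNReal.ofReal_mul (by positivity)]
            congr 1
            rw [hcp k]
            show (1/2:ℝ)^k * Real.exp (-(gσ (t k) + 1)) / Vr k * Real.exp (gσ (t k) + 1)
              * Vr k = (1/2:ℝ)^k
            have hV := (hVrpos k).ne'
            rw [Real.exp_neg]
            field_simp
    calc ∑' k, ∫⁻ x in A k, ENNReal.ofReal (c k ^ p * Real.exp (σ n x))
        ≤ ∑' k, ENNReal.ofReal ((1/2:ℝ)^k) := ENNReal.tsum_le_tsum hterm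
      _ = ∑' k, (ENNReal.ofReal (1/2))^k := by
          refine tsum_congr fun k => ?_
          rw [← ENNReal.ofReal_pow (by norm_num)]
      _ = (1 - ENNReal.ofReal (1/2))⁻¹ := ENNReal.tsum_geometric _
  have hσfin : wintP p (σ n) f < ⊤ := by
    refine lt_of_le_of_lt hσint ?_
    rw [ENNReal.inv_lt_top]
    rw [tsub_pos_iff_lt]
    exact ENNReal.ofReal_lt_one.mpr (by norm_num)
  -- membership in Lᵖ
  have hpe0 : (ENNReal.ofReal p) ≠ 0 := by
    simp only [ne_eq, ENNReal.ofReal_eq_zero, not_le]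
    exact hp0
  have hmem : MemLp f (ENNReal.ofReal p) volume := by
    constructor
    · exact hfmeas.aestronglyMeasurable
    · rw [eLpNorm_eq_lintegral_rpow_enorm_toReal hpe0 ENNReal.ofReal_ne_top]
      refine ENNReal.rpow_lt_top_of_nonneg (by positivity) ?_
      rw [ENNReal.toReal_ofReal hp0.le]
      have hle : ∫⁻ x, ‖f x‖ₑ ^ p ≤ wintP p (σ n) f := by
        rw [wintP]
        refine lintegral_mono fun x => ?_
        rw [← ofReal_norm, ENNReal.ofReal_rpow_of_nonneg (norm_nonneg _) hp0.le]
        apply ENNReal.ofReal_le_ofReal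
        nth_rewrite 1 [← mul_one (‖f x‖ ^ p)]
        exact mul_le_mul_of_nonneg_left (Real.one_le_exp (hσ0 n hn x))
          (Real.rpow_nonneg (norm_nonneg _) _)
      exact (lt_of_le_of_lt hle hσfin).ne
  -- the τ-integral diverges
  have hτtop : wintP p (τ ℓ) f = ⊤ := by
    rw [hdecomp (τ ℓ) (hτcont ℓ hℓ)]
    rw [eq_top_iff]
    have hconst : (⊤:ENNReal) = ∑' (_ : ℕ), ENNReal.ofReal (Real.exp (-1)) :=
      (ENNReal.tsum_const_eq_top_of_ne_zero (by
        simp only [ne_eq, ENNReal.ofReal_eq_zero, not_le]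
        exact Real.exp_pos _)).symm
    rw [hconst]
    refine ENNReal.tsum_le_tsum fun k => ?_
    have hcpk : (0:ℝ) < c k ^ p := by rw [hcp k]; exact hqpos k
    have hb : ∀ x ∈ A k, ENNReal.ofReal (c k ^ p * Real.exp (gτ (t k))) ≤
        ENNReal.ofReal (c k ^ p * Real.exp (τ ℓ x)) := by
      intro x hx
      rw [hAmem] at hx
      apply ENNReal.ofReal_le_ofReal
      apply mul_le_mul_of_nonneg_left _ hcpk.le
      apply Real.exp_le_exp.mpr
      exact hτrad ℓ hℓ _ x (by rw [hptn _ (le_trans zero_le_one (hone k))]; exact hx.1)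
    have hreal : Real.exp (-1) ≤ c k ^ p * Real.exp (gτ (t k)) * Vr k := by
      rw [hcp k]
      show Real.exp (-1) ≤ (1/2:ℝ)^k * Real.exp (-(gσ (t k) + 1)) / Vr k
        * Real.exp (gτ (t k)) * Vr k
      have h1 : (1/2:ℝ)^k * Real.exp (-(gσ (t k) + 1)) / Vr k * Real.exp (gτ (t k)) * Vr k
          = (1/2:ℝ)^k * Real.exp (gτ (t k) - (gσ (t k) + 1)) := by
        have hV := (hVrpos k).ne'
        rw [Real.exp_sub, Real.exp_neg]
        field_simp
      rw [h1]
      have h2 : (k:ℝ) - 1 ≤ gτ (t k) - (gσ (t k) + 1) := by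
        have := hgap k; linarith
      have h3 : Real.exp ((k:ℝ) - 1) ≤ Real.exp (gτ (t k) - (gσ (t k) + 1)) :=
        Real.exp_le_exp.mpr h2
      have h5 : (2:ℝ)^k ≤ Real.exp (k:ℝ) := by
        calc (2:ℝ)^k ≤ Real.exp 1 ^ k :=
              pow_le_pow_left₀ (by norm_num) (by linarith [Real.add_one_le_exp 1]) k
          _ = Real.exp ((k:ℝ) * 1) := by rw [← Real.exp_nat_mul]
          _ = Real.exp (k:ℝ) := by rw [mul_one]
      have h7 : (1:ℝ) ≤ (1/2:ℝ)^k * Real.exp (k:ℝ) := by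
        calc (1:ℝ) = ((1/2:ℝ) * 2)^k := by norm_num
          _ = (1/2:ℝ)^k * 2^k := mul_pow _ _ _
          _ ≤ (1/2:ℝ)^k * Real.exp (k:ℝ) :=
              mul_le_mul_of_nonneg_left h5 (by positivity)
      have h6 : Real.exp ((k:ℝ) - 1) = Real.exp (k:ℝ) * Real.exp (-1) := by
        rw [← Real.exp_add]; ring_nf
      have h4 : Real.exp (-1:ℝ) ≤ (1/2:ℝ)^k * Real.exp ((k:ℝ) - 1) := by
        rw [h6]
        calc Real.exp (-1:ℝ) = 1 * Real.exp (-1) := (one_mul _).symm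
          _ ≤ ((1/2:ℝ)^k * Real.exp (k:ℝ)) * Real.exp (-1) :=
              mul_le_mul_of_nonneg_right h7 (Real.exp_nonneg _)
          _ = (1/2:ℝ)^k * (Real.exp (k:ℝ) * Real.exp (-1)) := by ring
      calc Real.exp (-1:ℝ) ≤ (1/2:ℝ)^k * Real.exp ((k:ℝ) - 1) := h4
        _ ≤ (1/2:ℝ)^k * Real.exp (gτ (t k) - (gσ (t k) + 1)) :=
            mul_le_mul_of_nonneg_left h3 (by positivity)
    calc ENNReal.ofReal (Real.exp (-1))
        ≤ ENNReal.ofReal (c k ^ p * Real.exp (gτ (t k)) * Vr k) :=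
          ENNReal.ofReal_le_ofReal hreal
      _ = ENNReal.ofReal (c k ^ p * Real.exp (gτ (t k))) * volume (A k) := by
          rw [hVofReal k, ← ENNReal.ofReal_mul (by positivity)]
      _ = ∫⁻ _ in A k, ENNReal.ofReal (c k ^ p * Real.exp (gτ (t k))) :=
          (setLIntegral_const _ _).symm
      _ ≤ ∫⁻ x in A k, ENNReal.ofReal (c k ^ p * Real.exp (τ ℓ x)) :=
          setLIntegral_mono (ENNReal.measurable_ofReal.comp
            (measurable_const.mul (Real.measurable_exp.comp (hτcont ℓ hℓ).measurable))) hb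
  exact ⟨f, ⟨hmem, n, hn, hσfin⟩, hτtop⟩

/-- for continuous, non-decreasing (hence radial) weight
function matrices `S`, `T` on `ℝ^d`, with `S` satisfying the logarithmic
growth-difference condition and either `S` the step condition or `T` the
reverse step condition, and any `1 ≤ p < ∞`:
`L^p_{{S}} ⊆ L^p_{(T)}` (as sets) iff `S ◁ T`. -/
theorem stmt_16 (d : ℕ) (hd : 0 < d)
    (σ τ : ℝ → EuclideanSpace ℝ (Fin d) → ℝ)
    (hσ0 : ∀ ℓ > (0:ℝ), ∀ x, 0 ≤ σ ℓ x) (hτ0 : ∀ ℓ > (0:ℝ), ∀ x, 0 ≤ τ ℓ x)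
    (hσm : ∀ ℓ₁ ℓ₂ : ℝ, 0 < ℓ₁ → ℓ₁ ≤ ℓ₂ → ∀ x, σ ℓ₁ x ≤ σ ℓ₂ x)
    (hτm : ∀ ℓ₁ ℓ₂ : ℝ, 0 < ℓ₁ → ℓ₁ ≤ ℓ₂ → ∀ x, τ ℓ₁ x ≤ τ ℓ₂ x)
    (hσcont : ∀ ℓ > (0:ℝ), Continuous (σ ℓ))
    (hτcont : ∀ ℓ > (0:ℝ), Continuous (τ ℓ))
    (hσrad : ∀ ℓ > (0:ℝ), ∀ x y : EuclideanSpace ℝ (Fin d),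
      ‖x‖ ≤ ‖y‖ → σ ℓ x ≤ σ ℓ y)
    (hτrad : ∀ ℓ > (0:ℝ), ∀ x y : EuclideanSpace ℝ (Fin d),
      ‖x‖ ≤ ‖y‖ → τ ℓ x ≤ τ ℓ y)
    (hσlog : LogDiff σ)
    (hstep : StepCond σ ∨ RevStepCond τ)
    (p : ℝ) (hp : 1 ≤ p) :
    (∀ f, MemPR p σ f → MemPB p τ f) ↔
      (∀ ℓ > (0:ℝ), ∀ n > (0:ℝ), ∃ D ≥ (1:ℝ), ∀ x, τ ℓ x ≤ σ n x + D) := by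
  constructor
  · intro h
    by_contra hcon
    push_neg at hcon
    obtain ⟨ℓ, hℓ, n, hn, hbad⟩ := hcon
    obtain ⟨f, hfR, hftop⟩ := key_construction d hd σ τ hσ0 hσcont hτcont hσrad hτrad
      p hp ℓ n hℓ hn hbad
    have := (h f hfR).2 ℓ hℓ
    rw [hftop] at this
    exact lt_irrefl ⊤ this
  · intro h f hf
    obtain ⟨hf1, ℓ₀, hℓ₀, hint⟩ := hf
    refine ⟨hf1, fun ℓ hℓ => ?_⟩
    obtain ⟨D, hD1, hD⟩ := h ℓ hℓ ℓ₀ hℓ₀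
    have hle : wintP p (τ ℓ) f ≤ ENNReal.ofReal (Real.exp D) * wintP p (σ ℓ₀) f := by
      rw [wintP, wintP, ← MeasureTheory.lintegral_const_mul' _ _ ENNReal.ofReal_ne_top]
      refine lintegral_mono fun x => ?_
      rw [← ENNReal.ofReal_mul (Real.exp_nonneg _)]
      apply ENNReal.ofReal_le_ofReal
      have h1 : Real.exp (τ ℓ x) ≤ Real.exp D * Real.exp (σ ℓ₀ x) := by
        rw [← Real.exp_add]
        exact Real.exp_le_exp.mpr (by linarith [hD x])
      have h2 : (0:ℝ) ≤ ‖f x‖ ^ p := Real.rpow_nonneg (norm_nonneg _) p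
      calc ‖f x‖ ^ p * Real.exp (τ ℓ x) ≤ ‖f x‖ ^ p * (Real.exp D * Real.exp (σ ℓ₀ x)) :=
            mul_le_mul_of_nonneg_left h1 h2
        _ = Real.exp D * (‖f x‖ ^ p * Real.exp (σ ℓ₀ x)) := by ring
    exact lt_of_le_of_lt hle (ENNReal.mul_lt_top ENNReal.ofReal_lt_top hint)
end

section
/- There exists an uncountable set Ω of functions ω : [0,∞) → [0,∞) with the following properties. Every ω ∈ Ω satisfies: (I) ω(t) = 0 for all t ∈ [0,1], ω is continuous and non-decreasing, and lim_{t→∞} ω(t) = +∞; (II) log(t) = o(ω(t)) as t → ∞, i.e. lim_{t→∞} log(t)/ω(t) = 0; (III) ω is slowly varying, i.e. for every u > 0: lim_{t→∞} ω(u·t)/ω(t) = 1, and consequently γ(ω) = +∞; (IV) there is no function σ : [0,∞) → [0,∞) equivalent to ω such that t ↦ σ(e^t) is convex on ℝ. Moreover, any two distinct elements of Ω are not equivalent. -/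
open Filter

/-- Equivalence of weights: `∃ C ≥ 1` with `σ ≤ C·ω + C` and `ω ≤ C·σ + C`
on `[0,∞)`. -/
def EquivW (ω σ : ℝ → ℝ) : Prop :=
  ∃ C ≥ (1:ℝ), ∀ t ≥ (0:ℝ), σ t ≤ C * ω t + C ∧ ω t ≤ C * σ t + C

open Real Set


/-- index of the block containing `x` -/
noncomputable def NB (x : ℝ) : ℕ := sInf {n : ℕ | x < ((n : ℝ) + 1) ^ 4}

lemma NB_set_nonempty (x : ℝ) : {n : ℕ | x < ((n : ℝ) + 1) ^ 4}.Nonempty := by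
  obtain ⟨n, hn⟩ := exists_nat_gt x
  refine ⟨n, lt_of_lt_of_le hn ?_⟩
  have h0 : (0:ℝ) ≤ (n:ℝ) := Nat.cast_nonneg n
  have : ((n:ℝ) + 1) ≤ ((n:ℝ) + 1) ^ 4 := le_self_pow₀ (by linarith) (by norm_num)
  linarith

lemma NB_lt (x : ℝ) : x < ((NB x : ℝ) + 1) ^ 4 := Nat.sInf_mem (NB_set_nonempty x)

lemma NB_le {n : ℕ} {x : ℝ} (h : x < ((n : ℝ) + 1) ^ 4) : NB x ≤ n := Nat.sInf_le h

lemma NB_ge {n : ℕ} {x : ℝ} (h : ((n : ℝ)) ^ 4 ≤ x) : n ≤ NB x := by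
  by_contra hc
  push_neg at hc
  have h2 : ((NB x : ℝ) + 1) ^ 4 ≤ ((n : ℝ)) ^ 4 := by
    have : ((NB x : ℝ) + 1) ≤ (n : ℝ) := by exact_mod_cast hc
    have h0 : (0:ℝ) ≤ (NB x : ℝ) + 1 := by positivity
    exact pow_le_pow_left₀ h0 this 4
  linarith [NB_lt x]

lemma NB_eq {n : ℕ} {x : ℝ} (h1 : ((n : ℝ)) ^ 4 ≤ x) (h2 : x < ((n : ℝ) + 1) ^ 4) :
    NB x = n := le_antisymm (NB_le h2) (NB_ge h1)

lemma pow4_NB_le {x : ℝ} (h : 1 ≤ NB x) : ((NB x : ℝ)) ^ 4 ≤ x := by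
  by_contra hc
  push_neg at hc
  have : NB x ≤ NB x - 1 := NB_le (n := NB x - 1) (by
    have he : ((NB x - 1 : ℕ) : ℝ) + 1 = (NB x : ℝ) := by
      have h1 : NB x - 1 + 1 = NB x := Nat.succ_pred_eq_of_pos h
      exact_mod_cast congrArg (Nat.cast (R := ℝ)) h1
    rw [he]; exact hc)
  omega

lemma NB_mono : Monotone NB := by
  intro x y hxy
  exact csInf_le_csInf (OrderBot.bddBelow _) (NB_set_nonempty y)
    (fun n hn => lt_of_le_of_lt hxy hn)

lemma ramp_nonneg {x : ℝ} (hx : 0 ≤ x) : 0 ≤ x - ((NB x : ℝ)) ^ 4 := by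
  rcases Nat.eq_zero_or_pos (NB x) with h | h
  · simp [h, hx]
  · linarith [pow4_NB_le h]

/-- the function `g` -/
noncomputable def gg (x : ℝ) : ℝ :=
  min (((NB x : ℝ) + 1) ^ 2)
    (((NB x : ℝ)) ^ 2 + (2 * (NB x : ℝ) + 1) * (x - ((NB x : ℝ)) ^ 4) / max 1 (((NB x : ℝ)) ^ 2))

lemma gg_le (x : ℝ) : gg x ≤ ((NB x : ℝ) + 1) ^ 2 := min_le_left _ _

lemma gg_ge {x : ℝ} (hx : 0 ≤ x) : ((NB x : ℝ)) ^ 2 ≤ gg x := by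
  refine le_min (by nlinarith [Nat.cast_nonneg (α := ℝ) (NB x)]) ?_
  have h1 : 0 ≤ (2 * (NB x : ℝ) + 1) * (x - ((NB x : ℝ)) ^ 4) / max 1 (((NB x : ℝ)) ^ 2) := by
    apply div_nonneg
    · apply mul_nonneg (by positivity) (ramp_nonneg hx)
    · exact le_trans zero_le_one (le_max_left _ _)
  linarith

lemma gg_nonneg {x : ℝ} (hx : 0 ≤ x) : 0 ≤ gg x :=
  le_trans (by positivity) (gg_ge hx)

lemma gg_zero : gg 0 = 0 := by
  have h : NB 0 = 0 := NB_eq (by norm_num) (by norm_num)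
  simp [gg, h]

lemma gg_ge_aux {x : ℝ} (h : 0 ≤ x - ((NB x : ℝ)) ^ 4) : ((NB x : ℝ)) ^ 2 ≤ gg x := by
  refine le_min (by nlinarith [Nat.cast_nonneg (α := ℝ) (NB x)]) ?_
  have h1 : 0 ≤ (2 * (NB x : ℝ) + 1) * (x - ((NB x : ℝ)) ^ 4) / max 1 (((NB x : ℝ)) ^ 2) := by
    apply div_nonneg (mul_nonneg (by positivity) h) (le_trans zero_le_one (le_max_left _ _))
  linarith

lemma gg_ge' {x : ℝ} (h : 1 ≤ NB x) : ((NB x : ℝ)) ^ 2 ≤ gg x :=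
  gg_ge_aux (by linarith [pow4_NB_le h])

lemma max_sq' {n : ℕ} (h : 1 ≤ n) : max (1:ℝ) (((n:ℝ)) ^ 2) = ((n:ℝ)) ^ 2 := by
  have h1 : (1:ℝ) ≤ (n:ℝ) := by exact_mod_cast h
  exact max_eq_right (by nlinarith)

lemma coeff_le {m n : ℕ} (hm : 1 ≤ m) (hmn : m ≤ n) :
    (2 * (n:ℝ) + 1) / ((n:ℝ)) ^ 2 ≤ 3 / (m:ℝ) := by
  have h1 : (1:ℝ) ≤ (m:ℝ) := by exact_mod_cast hm
  have h2 : (m:ℝ) ≤ (n:ℝ) := by exact_mod_cast hmn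
  rw [div_le_div_iff₀ (by nlinarith) (by linarith)]
  nlinarith

lemma gg_mono : Monotone gg := by
  intro x y hxy
  rcases eq_or_lt_of_le (NB_mono hxy) with he | hlt
  · simp only [gg, ← he]
    refine min_le_min le_rfl ?_
    have hd : (0:ℝ) < max 1 (((NB x : ℝ)) ^ 2) := lt_of_lt_of_le zero_lt_one (le_max_left _ _)
    have h2 : (2 * (NB x : ℝ) + 1) * (x - ((NB x : ℝ)) ^ 4)
        ≤ (2 * (NB x : ℝ) + 1) * (y - ((NB x : ℝ)) ^ 4) :=
      mul_le_mul_of_nonneg_left (by linarith) (by positivity)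
    exact add_le_add le_rfl ((div_le_div_iff_of_pos_right hd).mpr h2)
  · have h1 : 1 ≤ NB y := by omega
    refine le_trans (gg_le x) (le_trans ?_ (gg_ge' h1))
    have : (NB x + 1 : ℕ) ≤ NB y := hlt
    have hc : ((NB x : ℝ)) + 1 ≤ ((NB y : ℝ)) := by exact_mod_cast this
    nlinarith [Nat.cast_nonneg (α := ℝ) (NB x)]

lemma NB_pow4 (n : ℕ) : NB (((n:ℝ)) ^ 4) = n :=
  NB_eq le_rfl (pow_lt_pow_left₀ (by linarith [Nat.cast_nonneg (α := ℝ) n]) (Nat.cast_nonneg n) (by norm_num))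

lemma gg_pow4 (n : ℕ) : gg (((n:ℝ)) ^ 4) = ((n:ℝ)) ^ 2 := by
  rw [gg, NB_pow4]
  rw [sub_self, mul_zero, zero_div, add_zero]
  exact min_eq_right (by nlinarith [Nat.cast_nonneg (α := ℝ) n])

lemma NB_mid {n : ℕ} (hn : 1 ≤ n) : NB ((n:ℝ) ^ 4 + (n:ℝ) ^ 2) = n := by
  have h1 : (1:ℝ) ≤ (n:ℝ) := by exact_mod_cast hn
  exact NB_eq (by nlinarith) (by nlinarith)

lemma gg_mid {n : ℕ} (hn : 1 ≤ n) : gg ((n:ℝ) ^ 4 + (n:ℝ) ^ 2) = ((n:ℝ) + 1) ^ 2 := by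
  have h1 : (1:ℝ) ≤ (n:ℝ) := by exact_mod_cast hn
  rw [gg, NB_mid hn, max_sq' hn]
  have h2 : ((n:ℝ)) ^ 2 + (2 * (n:ℝ) + 1) * (((n:ℝ) ^ 4 + (n:ℝ) ^ 2) - ((n:ℝ)) ^ 4) / ((n:ℝ)) ^ 2
      = ((n:ℝ) + 1) ^ 2 := by
    have : ((n:ℝ)) ^ 2 ≠ 0 := by positivity
    field_simp
    ring
  rw [h2, min_self]

lemma gap_bound {m : ℕ} {x : ℝ} (hm : 1 ≤ m) (hmn : m ≤ NB x) :
    ((NB x : ℝ) + 1) ^ 2 ≤ gg x + 3 / (m:ℝ) * (((NB x : ℝ) + 1) ^ 4 - x) := by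
  have hn1 : 1 ≤ NB x := le_trans hm hmn
  have hm1 : (1:ℝ) ≤ (m:ℝ) := by exact_mod_cast hm
  have hn1' : (1:ℝ) ≤ ((NB x : ℝ)) := by exact_mod_cast hn1
  have hxlt : x < ((NB x : ℝ) + 1) ^ 4 := NB_lt x
  have hrem : 0 ≤ 3 / (m:ℝ) * (((NB x : ℝ) + 1) ^ 4 - x) := by
    apply mul_nonneg (by positivity) (by linarith)
  rw [gg, max_sq' hn1]
  rcases le_total (((NB x : ℝ) + 1) ^ 2)
      (((NB x : ℝ)) ^ 2 + (2 * (NB x : ℝ) + 1) * (x - ((NB x : ℝ)) ^ 4) / ((NB x : ℝ)) ^ 2)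
      with h | h
  · rw [min_eq_left h]; linarith
  · rw [min_eq_right h]
    -- expand identity
    have hne : ((NB x : ℝ)) ^ 2 ≠ 0 := by positivity
    have hexp : ((NB x : ℝ) + 1) ^ 2
        = ((NB x : ℝ)) ^ 2 + (2 * (NB x : ℝ) + 1) * (x - ((NB x : ℝ)) ^ 4) / ((NB x : ℝ)) ^ 2
          + (2 * (NB x : ℝ) + 1) * (((NB x : ℝ)) ^ 4 + ((NB x : ℝ)) ^ 2 - x) / ((NB x : ℝ)) ^ 2 := by
      field_simp
      ring
    have hb : (2 * (NB x : ℝ) + 1) * (((NB x : ℝ)) ^ 4 + ((NB x : ℝ)) ^ 2 - x) / ((NB x : ℝ)) ^ 2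
        ≤ 3 / (m:ℝ) * (((NB x : ℝ) + 1) ^ 4 - x) := by
      rcases le_total (((NB x : ℝ)) ^ 4 + ((NB x : ℝ)) ^ 2 - x) 0 with hc | hc
      · refine le_trans (div_nonpos_of_nonpos_of_nonneg (by nlinarith) (by positivity)) hrem
      · rw [mul_comm (2 * (NB x : ℝ) + 1), mul_div_assoc]
        have hco := coeff_le hm hmn
        have hlen : ((NB x : ℝ)) ^ 4 + ((NB x : ℝ)) ^ 2 - x ≤ ((NB x : ℝ) + 1) ^ 4 - x := by
          nlinarith
        calc (((NB x : ℝ)) ^ 4 + ((NB x : ℝ)) ^ 2 - x) * ((2 * (NB x : ℝ) + 1) / ((NB x : ℝ)) ^ 2)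
            ≤ (((NB x : ℝ)) ^ 4 + ((NB x : ℝ)) ^ 2 - x) * (3 / (m:ℝ)) := by gcongr
          _ ≤ (((NB x : ℝ) + 1) ^ 4 - x) * (3 / (m:ℝ)) := by gcongr
          _ = 3 / (m:ℝ) * (((NB x : ℝ) + 1) ^ 4 - x) := by ring
    linarith

lemma sq_le_of_lt_pow4 {m : ℕ} (hm : 1 ≤ m) :
    ∀ p : ℕ, ∀ x : ℝ, ((m:ℝ)) ^ 4 ≤ x → x < ((p:ℝ)) ^ 4 →
      ((p:ℝ)) ^ 2 ≤ gg x + 3 / (m:ℝ) * (((p:ℝ)) ^ 4 - x) := by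
  intro p
  induction p with
  | zero =>
    intro x hx hlt
    have h1 : (1:ℝ) ≤ (m:ℝ) := by exact_mod_cast hm
    have : (1:ℝ) ≤ ((m:ℝ)) ^ 4 := one_le_pow₀ h1
    norm_num at hlt
    linarith
  | succ p ih =>
    intro x hx hlt
    have hm1 : (1:ℝ) ≤ (m:ℝ) := by exact_mod_cast hm
    have hm0 : (0:ℝ) < (m:ℝ) := by linarith
    have hn : m ≤ NB x := NB_ge hx
    have hnp : NB x ≤ p := NB_le (by push_cast at hlt ⊢; exact hlt)
    rcases eq_or_lt_of_le hnp with he | hlt2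
    · have hg := gap_bound hm hn
      rw [he] at hg
      push_cast
      push_cast at hg
      linarith
    · have hc : ((NB x : ℝ)) + 1 ≤ ((p:ℝ)) := by exact_mod_cast hlt2
      have hxp : x < ((p:ℝ)) ^ 4 :=
        lt_of_lt_of_le (NB_lt x)
          (pow_le_pow_left₀ (by positivity) hc 4)
      have h1 := ih x hx hxp
      have hmp : (m:ℝ) ≤ (p:ℝ) := by
        have : m ≤ p := by omega
        exact_mod_cast this
      have h2 : ((p:ℝ) + 1) ^ 2 - ((p:ℝ)) ^ 2 ≤ 3 / (m:ℝ) * (((p:ℝ) + 1) ^ 4 - ((p:ℝ)) ^ 4) := by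
        rw [div_mul_eq_mul_div, le_div_iff₀ hm0]
        nlinarith
      push_cast
      linarith

lemma gg_le_ramp {x : ℝ} (h : 1 ≤ NB x) :
    gg x ≤ ((NB x : ℝ)) ^ 2 + (2 * (NB x : ℝ) + 1) * (x - ((NB x : ℝ)) ^ 4) / ((NB x : ℝ)) ^ 2 := by
  rw [gg, max_sq' h]
  exact min_le_right _ _

lemma gg_slope {m : ℕ} {x y : ℝ} (hm : 1 ≤ m) (hx : ((m:ℝ)) ^ 4 ≤ x) (hxy : x ≤ y) :
    gg y ≤ gg x + 3 / (m:ℝ) * (y - x) := by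
  have hm1 : (1:ℝ) ≤ (m:ℝ) := by exact_mod_cast hm
  have hm0 : (0:ℝ) < (m:ℝ) := by linarith
  have hy : ((m:ℝ)) ^ 4 ≤ y := le_trans hx hxy
  have hnmx : m ≤ NB x := NB_ge hx
  have hnmy : m ≤ NB y := NB_ge hy
  have hny1 : 1 ≤ NB y := le_trans hm hnmy
  rcases eq_or_lt_of_le (NB_mono hxy) with he | hlt
  · -- same block
    have hrem : 0 ≤ 3 / (m:ℝ) * (y - x) := mul_nonneg (by positivity) (by linarith)
    simp only [gg, ← he]
    have hd : (0:ℝ) < max 1 (((NB x : ℝ)) ^ 2) := lt_of_lt_of_le zero_lt_one (le_max_left _ _)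
    have hco : (2 * (NB x : ℝ) + 1) / max 1 (((NB x : ℝ)) ^ 2) ≤ 3 / (m:ℝ) := by
      rw [max_sq' (le_trans hm hnmx)]
      exact coeff_le hm hnmx
    have hBy : ((NB x : ℝ)) ^ 2 + (2 * (NB x : ℝ) + 1) * (y - ((NB x : ℝ)) ^ 4) / max 1 (((NB x : ℝ)) ^ 2)
        ≤ (((NB x : ℝ)) ^ 2 + (2 * (NB x : ℝ) + 1) * (x - ((NB x : ℝ)) ^ 4) / max 1 (((NB x : ℝ)) ^ 2))
          + 3 / (m:ℝ) * (y - x) := by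
      have hxp : (2 * (NB x : ℝ) + 1) * (y - ((NB x : ℝ)) ^ 4) / max 1 (((NB x : ℝ)) ^ 2)
          - (2 * (NB x : ℝ) + 1) * (x - ((NB x : ℝ)) ^ 4) / max 1 (((NB x : ℝ)) ^ 2)
          = (2 * (NB x : ℝ) + 1) / max 1 (((NB x : ℝ)) ^ 2) * (y - x) := by
        field_simp
        ring
      have : (2 * (NB x : ℝ) + 1) / max 1 (((NB x : ℝ)) ^ 2) * (y - x) ≤ 3 / (m:ℝ) * (y - x) :=
        mul_le_mul_of_nonneg_right hco (by linarith)
      linarith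
    rcases le_total (((NB x : ℝ) + 1) ^ 2)
        (((NB x : ℝ)) ^ 2 + (2 * (NB x : ℝ) + 1) * (x - ((NB x : ℝ)) ^ 4) / max 1 (((NB x : ℝ)) ^ 2))
        with h | h
    · rw [min_eq_left h]
      exact le_trans (min_le_left _ _) (by linarith)
    · rw [min_eq_right h]
      exact le_trans (min_le_right _ _) hBy
  · -- different blocks
    have hyp4 : ((NB y : ℝ)) ^ 4 ≤ y := pow4_NB_le hny1
    have hc : ((NB x : ℝ)) + 1 ≤ ((NB y : ℝ)) := by exact_mod_cast hlt
    have hxp : x < ((NB y : ℝ)) ^ 4 :=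
      lt_of_lt_of_le (NB_lt x) (pow_le_pow_left₀ (by positivity) hc 4)
    have h1 : gg y ≤ ((NB y : ℝ)) ^ 2 + 3 / (m:ℝ) * (y - ((NB y : ℝ)) ^ 4) := by
      refine le_trans (gg_le_ramp hny1) ?_
      have hco := coeff_le hm hnmy
      have : (2 * (NB y : ℝ) + 1) * (y - ((NB y : ℝ)) ^ 4) / ((NB y : ℝ)) ^ 2
          ≤ 3 / (m:ℝ) * (y - ((NB y : ℝ)) ^ 4) := by
        rw [mul_comm (2 * (NB y : ℝ) + 1), mul_div_assoc]
        calc (y - ((NB y : ℝ)) ^ 4) * ((2 * (NB y : ℝ) + 1) / ((NB y : ℝ)) ^ 2)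
            ≤ (y - ((NB y : ℝ)) ^ 4) * (3 / (m:ℝ)) := by
              apply mul_le_mul_of_nonneg_left hco (by linarith)
          _ = 3 / (m:ℝ) * (y - ((NB y : ℝ)) ^ 4) := by ring
      linarith
    have h2 := sq_le_of_lt_pow4 hm (NB y) x hx hxp
    linarith

lemma gg_diff_tendsto_aux {c : ℝ} (hc : 0 ≤ c) :
    Tendsto (fun x => gg (x + c) - gg x) atTop (nhds 0) := by
  rw [Metric.tendsto_atTop]
  intro ε hε
  obtain ⟨m, hm⟩ := exists_nat_gt (3 * (c + 1) / ε)
  have hm1 : 1 ≤ m := by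
    by_contra h
    push_neg at h
    interval_cases m
    · simp at hm
      have : 0 < 3 * (c + 1) / ε := by positivity
      linarith
  have hm0 : (0:ℝ) < (m:ℝ) := by
    have : (1:ℝ) ≤ (m:ℝ) := by exact_mod_cast hm1
    linarith
  refine ⟨((m:ℝ)) ^ 4, fun x hx => ?_⟩
  have h1 : gg x ≤ gg (x + c) := gg_mono (by linarith)
  have h2 : gg (x + c) ≤ gg x + 3 / (m:ℝ) * (x + c - x) := gg_slope hm1 hx (by linarith)
  have h3 : 3 / (m:ℝ) * c < ε := by
    rw [div_mul_eq_mul_div, div_lt_iff₀ hm0]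
    rw [div_lt_iff₀ hε] at hm
    nlinarith
  rw [Real.dist_eq, abs_sub_comm, abs_of_nonpos (by linarith)]
  have : x + c - x = c := by ring
  rw [this] at h2
  linarith

lemma gg_diff_tendsto (c : ℝ) :
    Tendsto (fun x => gg (x + c) - gg x) atTop (nhds 0) := by
  rcases le_total 0 c with hc | hc
  · exact gg_diff_tendsto_aux hc
  · have h1 : Tendsto (fun x => gg (x + (-c)) - gg x) atTop (nhds 0) :=
      gg_diff_tendsto_aux (by linarith)
    have h2 : Tendsto (fun x => gg ((x + c) + (-c)) - gg (x + c)) atTop (nhds 0) :=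
      h1.comp (tendsto_atTop_add_const_right atTop c tendsto_id)
    have h3 : Tendsto (fun x => -(gg ((x + c) + (-c)) - gg (x + c))) atTop (nhds 0) := by
      simpa using h2.neg
    refine h3.congr (fun x => ?_)
    have : x + c + -c = x := by ring
    rw [this]
    ring

lemma NB_tendsto : Tendsto NB atTop atTop := by
  rw [tendsto_atTop_atTop]
  intro b
  refine ⟨((b:ℝ)) ^ 4, fun x hx => NB_ge hx⟩

lemma gg_tendsto : Tendsto gg atTop atTop := by
  have h1 : Tendsto (fun x => ((NB x ^ 2 : ℕ) : ℝ)) atTop atTop :=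
    (tendsto_natCast_atTop_atTop (R := ℝ)).comp
      ((tendsto_pow_atTop (by norm_num)).comp NB_tendsto)
  refine tendsto_atTop_mono' atTop ?_ h1
  filter_upwards [eventually_ge_atTop (0:ℝ)] with x hx
  push_cast
  exact gg_ge hx

lemma gg_surj {v : ℝ} (hv : 0 ≤ v) : ∃ x, 0 ≤ x ∧ gg x = v := by
  -- least n with v < (n+1)^2
  set S := {n : ℕ | v < ((n:ℝ) + 1) ^ 2} with hS
  have hne : S.Nonempty := by
    obtain ⟨n, hn⟩ := exists_nat_gt v
    refine ⟨n, lt_of_lt_of_le hn ?_⟩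
    have h0 : (0:ℝ) ≤ (n:ℝ) := Nat.cast_nonneg n
    nlinarith
  set n := sInf S with hn
  have hmem : v < ((n:ℝ) + 1) ^ 2 := Nat.sInf_mem hne
  have hlow : ((n:ℝ)) ^ 2 ≤ v := by
    rcases Nat.eq_zero_or_pos n with h0 | h0
    · simpa [h0] using hv
    · by_contra hcon
      push_neg at hcon
      have : n - 1 ∈ S := by
        have he : ((n - 1 : ℕ) : ℝ) + 1 = (n : ℝ) := by
          have h1 : n - 1 + 1 = n := Nat.succ_pred_eq_of_pos h0
          exact_mod_cast congrArg (Nat.cast (R := ℝ)) h1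
        simp only [hS, Set.mem_setOf_eq, he]
        exact hcon
      have := Nat.sInf_le this
      omega
  rcases Nat.eq_zero_or_pos n with h0 | h0
  · -- v < 1 : use x = v
    have hv1 : v < 1 := by
      rw [h0] at hmem
      norm_num at hmem
      exact hmem
    refine ⟨v, hv, ?_⟩
    have hNB : NB v = 0 := NB_eq (by norm_num [hv]) (by norm_num; linarith)
    have hgv : gg v = min 1 v := by
      rw [gg, hNB]
      norm_num
    rw [hgv, min_eq_right hv1.le]
  · -- n ≥ 1 : use x = n^4 + n^2 * (v - n^2) / (2n+1)
    have h1 : (1:ℝ) ≤ (n:ℝ) := by exact_mod_cast h0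
    set x := ((n:ℝ)) ^ 4 + ((n:ℝ)) ^ 2 * (v - ((n:ℝ)) ^ 2) / (2 * (n:ℝ) + 1) with hx
    have hd0 : (0:ℝ) < 2 * (n:ℝ) + 1 := by linarith
    have hfrac0 : 0 ≤ ((n:ℝ)) ^ 2 * (v - ((n:ℝ)) ^ 2) / (2 * (n:ℝ) + 1) := by
      apply div_nonneg (mul_nonneg (by positivity) (by linarith)) (by linarith)
    have hfrac1 : ((n:ℝ)) ^ 2 * (v - ((n:ℝ)) ^ 2) / (2 * (n:ℝ) + 1) ≤ ((n:ℝ)) ^ 2 := by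
      rw [div_le_iff₀ hd0]
      nlinarith
    have hx1 : ((n:ℝ)) ^ 4 ≤ x := by rw [hx]; linarith
    have hx2 : x < ((n:ℝ) + 1) ^ 4 := by rw [hx]; nlinarith
    have hNB : NB x = n := NB_eq hx1 hx2
    refine ⟨x, by rw [hx]; positivity, ?_⟩
    rw [gg, hNB, max_sq' h0]
    have hxe : x - ((n:ℝ)) ^ 4 = ((n:ℝ)) ^ 2 * (v - ((n:ℝ)) ^ 2) / (2 * (n:ℝ) + 1) := by
      rw [hx]; ring
    rw [hxe]
    have hval : ((n:ℝ)) ^ 2 + (2 * (n:ℝ) + 1) * (((n:ℝ)) ^ 2 * (v - ((n:ℝ)) ^ 2) / (2 * (n:ℝ) + 1)) / ((n:ℝ)) ^ 2 = v := by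
      field_simp
      ring
    rw [hval]
    exact min_eq_right (by linarith)

/-- the weight family -/
noncomputable def W (r t : ℝ) : ℝ := Real.exp (r * gg (Real.log (max t 1))) - 1

lemma logmax_nonneg (t : ℝ) : 0 ≤ Real.log (max t 1) :=
  Real.log_nonneg (le_max_right _ _)

lemma W_nonneg {r : ℝ} (hr : 0 ≤ r) (t : ℝ) : 0 ≤ W r t := by
  have h1 : 0 ≤ r * gg (Real.log (max t 1)) :=
    mul_nonneg hr (gg_nonneg (logmax_nonneg t))
  have := Real.one_le_exp h1
  simp only [W]
  linarith

lemma W_zero {r : ℝ} {t : ℝ} (ht : t ≤ 1) : W r t = 0 := by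
  simp only [W, max_eq_right ht, Real.log_one, gg_zero, mul_zero, Real.exp_zero, sub_self]

lemma W_mono {r : ℝ} (hr : 0 ≤ r) : Monotone (W r) := by
  intro s t hst
  simp only [W]
  have h1 : Real.log (max s 1) ≤ Real.log (max t 1) :=
    Real.log_le_log (by positivity) (max_le_max hst le_rfl)
  have h2 : gg (Real.log (max s 1)) ≤ gg (Real.log (max t 1)) := gg_mono h1
  have h3 : r * gg (Real.log (max s 1)) ≤ r * gg (Real.log (max t 1)) :=
    mul_le_mul_of_nonneg_left h2 hr
  linarith [Real.exp_le_exp.mpr h3]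

lemma W_exp {r x : ℝ} (hx : 0 ≤ x) : W r (Real.exp x) = Real.exp (r * gg x) - 1 := by
  rw [W, max_eq_left (Real.one_le_exp hx), Real.log_exp]

lemma W_surj {r y : ℝ} (hr : 0 < r) (hy : 0 ≤ y) : ∃ t, 1 ≤ t ∧ W r t = y := by
  obtain ⟨x, hx0, hgx⟩ := gg_surj (v := Real.log (y + 1) / r)
    (div_nonneg (Real.log_nonneg (by linarith)) hr.le)
  refine ⟨Real.exp x, Real.one_le_exp hx0, ?_⟩
  rw [W_exp hx0, hgx, mul_div_cancel₀ _ (ne_of_gt hr), Real.exp_log (by linarith)]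
  ring

lemma W_cont {r : ℝ} (hr : 0 < r) : Continuous (W r) := by
  have hmono : Monotone (fun t => W r t + min (t - 1) 0) := by
    apply Monotone.add (W_mono hr.le)
    exact Monotone.min (fun a b hab => by simpa using sub_le_sub_right hab 1) monotone_const
  have hsurj : Function.Surjective (fun t => W r t + min (t - 1) 0) := by
    intro y
    rcases lt_or_ge y 0 with hy | hy
    · refine ⟨y + 1, ?_⟩
      show W r (y + 1) + min (y + 1 - 1) 0 = y
      rw [W_zero (by linarith)]
      simp only [add_sub_cancel_right]
      rw [min_eq_left hy.le]
      ring
    · obtain ⟨t, ht1, hWt⟩ := W_surj hr hy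
      refine ⟨t, ?_⟩
      show W r t + min (t - 1) 0 = y
      rw [hWt, min_eq_right (by linarith)]
      ring
  have hcont : Continuous (fun t => W r t + min (t - 1) 0) :=
    hmono.continuous_of_surjective hsurj
  have : W r = fun t => (W r t + min (t - 1) 0) - min (t - 1) 0 := by
    funext t; ring
  rw [this]
  exact hcont.sub (((continuous_id).sub continuous_const).min continuous_const)

lemma log_max_tendsto : Tendsto (fun t : ℝ => Real.log (max t 1)) atTop atTop := by
  apply Real.tendsto_log_atTop.congr'
  filter_upwards [eventually_ge_atTop (1:ℝ)] with t ht
  rw [max_eq_left ht]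

lemma gg_log_tendsto : Tendsto (fun t : ℝ => gg (Real.log (max t 1))) atTop atTop :=
  gg_tendsto.comp log_max_tendsto

lemma W_tendsto_atTop {r : ℝ} (hr : 1 ≤ r) : Tendsto (W r) atTop atTop := by
  refine tendsto_atTop_mono (fun t => ?_) gg_log_tendsto
  set z := gg (Real.log (max t 1)) with hz
  have hz0 : 0 ≤ z := gg_nonneg (logmax_nonneg t)
  have h1 : z + 1 ≤ r * z + 1 := by nlinarith
  have h2 : r * z + 1 ≤ Real.exp (r * z) := by
    linarith [Real.add_one_le_exp (r * z)]
  simp only [W]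
  linarith

lemma bnd_tendsto : Tendsto (fun n : ℕ => 32 * (((n:ℝ)) ^ 2) ^ 2 * Real.exp (-((n:ℝ)) ^ 2))
    atTop (nhds 0) := by
  have h1 : Tendsto (fun y : ℝ => y ^ 2 * Real.exp (-y)) atTop (nhds 0) :=
    tendsto_pow_mul_exp_neg_atTop_nhds_zero 2
  have h2 : Tendsto (fun n : ℕ => ((n:ℝ)) ^ 2) atTop atTop :=
    (tendsto_pow_atTop (by norm_num : (2:ℕ) ≠ 0)).comp (tendsto_natCast_atTop_atTop (R := ℝ))
  have h3 := h1.comp h2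
  have h4 : Tendsto (fun n : ℕ => (((n:ℝ)) ^ 2) ^ 2 * Real.exp (-((n:ℝ)) ^ 2)) atTop (nhds 0) := h3
  have := h4.const_mul (32:ℝ)
  simpa [mul_assoc] using this

lemma W_log_div {r : ℝ} (hr : 1 ≤ r) :
    Tendsto (fun t => Real.log t / W r t) atTop (nhds 0) := by
  have hB : Tendsto (fun t : ℝ =>
      32 * (((NB (Real.log t) : ℝ)) ^ 2) ^ 2 * Real.exp (-((NB (Real.log t) : ℝ)) ^ 2))
      atTop (nhds 0) := bnd_tendsto.comp (NB_tendsto.comp Real.tendsto_log_atTop)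
  apply squeeze_zero' ?_ ?_ hB
  · filter_upwards [eventually_ge_atTop (Real.exp 1)] with t ht
    have ht1 : (1:ℝ) ≤ t := le_trans (Real.one_le_exp zero_le_one) ht
    have hlog : 1 ≤ Real.log t := by
      rw [← Real.log_exp 1]
      exact Real.log_le_log (Real.exp_pos 1) ht
    have hW : 0 < W r t := by
      have h1 : gg (Real.log (max t 1)) ≥ gg 1 := gg_mono (by rw [max_eq_left ht1]; exact hlog)
      have h2 : 0 ≤ gg (Real.log (max t 1)) := gg_nonneg (logmax_nonneg t)
      have h3 : (1:ℕ) ≤ NB (Real.log (max t 1)) := by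
        apply NB_ge
        rw [max_eq_left ht1]
        norm_num
        exact hlog
      have h4 : (1:ℝ) ≤ gg (Real.log (max t 1)) := by
        have := gg_ge' h3
        have hc : (1:ℝ) ≤ ((NB (Real.log (max t 1)) : ℝ)) ^ 2 := by
          have : (1:ℝ) ≤ ((NB (Real.log (max t 1)) : ℝ)) := by exact_mod_cast h3
          nlinarith
        linarith
      have h5 : (1:ℝ) ≤ r * gg (Real.log (max t 1)) := by nlinarith
      simp only [W]
      have := Real.add_one_le_exp (r * gg (Real.log (max t 1)))
      linarith
    positivity
  · filter_upwards [eventually_ge_atTop (Real.exp ((2:ℝ)^4))] with t ht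
    have hexp0 : (1:ℝ) ≤ Real.exp ((2:ℝ)^4) := Real.one_le_exp (by norm_num)
    have ht1 : (1:ℝ) ≤ t := le_trans hexp0 ht
    have hlog : (2:ℝ)^4 ≤ Real.log t := by
      rw [← Real.log_exp ((2:ℝ)^4)]
      exact Real.log_le_log (Real.exp_pos _) ht
    set x := Real.log t with hxdef
    set n := NB x with hndef
    have hn2 : 2 ≤ n := by
      apply NB_ge
      push_cast
      exact hlog
    have hn1 : 1 ≤ n := by omega
    have hnR : (1:ℝ) ≤ (n:ℝ) := by exact_mod_cast hn1
    have hxpos : 0 ≤ x := by positivity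
    -- x < (n+1)^4 ≤ 16 n^4
    have hx16 : x < 16 * ((n:ℝ)) ^ 4 := by
      have h1 : x < ((n:ℝ) + 1) ^ 4 := NB_lt x
      have h2 : ((n:ℝ) + 1) ^ 4 ≤ (2 * (n:ℝ)) ^ 4 := by
        apply pow_le_pow_left₀ (by linarith) (by linarith)
      nlinarith
    -- W r t ≥ exp (n^2) - 1 ≥ exp(n^2)/2
    have hmax : max t 1 = t := max_eq_left ht1
    have hggx : ((n:ℝ)) ^ 2 ≤ gg x := gg_ge hxpos
    have hrg : ((n:ℝ)) ^ 2 ≤ r * gg x := by nlinarith [gg_nonneg hxpos]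
    have hWlb : Real.exp (((n:ℝ)) ^ 2) / 2 ≤ W r t := by
      simp only [W, hmax, ← hxdef, ← hndef]
      have h1 : Real.exp (((n:ℝ)) ^ 2) ≤ Real.exp (r * gg x) := Real.exp_le_exp.mpr hrg
      have h2 : (2:ℝ) ≤ Real.exp (((n:ℝ)) ^ 2) := by
        have : (1:ℝ) ≤ ((n:ℝ)) ^ 2 := by nlinarith
        have h3 := Real.add_one_le_exp (((n:ℝ)) ^ 2)
        linarith
      linarith
    have hWpos : 0 < W r t := lt_of_lt_of_le (by positivity) hWlb
    rw [div_le_iff₀ hWpos]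
    calc Real.log t = x := rfl
      _ ≤ 16 * ((n:ℝ)) ^ 4 := hx16.le
      _ = 32 * (((n:ℝ)) ^ 2) ^ 2 * Real.exp (-((n:ℝ)) ^ 2) * (Real.exp (((n:ℝ)) ^ 2) / 2) := by
          rw [Real.exp_neg]
          have : Real.exp (((n:ℝ)) ^ 2) ≠ 0 := (Real.exp_pos _).ne'
          field_simp
          ring
      _ ≤ 32 * (((n:ℝ)) ^ 2) ^ 2 * Real.exp (-((n:ℝ)) ^ 2) * W r t := by
          apply mul_le_mul_of_nonneg_left hWlb (by positivity)

lemma W_slow {r : ℝ} (hr : 1 ≤ r) {u : ℝ} (hu : 0 < u) :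
    Tendsto (fun t => W r (u * t) / W r t) atTop (nhds 1) := by
  set c := Real.log u with hc
  have hd : Tendsto (fun t : ℝ => gg (Real.log t + c) - gg (Real.log t)) atTop (nhds 0) :=
    (gg_diff_tendsto c).comp Real.tendsto_log_atTop
  have ha : Tendsto (fun t : ℝ => Real.exp (r * (gg (Real.log t + c) - gg (Real.log t))))
      atTop (nhds 1) := by
    have h1 : Tendsto (fun t : ℝ => r * (gg (Real.log t + c) - gg (Real.log t)))
        atTop (nhds 0) := by simpa using hd.const_mul r
    have h2 := (Real.continuous_exp.tendsto 0).comp h1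
    simpa [Function.comp_def] using h2
  have hE : Tendsto (fun t : ℝ => Real.exp (r * gg (Real.log t))) atTop atTop := by
    apply Real.tendsto_exp_atTop.comp
    have h1 : Tendsto (fun t : ℝ => gg (Real.log t)) atTop atTop :=
      gg_tendsto.comp Real.tendsto_log_atTop
    exact Tendsto.const_mul_atTop (by linarith) h1
  have hinv : Tendsto (fun t : ℝ => (Real.exp (r * gg (Real.log t)) - 1)⁻¹) atTop (nhds 0) := by
    apply tendsto_inv_atTop_zero.comp
    exact tendsto_atTop_add_const_right atTop (-1) hE |>.congr (fun t => by ring)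
  have key : Tendsto (fun t : ℝ =>
      Real.exp (r * (gg (Real.log t + c) - gg (Real.log t)))
      + (Real.exp (r * (gg (Real.log t + c) - gg (Real.log t))) - 1)
        * (Real.exp (r * gg (Real.log t)) - 1)⁻¹) atTop (nhds 1) := by
    have := ha.add (((ha.sub_const 1).mul hinv))
    simpa using this
  apply key.congr'
  have hgE : ∀ᶠ t : ℝ in atTop, (2:ℝ) ≤ gg (Real.log t) :=
    (gg_tendsto.comp Real.tendsto_log_atTop).eventually_ge_atTop 2
  filter_upwards [eventually_ge_atTop (1:ℝ), eventually_ge_atTop (1/u), hgE]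
    with t ht hut hg2
  have htpos : (0:ℝ) < t := by linarith
  have hut1 : (1:ℝ) ≤ u * t := by
    rw [div_le_iff₀ hu] at hut
    nlinarith
  have hmax : max t 1 = t := max_eq_left ht
  have hlogmul : Real.log (u * t) = Real.log t + c := by
    rw [hc, Real.log_mul (ne_of_gt hu) (ne_of_gt htpos)]
    ring
  have hE1 : (2:ℝ) ≤ Real.exp (r * gg (Real.log t)) - 1 := by
    have h1 : (2:ℝ) ≤ r * gg (Real.log t) := by nlinarith
    have := Real.add_one_le_exp (r * gg (Real.log t))
    linarith
  have hEne : Real.exp (r * gg (Real.log t)) - 1 ≠ 0 := by linarith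
  have hWt : W r t = Real.exp (r * gg (Real.log t)) - 1 := by rw [W, hmax]
  have hWut : W r (u * t) = Real.exp (r * (gg (Real.log t + c) - gg (Real.log t)))
      * Real.exp (r * gg (Real.log t)) - 1 := by
    rw [W, max_eq_left hut1, hlogmul, ← Real.exp_add]
    ring_nf
  rw [hWt, hWut]
  field_simp
  ring

lemma W_at_exp_mid {r : ℝ} {n : ℕ} (hn : 1 ≤ n) :
    W r (Real.exp ((n:ℝ) ^ 4 + (n:ℝ) ^ 2)) = Real.exp (r * ((n:ℝ) + 1) ^ 2) - 1 := by
  rw [W_exp (by positivity), gg_mid hn]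

lemma W_at_exp_pow4 (r : ℝ) (n : ℕ) :
    W r (Real.exp ((n:ℝ) ^ 4)) = Real.exp (r * ((n:ℝ)) ^ 2) - 1 := by
  rw [W_exp (by positivity), gg_pow4]

lemma gg_pow4' (n : ℕ) : gg (((n:ℝ) + 1) ^ 4) = ((n:ℝ) + 1) ^ 2 := by
  have h := gg_pow4 (n + 1)
  push_cast at h
  exact h

set_option maxHeartbeats 1600000 in
lemma W_noconv {r : ℝ} (hr1 : 1 ≤ r) (hr2 : r ≤ 2) :
    ¬ ∃ σ : ℝ → ℝ, (∀ t ≥ (0:ℝ), 0 ≤ σ t) ∧ EquivW (W r) σ ∧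
      ConvexOn ℝ Set.univ (fun x : ℝ => σ (Real.exp x)) := by
  rintro ⟨σ, hσ0, ⟨C, hC1, hCb⟩, hconv⟩
  obtain ⟨n0, hn0⟩ := exists_nat_ge (2 * C ^ 2 + 2 * (C ^ 2 + C + 1))
  set n : ℕ := n0 + 1 with hndef
  have hn1 : 1 ≤ n := by omega
  have hnR1 : (1:ℝ) ≤ (n:ℝ) := by exact_mod_cast hn1
  have hnC : 2 * C ^ 2 + 2 * (C ^ 2 + C + 1) ≤ (n:ℝ) := by
    have : ((n0:ℝ)) ≤ (n:ℝ) := by exact_mod_cast Nat.le_succ n0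
    linarith
  obtain ⟨x₁, hx1⟩ : ∃ x : ℝ, x = (n:ℝ) ^ 4 := ⟨_, rfl⟩
  obtain ⟨x₂, hx2⟩ : ∃ x : ℝ, x = (n:ℝ) ^ 4 + (n:ℝ) ^ 2 := ⟨_, rfl⟩
  obtain ⟨x₃, hx3⟩ : ∃ x : ℝ, x = ((n:ℝ) + 1) ^ 4 := ⟨_, rfl⟩
  have hgap : 4 * (n:ℝ) ^ 3 ≤ x₃ - x₁ := by rw [hx3, hx1]; nlinarith
  have hgappos : 0 < x₃ - x₁ := by nlinarith
  obtain ⟨lam, hlam⟩ : ∃ l : ℝ, l = (n:ℝ) ^ 2 / (x₃ - x₁) := ⟨_, rfl⟩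
  have hlam0 : 0 ≤ lam := by rw [hlam]; positivity
  have hlam4n : lam ≤ 1 / (4 * (n:ℝ)) := by
    rw [hlam, div_le_div_iff₀ hgappos (by positivity)]
    nlinarith
  have hlam1 : lam ≤ 1 := le_trans hlam4n (by rw [div_le_one (by positivity)]; nlinarith)
  have hprod : lam * (x₃ - x₁) = (n:ℝ) ^ 2 := by
    rw [hlam]; field_simp
  have hcomb : (1 - lam) * x₁ + lam * x₃ = x₂ := by
    rw [hx2]
    linear_combination hprod + hx1
  obtain ⟨A, hA⟩ : ∃ a : ℝ, a = Real.exp (r * (n:ℝ) ^ 2) := ⟨_, rfl⟩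
  obtain ⟨B, hB⟩ : ∃ b : ℝ, b = Real.exp (r * ((n:ℝ) + 1) ^ 2) := ⟨_, rfl⟩
  have hA1 : 1 ≤ A := by rw [hA]; exact Real.one_le_exp (by positivity)
  have hB1 : 1 ≤ B := by rw [hB]; exact Real.one_le_exp (by positivity)
  -- convexity
  have hcv := hconv.2 (Set.mem_univ x₁) (Set.mem_univ x₃) (by linarith : (0:ℝ) ≤ 1 - lam)
    hlam0 (by ring)
  simp only [smul_eq_mul] at hcv
  rw [hcomb] at hcv
  -- weight values
  have hW1 : W r (Real.exp x₁) = A - 1 := by rw [hx1, hA]; exact W_at_exp_pow4 r n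
  have hW2 : W r (Real.exp x₂) = B - 1 := by rw [hx2, hB]; exact W_at_exp_mid hn1
  have hW3 : W r (Real.exp x₃) = B - 1 := by
    rw [hx3, hB, W_exp (by positivity), gg_pow4' n]
  -- equivalence bounds
  have hb1 := (hCb (Real.exp x₁) (Real.exp_pos _).le).1
  have hb2 := (hCb (Real.exp x₂) (Real.exp_pos _).le).2
  have hb3 := (hCb (Real.exp x₃) (Real.exp_pos _).le).1
  rw [hW1] at hb1
  rw [hW2] at hb2
  rw [hW3] at hb3
  -- chain
  have hC0 : (0:ℝ) < C := by linarith
  have hchain : B - 1 ≤ C * ((1 - lam) * (C * (A - 1) + C) + lam * (C * (B - 1) + C)) + C := by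
    have s1 : C * σ (Real.exp x₂) ≤ C * ((1 - lam) * σ (Real.exp x₁) + lam * σ (Real.exp x₃)) :=
      mul_le_mul_of_nonneg_left hcv hC0.le
    have s2 : (1 - lam) * σ (Real.exp x₁) ≤ (1 - lam) * (C * (A - 1) + C) :=
      mul_le_mul_of_nonneg_left hb1 (by linarith)
    have s3 : lam * σ (Real.exp x₃) ≤ lam * (C * (B - 1) + C) :=
      mul_le_mul_of_nonneg_left hb3 hlam0
    have s4 : C * ((1 - lam) * σ (Real.exp x₁) + lam * σ (Real.exp x₃))
        ≤ C * ((1 - lam) * (C * (A - 1) + C) + lam * (C * (B - 1) + C)) :=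
      mul_le_mul_of_nonneg_left (by linarith) hC0.le
    linarith
  have e1 : C * ((1 - lam) * (C * (A - 1) + C) + lam * (C * (B - 1) + C)) + C
      = C ^ 2 * ((1 - lam) * (A - 1) + lam * (B - 1)) + C ^ 2 + C := by ring
  have s5 : (1 - lam) * (A - 1) ≤ A := by
    nlinarith [mul_le_mul_of_nonneg_left hA1 hlam0]
  have s6 : lam * (B - 1) ≤ lam * B := by nlinarith
  have s8 : C ^ 2 * ((1 - lam) * (A - 1) + lam * (B - 1)) ≤ C ^ 2 * (A + lam * B) :=
    mul_le_mul_of_nonneg_left (by linarith) (by positivity)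
  have e2 : C ^ 2 * (A + lam * B) = C ^ 2 * A + lam * C ^ 2 * B := by ring
  -- estimates
  have hAB : A * (2 * (n:ℝ) + 2) ≤ B := by
    have h1 : B = A * Real.exp (r * (2 * (n:ℝ) + 1)) := by
      rw [hA, hB, ← Real.exp_add]
      congr 1
      ring
    have h2 : 2 * (n:ℝ) + 2 ≤ Real.exp (r * (2 * (n:ℝ) + 1)) := by
      nlinarith [Real.add_one_le_exp (r * (2 * (n:ℝ) + 1))]
    rw [h1]
    exact mul_le_mul_of_nonneg_left h2 (by linarith)
  have hBn : (n:ℝ) + 1 ≤ B := by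
    rw [hB]
    nlinarith [Real.add_one_le_exp (r * ((n:ℝ) + 1) ^ 2), sq_nonneg ((n:ℝ) + 1)]
  have hB0 : (0:ℝ) ≤ B := by linarith
  have hmain : B ≤ C ^ 2 * A + lam * C ^ 2 * B + C ^ 2 + C + 1 := by linarith
  have h1 : C ^ 2 * A ≤ C ^ 2 * B / (2 * (n:ℝ) + 2) := by
    rw [le_div_iff₀ (by linarith)]
    nlinarith [mul_le_mul_of_nonneg_left hAB (sq_nonneg C)]
  have h2 : lam * C ^ 2 * B ≤ C ^ 2 * B / (4 * (n:ℝ)) := by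
    rw [le_div_iff₀ (by positivity)]
    have hcb : (0:ℝ) ≤ C ^ 2 * B := mul_nonneg (sq_nonneg C) hB0
    have := mul_le_mul_of_nonneg_right hlam4n hcb
    calc lam * C ^ 2 * B * (4 * (n:ℝ)) = lam * (C ^ 2 * B) * (4 * (n:ℝ)) := by ring
      _ ≤ 1 / (4 * (n:ℝ)) * (C ^ 2 * B) * (4 * (n:ℝ)) := by
          apply mul_le_mul_of_nonneg_right _ (by positivity)
          exact this
      _ = C ^ 2 * B := by field_simp
  have h3 : C ^ 2 * B / (2 * (n:ℝ) + 2) ≤ C ^ 2 * B / (2 * (n:ℝ)) :=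
    div_le_div_of_nonneg_left (mul_nonneg (sq_nonneg C) hB0) (by positivity) (by linarith)
  have h4 : C ^ 2 * B / (2 * (n:ℝ)) + C ^ 2 * B / (4 * (n:ℝ)) ≤ C ^ 2 * B / (n:ℝ) := by
    rw [div_add_div _ _ (by positivity : (2 * (n:ℝ)) ≠ 0) (by positivity : (4 * (n:ℝ)) ≠ 0)]
    rw [div_le_div_iff₀ (by positivity) (by positivity)]
    nlinarith [mul_nonneg (sq_nonneg C) hB0, sq_nonneg (n:ℝ)]
  have h5 : C ^ 2 * B / (n:ℝ) ≤ B / 2 := by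
    rw [div_le_div_iff₀ (by positivity) (by norm_num)]
    have hn2C : 2 * C ^ 2 ≤ (n:ℝ) := by nlinarith [sq_nonneg C]
    nlinarith [mul_le_mul_of_nonneg_left hn2C hB0]
  have h6 : B / 2 ≤ C ^ 2 + C + 1 := by linarith
  linarith [sq_nonneg C]

lemma EquivW_symm {ω σ : ℝ → ℝ} (h : EquivW ω σ) : EquivW σ ω := by
  obtain ⟨C, hC, hb⟩ := h
  exact ⟨C, hC, fun t ht => ⟨(hb t ht).2, (hb t ht).1⟩⟩

lemma W_nonequiv {r r' : ℝ} (hr : 1 ≤ r) (hrr : r < r') : ¬ EquivW (W r) (W r') := by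
  rintro ⟨C, hC1, hCb⟩
  obtain ⟨n0, hn0⟩ := exists_nat_ge (C / (r' - r))
  set n : ℕ := n0 + 1 with hndef
  have hn1 : 1 ≤ n := by omega
  have hnR : C / (r' - r) ≤ (n:ℝ) := by
    have : ((n0:ℝ)) ≤ (n:ℝ) := by exact_mod_cast Nat.le_succ n0
    linarith
  have hd : 0 < r' - r := by linarith
  set t : ℝ := Real.exp ((n:ℝ) ^ 4 + (n:ℝ) ^ 2) with ht
  have hb := (hCb t (Real.exp_pos _).le).1
  have hWr : W r t = Real.exp (r * ((n:ℝ) + 1) ^ 2) - 1 := W_at_exp_mid hn1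
  have hWr' : W r' t = Real.exp (r' * ((n:ℝ) + 1) ^ 2) - 1 := W_at_exp_mid hn1
  rw [hWr, hWr'] at hb
  -- exp(r'(n+1)^2) ≤ (C+1) exp(r(n+1)^2)
  have h1 : Real.exp (r' * ((n:ℝ) + 1) ^ 2) ≤ (C + 1) * Real.exp (r * ((n:ℝ) + 1) ^ 2) := by
    have he1 : 1 ≤ Real.exp (r * ((n:ℝ) + 1) ^ 2) := Real.one_le_exp (by positivity)
    nlinarith
  have h2 : Real.exp (r' * ((n:ℝ) + 1) ^ 2)
      = Real.exp ((r' - r) * ((n:ℝ) + 1) ^ 2) * Real.exp (r * ((n:ℝ) + 1) ^ 2) := by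
    rw [← Real.exp_add]; ring_nf
  have h3 : Real.exp ((r' - r) * ((n:ℝ) + 1) ^ 2) ≤ C + 1 := by
    have hp := Real.exp_pos (r * ((n:ℝ) + 1) ^ 2)
    rw [h2] at h1
    exact le_of_mul_le_mul_right (by linarith [h1]) hp
  have h4 : C + (r' - r) + 1 ≤ Real.exp ((r' - r) * ((n:ℝ) + 1) ^ 2) := by
    have hC' : C ≤ (r' - r) * (n:ℝ) := by
      rw [div_le_iff₀ hd] at hnR
      linarith
    have hn0' : (0:ℝ) ≤ (n:ℝ) := Nat.cast_nonneg n
    have := Real.add_one_le_exp ((r' - r) * ((n:ℝ) + 1) ^ 2)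
    nlinarith
  linarith

lemma W_pcond {r : ℝ} (hr : 1 ≤ r) (γ : ℝ) : Pcond (W r) γ := by
  refine ⟨2, one_lt_two, 3/2, by norm_num, ?_⟩
  have hu : (0:ℝ) < (2:ℝ) ^ γ := Real.rpow_pos_of_pos two_pos γ
  exact Filter.Tendsto.eventually_le_const (by norm_num) (W_slow hr hu)

lemma gg_two : gg 2 = 4 := by
  have h := gg_mid (n := 1) le_rfl
  norm_num at h
  exact h

lemma W_injOn : Set.InjOn (fun r => W r) (Set.Icc (1:ℝ) 2) := by
  intro r hr r' hr' heq
  have h2 := congrFun heq (Real.exp 2)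
  simp only at h2
  rw [W_exp (by norm_num), W_exp (by norm_num), gg_two] at h2
  have h3 : Real.exp (r * 4) = Real.exp (r' * 4) := by linarith
  have h4 := Real.exp_injective h3
  linarith


/-- there is an uncountable family `Ω` of pairwise
non-equivalent weights `ω : [0,∞) → [0,∞)` which are normalized, continuous,
non-decreasing, tend to `+∞`, satisfy `log t = o(ω(t))`, are slowly varying
(hence have growth index `γ(ω) = +∞`), and such that no function equivalent
to `ω` has a convex composition with `exp`. -/
theorem stmt_19 :
    ∃ Ω : Set (ℝ → ℝ), ¬ Ω.Countable ∧
      (∀ ω ∈ Ω,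
        -- (I)
        ((∀ t, 0 ≤ t → 0 ≤ ω t) ∧ (∀ t, 0 ≤ t → t ≤ 1 → ω t = 0) ∧
          ContinuousOn ω (Set.Ici (0:ℝ)) ∧
          (∀ s t, 0 ≤ s → s ≤ t → ω s ≤ ω t) ∧
          Tendsto ω atTop atTop) ∧
        -- (II) log t = o(ω t)
        Tendsto (fun t => Real.log t / ω t) atTop (nhds 0) ∧
        -- (III) slowly varying, and γ(ω) = +∞
        ((∀ u > (0:ℝ), Tendsto (fun t => ω (u * t) / ω t) atTop (nhds 1)) ∧
          (∀ γ > (0:ℝ), Pcond ω γ)) ∧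
        -- (IV) no equivalent weight with convex φ_σ
        (¬ ∃ σ : ℝ → ℝ, (∀ t ≥ (0:ℝ), 0 ≤ σ t) ∧ EquivW ω σ ∧
          ConvexOn ℝ Set.univ (fun t : ℝ => σ (Real.exp t)))) ∧
      (∀ ω₁ ∈ Ω, ∀ ω₂ ∈ Ω, ω₁ ≠ ω₂ → ¬ EquivW ω₁ ω₂) := by
  refine ⟨(fun r => W r) '' Set.Icc (1:ℝ) 2, ?_, ?_, ?_⟩
  · -- uncountable
    intro hc
    have h1 : (Set.Icc (1:ℝ) 2).Countable :=
      Set.MapsTo.countable_of_injOn (Set.mapsTo_image _ _) W_injOn hc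
    have h2 : Cardinal.mk ↥(Set.Icc (1:ℝ) 2) ≤ Cardinal.aleph0 := by
      have := h1.to_subtype
      exact Cardinal.mk_le_aleph0
    rw [Cardinal.mk_Icc_real (by norm_num : (1:ℝ) < 2)] at h2
    exact absurd h2 (not_le.mpr Cardinal.aleph0_lt_continuum)
  · -- properties
    rintro ω ⟨r, hrIcc, rfl⟩
    obtain ⟨hr1, hr2⟩ := hrIcc
    have hr0 : (0:ℝ) < r := by linarith
    refine ⟨⟨fun t _ => W_nonneg hr0.le t, fun t _ ht1 => W_zero ht1,
      (W_cont hr0).continuousOn, fun s t _ hst => W_mono hr0.le hst,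
      W_tendsto_atTop hr1⟩, W_log_div hr1, ⟨fun u hu => W_slow hr1 hu,
      fun γ _ => W_pcond hr1 γ⟩, W_noconv hr1 hr2⟩
  · -- pairwise non-equivalent
    rintro ω₁ ⟨r₁, h1, rfl⟩ ω₂ ⟨r₂, h2, rfl⟩ hne heq
    simp only at hne heq
    rcases lt_trichotomy r₁ r₂ with h | h | h
    · exact W_nonequiv h1.1 h heq
    · exact hne (by rw [h])
    · exact W_nonequiv h2.1 h (EquivW_symm heq)
end
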